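/- arXiv:1604.08733 — 4 statements merged into one kernel-verified Lean document; each statement's English description precedes it below -/
import Mathlib

section
/- Let D be a strongly connected balanced bipartite digraph of order 2a with a ≥ 5. Suppose that for every dominating pair of vertices {x, y}, either d(x) ≥ 2a − 1 and d(y) ≥ a + 1, or d(y) ≥ 2a − 1 and d(x) ≥ a + 1. Then D is hamiltonian. -/
set_option linter.unusedSectionVars false
set_option maxHeartbeats 1000000


open Finset

variable {V : Type*}

/-- Total degree (out-degree plus in-degree) of `x` in the digraph with arc relation `A`. -/
noncomputable def deg (A : V → V → Prop) (x : V) : ℕ :=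
  Set.ncard {y | A x y} + Set.ncard {y | A y x}

/-- The digraph with arc relation `A` is strongly connected. -/
def StrongConn (A : V → V → Prop) : Prop :=
  ∀ u v : V, Relation.ReflTransGen A u v

/-- `{x, y}` is a dominating pair: distinct vertices with a common out-neighbour. -/
def DomPair (A : V → V → Prop) (x y : V) : Prop :=
  x ≠ y ∧ ∃ z, A x z ∧ A y z

/-- `X, Y` is a bipartition of the digraph `A`: the two parts partition the vertex
set and every arc joins the two parts. -/
def IsBipartition (A : V → V → Prop) (X Y : Set V) : Prop :=
  Disjoint X Y ∧ X ∪ Y = Set.univ ∧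
    ∀ u v, A u v → (u ∈ X ∧ v ∈ Y) ∨ (u ∈ Y ∧ v ∈ X)

/-- The digraph `A` has a hamiltonian (directed) cycle. -/
def Hamiltonian [Fintype V] (A : V → V → Prop) : Prop :=
  ∃ f : ZMod (Fintype.card V) → V, Function.Bijective f ∧ ∀ i, A (f i) (f (i + 1))

section aux
variable [Fintype V] [DecidableEq V] (A : V → V → Prop) [DecidableRel A]

def outs (v : V) : Finset V := Finset.univ.filter (fun w => A v w)
def ins (v : V) : Finset V := Finset.univ.filter (fun w => A w v)

lemma mem_outs {v w : V} : w ∈ outs A v ↔ A v w := by simp [outs]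
lemma mem_ins {v w : V} : w ∈ ins A v ↔ A w v := by simp [ins]

lemma deg_eq (v : V) : deg A v = (outs A v).card + (ins A v).card := by
  rw [deg, Set.ncard_eq_toFinset_card' {y | A v y}, Set.ncard_eq_toFinset_card' {y | A y v}]
  congr 1 <;> congr 1 <;> ext w <;> simp [outs, ins]

end aux

section swaps
open Equiv
variable [Fintype V] [DecidableEq V]

lemma sc_swap (F : Equiv.Perm V) {u u' : V} (h : ¬F.SameCycle u u') :
    (F * Equiv.swap u u').SameCycle u u' := by
  set F' := F * Equiv.swap u u' with hF'
  have hne : u ≠ u' := by rintro rfl; exact h (Equiv.Perm.SameCycle.refl _ _)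
  have hper : Function.IsPeriodicPt ⇑F (orderOf F) u' := by
    show (⇑F)^[orderOf F] u' = u'
    rw [← Equiv.Perm.coe_pow, pow_orderOf_eq_one]; rfl
  have hmem : u' ∈ Function.periodicPts ⇑F := ⟨orderOf F, orderOf_pos F, hper⟩
  set p := Function.minimalPeriod ⇑F u' with hpdef
  have hp : 0 < p := Function.minimalPeriod_pos_of_mem_periodicPts hmem
  have hclaim : ∀ k, 1 ≤ k → k ≤ p → (⇑F')^[k] u = (⇑F)^[k] u' := by
    intro k
    induction k with
    | zero => omega
    | succ k ih =>
      intro _ hkp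
      rcases Nat.eq_zero_or_pos k with rfl | hk
      · simp [hF', Equiv.swap_apply_left]
      have ihk := ih hk (by omega)
      rw [Function.iterate_succ_apply', Function.iterate_succ_apply', ihk]
      set w := (⇑F)^[k] u' with hw
      have hwu' : w ≠ u' := by
        intro hww
        exact Function.not_isPeriodicPt_of_pos_of_lt_minimalPeriod
          (by omega) (by omega) hww
      have hwu : w ≠ u := by
        intro hww
        apply h
        refine Equiv.Perm.SameCycle.symm ⟨(k : ℤ), ?_⟩
        rw [zpow_natCast, ← Equiv.Perm.coe_pow] at *
        simpa [← hw] using hww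
      show F (Equiv.swap u u' w) = F w
      rw [Equiv.swap_apply_of_ne_of_ne hwu hwu']
  refine ⟨(p : ℤ), ?_⟩
  show (F' ^ (p : ℤ)) u = u'
  rw [zpow_natCast]
  show (⇑(F' ^ p)) u = u'
  rw [Equiv.Perm.coe_pow, hclaim p hp le_rfl]
  exact Function.iterate_minimalPeriod

lemma sc_step (F : Equiv.Perm V) {u u' : V} (h : ¬F.SameCycle u u') :
    ∀ v, (F * Equiv.swap u u').SameCycle v (F v) := by
  intro v
  set F' := F * Equiv.swap u u' with hF'
  have hnew : F'.SameCycle u u' := sc_swap F h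
  have happ : ∀ w : V, F'.SameCycle w (F' w) := fun w =>
    (Equiv.Perm.sameCycle_apply_right).mpr (Equiv.Perm.SameCycle.refl _ _)
  rcases eq_or_ne v u with hvu | hvu
  · rw [hvu]
    have h1 : F' u' = F u := by simp [hF', Equiv.swap_apply_right]
    exact hnew.trans (h1 ▸ happ u')
  rcases eq_or_ne v u' with hvu' | hvu'
  · rw [hvu']
    have h1 : F' u = F u' := by simp [hF', Equiv.swap_apply_left]
    exact hnew.symm.trans (h1 ▸ happ u)
  · have h1 : F' v = F v := by simp [hF', Equiv.swap_apply_of_ne_of_ne hvu hvu']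
    exact h1 ▸ happ v

lemma sc_mono (F : Equiv.Perm V) {u u' : V} (h : ¬F.SameCycle u u') :
    ∀ {v w : V}, F.SameCycle v w → (F * Equiv.swap u u').SameCycle v w := by
  intro v w hvw
  obtain ⟨i, _, _, hi⟩ := Equiv.Perm.SameCycle.exists_pow_eq F hvw
  have key : ∀ k : ℕ, (F * Equiv.swap u u').SameCycle v ((F ^ k) v) := by
    intro k
    induction k with
    | zero => simpa using Equiv.Perm.SameCycle.refl _ _
    | succ k ih =>
      have : (F ^ (k+1)) v = F ((F ^ k) v) := by
        rw [pow_succ', Equiv.Perm.mul_apply]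
      rw [this]
      exact ih.trans (sc_step F h ((F ^ k) v))
  exact hi ▸ key i

open scoped Classical in
noncomputable def msr (F : Equiv.Perm V) : ℕ :=
  ∑ v : V, (Finset.univ.filter (fun w => F.SameCycle v w)).card

lemma msr_lt (F : Equiv.Perm V) {u u' : V} (h : ¬F.SameCycle u u') :
    msr F < msr (F * Equiv.swap u u') := by
  classical
  apply Finset.sum_lt_sum
  · intro v _
    apply Finset.card_le_card
    intro w hw
    simp only [Finset.mem_filter, Finset.mem_univ, true_and] at hw ⊢
    exact sc_mono F h hw
  · refine ⟨u, Finset.mem_univ u, ?_⟩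
    apply Finset.card_lt_card
    rw [Finset.ssubset_iff_of_subset]
    · exact ⟨u', by simp [sc_swap F h], by simp [h]⟩
    · intro w hw
      simp only [Finset.mem_filter, Finset.mem_univ, true_and] at hw ⊢
      exact sc_mono F h hw

end swaps

structure Ctx [Fintype V] (A : V → V → Prop) (X Y : Set V) (a : ℕ) (Xf Yf : Finset V) :
    Prop where
  ha : 5 ≤ a
  hdisj : Disjoint X Y
  huniv : X ∪ Y = Set.univ
  hcross : ∀ u v, A u v → (u ∈ X ∧ v ∈ Y) ∨ (u ∈ Y ∧ v ∈ X)
  hstrong : ∀ u v : V, Relation.ReflTransGen A u v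
  hdeg : ∀ x y : V, DomPair A x y →
      (2 * a - 1 ≤ deg A x ∧ a + 1 ≤ deg A y) ∨
      (2 * a - 1 ≤ deg A y ∧ a + 1 ≤ deg A x)
  hXf : ∀ v : V, v ∈ Xf ↔ v ∈ X
  hYf : ∀ v : V, v ∈ Yf ↔ v ∈ Y
  cardX : Xf.card = a
  cardY : Yf.card = a

namespace Ctx

variable [Fintype V] [DecidableEq V] {A : V → V → Prop} {X Y : Set V} {a : ℕ}
  {Xf Yf : Finset V} [DecidableRel A]

lemma symm (C : Ctx A X Y a Xf Yf) : Ctx A Y X a Yf Xf :=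
  ⟨C.ha, C.hdisj.symm, by rw [Set.union_comm]; exact C.huniv,
   fun u v h => (C.hcross u v h).symm, C.hstrong, C.hdeg, C.hYf, C.hXf, C.cardY, C.cardX⟩

lemma mem_part (C : Ctx A X Y a Xf Yf) (v : V) : v ∈ Xf ∨ v ∈ Yf := by
  have := C.huniv
  have hv : v ∈ X ∪ Y := by rw [this]; trivial
  rcases hv with h | h
  · exact Or.inl ((C.hXf v).mpr h)
  · exact Or.inr ((C.hYf v).mpr h)

lemma not_both (C : Ctx A X Y a Xf Yf) {v : V} (h1 : v ∈ Xf) (h2 : v ∈ Yf) : False :=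
  Set.disjoint_left.mp C.hdisj ((C.hXf v).mp h1) ((C.hYf v).mp h2)

lemma arc_out (C : Ctx A X Y a Xf Yf) {u v : V} (h : A u v) (hu : u ∈ Xf) : v ∈ Yf := by
  rcases C.hcross u v h with ⟨h1, h2⟩ | ⟨h1, h2⟩
  · exact (C.hYf v).mpr h2
  · exact absurd ((C.hYf u).mpr h1) (fun hy => C.not_both hu hy)

lemma arc_in (C : Ctx A X Y a Xf Yf) {u v : V} (h : A u v) (hv : v ∈ Yf) : u ∈ Xf := by
  rcases C.hcross u v h with ⟨h1, h2⟩ | ⟨h1, h2⟩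
  · exact (C.hXf u).mpr h1
  · exact absurd ((C.hXf v).mpr h2) (fun hy => C.not_both hy hv)

lemma outs_sub (C : Ctx A X Y a Xf Yf) {u : V} (hu : u ∈ Xf) : outs A u ⊆ Yf := by
  intro w hw; exact C.arc_out ((mem_outs A).mp hw) hu

lemma ins_sub (C : Ctx A X Y a Xf Yf) {u : V} (hu : u ∈ Xf) : ins A u ⊆ Yf := by
  intro w hw
  have h := (mem_ins A).mp hw
  rcases C.hcross w u h with ⟨h1, h2⟩ | ⟨h1, h2⟩
  · exact absurd ((C.hYf u).mpr h2) (fun hy => C.not_both hu hy)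
  · exact (C.hYf w).mpr h1

lemma card_V (C : Ctx A X Y a Xf Yf) : Fintype.card V = 2 * a := by
  have h1 : (Finset.univ : Finset V) = Xf ∪ Yf := by
    ext v
    simp only [Finset.mem_univ, true_iff, Finset.mem_union]
    exact C.mem_part v
  have h2 : Disjoint Xf Yf := by
    rw [Finset.disjoint_left]
    intro v h1 h2; exact C.not_both h1 h2
  rw [← Finset.card_univ, h1, Finset.card_union_of_disjoint h2, C.cardX, C.cardY]
  omega

lemma out_nonempty (C : Ctx A X Y a Xf Yf) (v : V) : (outs A v).Nonempty := by
  have hcard : 1 < Fintype.card V := by have := C.card_V; have := C.ha; omega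
  obtain ⟨w, hw⟩ := Fintype.exists_ne_of_one_lt_card hcard v
  have := C.hstrong v w
  rcases (Relation.ReflTransGen.cases_head this) with h | ⟨c, hc, -⟩
  · exact absurd h.symm hw
  · exact ⟨c, (mem_outs A).mpr hc⟩

lemma in_nonempty (C : Ctx A X Y a Xf Yf) (v : V) : (ins A v).Nonempty := by
  have hcard : 1 < Fintype.card V := by have := C.card_V; have := C.ha; omega
  obtain ⟨w, hw⟩ := Fintype.exists_ne_of_one_lt_card hcard v
  have h := C.hstrong w v
  induction h with
  | refl => exact absurd rfl hw
  | tail hstep harc => exact ⟨_, (mem_ins A).mpr harc⟩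

lemma dom_of_common (C : Ctx A X Y a Xf Yf) {u₁ u₂ z : V} (hne : u₁ ≠ u₂)
    (h1 : A u₁ z) (h2 : A u₂ z) : DomPair A u₁ u₂ := ⟨hne, z, h1, h2⟩

/-- if two distinct vertices have a common out-neighbour, one is heavy and
both have degree ≥ a+1 -/
lemma common_heavy (C : Ctx A X Y a Xf Yf) {u₁ u₂ z : V} (hne : u₁ ≠ u₂)
    (h1 : A u₁ z) (h2 : A u₂ z) :
    (2 * a - 1 ≤ deg A u₁ ∨ 2 * a - 1 ≤ deg A u₂) ∧
      a + 1 ≤ deg A u₁ ∧ a + 1 ≤ deg A u₂ := by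
  have hd := C.hdeg u₁ u₂ ⟨hne, z, h1, h2⟩
  have ha := C.ha
  rcases hd with ⟨hh, hl⟩ | ⟨hh, hl⟩
  · exact ⟨Or.inl hh, by omega, hl⟩
  · exact ⟨Or.inr hh, hl, by omega⟩

lemma heavy_out_card (C : Ctx A X Y a Xf Yf) {u : V} (hu : u ∈ Xf)
    (hh : 2 * a - 1 ≤ deg A u) : a - 1 ≤ (outs A u).card := by
  have h1 : (ins A u).card ≤ a := by
    calc (ins A u).card ≤ Yf.card := Finset.card_le_card (C.ins_sub hu)
    _ = a := C.cardY
  have := deg_eq A u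
  have ha := C.ha
  omega

lemma heavy_missing (C : Ctx A X Y a Xf Yf) {u : V} (hu : u ∈ Xf)
    (hh : 2 * a - 1 ≤ deg A u) :
    (Yf \ outs A u).card + (Yf \ ins A u).card ≤ 1 := by
  have h1 : (Yf \ outs A u).card = a - (outs A u).card := by
    rw [Finset.card_sdiff_of_subset (C.outs_sub hu), C.cardY]
  have h2 : (Yf \ ins A u).card = a - (ins A u).card := by
    rw [Finset.card_sdiff_of_subset (C.ins_sub hu), C.cardY]
  have h3 : (outs A u).card ≤ a := by
    calc (outs A u).card ≤ Yf.card := Finset.card_le_card (C.outs_sub hu)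
    _ = a := C.cardY
  have h4 : (ins A u).card ≤ a := by
    calc (ins A u).card ≤ Yf.card := Finset.card_le_card (C.ins_sub hu)
    _ = a := C.cardY
  have h5 := deg_eq A u
  have ha := C.ha
  omega

lemma hall_part (C : Ctx A X Y a Xf Yf) (s : Finset V) (hs : s ⊆ Xf) :
    s.card ≤ (s.biUnion (outs A)).card := by
  by_cases hh : ∃ v ∈ s, 2 * a - 1 ≤ deg A v
  · obtain ⟨v, hv, hheavy⟩ := hh
    have h1 : outs A v ⊆ s.biUnion (outs A) := Finset.subset_biUnion_of_mem _ hv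
    have h2 : a - 1 ≤ (s.biUnion (outs A)).card :=
      le_trans (C.heavy_out_card (hs hv) hheavy) (Finset.card_le_card h1)
    by_cases hsc : s.card ≤ a - 1
    · omega
    · have hle : s.card ≤ a := by
        have h5 := Finset.card_le_card hs
        rwa [C.cardX] at h5
      have hcard : s.card = a := by omega
      have hseq : s = Xf := Finset.eq_of_subset_of_card_le hs (by rw [C.cardX]; omega)
      have h3 : Yf ⊆ s.biUnion (outs A) := by
        intro y hy
        obtain ⟨x, hx⟩ := C.in_nonempty y
        have harc := (mem_ins A).mp hx
        have hxX : x ∈ Xf := C.arc_in harc hy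
        rw [Finset.mem_biUnion]
        exact ⟨x, hseq ▸ hxX, (mem_outs A).mpr harc⟩
      have h6 := Finset.card_le_card h3
      rw [C.cardY] at h6
      omega
  · push_neg at hh
    have hdisj : ∀ v₁ ∈ s, ∀ v₂ ∈ s, v₁ ≠ v₂ → Disjoint (outs A v₁) (outs A v₂) := by
      intro v₁ h1 v₂ h2 hne
      rw [Finset.disjoint_left]
      intro z hz1 hz2
      have := (C.common_heavy hne ((mem_outs A).mp hz1) ((mem_outs A).mp hz2)).1
      rcases this with h | h
      · exact absurd h (by have := hh v₁ h1; omega)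
      · exact absurd h (by have := hh v₂ h2; omega)
    rw [Finset.card_biUnion hdisj]
    calc s.card = ∑ _v ∈ s, 1 := by simp
    _ ≤ ∑ v ∈ s, (outs A v).card := by
      apply Finset.sum_le_sum
      intro v _
      exact (C.out_nonempty v).card_pos


lemma hall_all (C : Ctx A X Y a Xf Yf) (s : Finset V) :
    s.card ≤ (s.biUnion (outs A)).card := by
  set sX := s.filter (fun v => v ∈ Xf) with hsX
  set sY := s.filter (fun v => v ∉ Xf) with hsY
  have hsplit : s = sX ∪ sY := by
    rw [hsX, hsY, Finset.filter_union_filter_not_eq]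
  have hXsub : sX ⊆ Xf := by intro v hv; exact (Finset.mem_filter.mp hv).2
  have hYsub : sY ⊆ Yf := by
    intro v hv
    have := (Finset.mem_filter.mp hv).2
    rcases C.mem_part v with h | h
    · exact absurd h this
    · exact h
  have hNX : sX.biUnion (outs A) ⊆ Yf := by
    intro w hw
    obtain ⟨v, hv, hw⟩ := Finset.mem_biUnion.mp hw
    exact C.arc_out ((mem_outs A).mp hw) (hXsub hv)
  have hNY : sY.biUnion (outs A) ⊆ Xf := by
    intro w hw
    obtain ⟨v, hv, hw⟩ := Finset.mem_biUnion.mp hw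
    exact C.symm.arc_out ((mem_outs A).mp hw) (hYsub hv)
  have hdisjN : Disjoint (sX.biUnion (outs A)) (sY.biUnion (outs A)) := by
    rw [Finset.disjoint_left]
    intro w h1 h2
    exact C.not_both (hNY h2) (hNX h1)
  have hsub : sX.biUnion (outs A) ∪ sY.biUnion (outs A) ⊆ s.biUnion (outs A) := by
    apply Finset.union_subset <;> apply Finset.biUnion_subset_biUnion_of_subset_left
    · rw [hsplit]; exact Finset.subset_union_left
    · rw [hsplit]; exact Finset.subset_union_right
  have h1 := C.hall_part sX hXsub
  have h2 := C.symm.hall_part sY hYsub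
  have h3 : s.card ≤ sX.card + sY.card := by
    rw [hsplit]; exact Finset.card_union_le _ _
  have h4 := Finset.card_union_of_disjoint hdisjN
  have h5 := Finset.card_le_card hsub
  omega

lemma factor_exists (C : Ctx A X Y a Xf Yf) : ∃ F : Equiv.Perm V, ∀ v, A v (F v) := by
  obtain ⟨f, hinj, hf⟩ :=
    (Finset.all_card_le_biUnion_card_iff_exists_injective (outs A)).mp (C.hall_all)
  refine ⟨Equiv.ofBijective f (Finite.injective_iff_bijective.mp hinj), fun v => ?_⟩
  exact (mem_outs A).mp (hf v)

lemma exists_good_factor (C : Ctx A X Y a Xf Yf)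
    (hme : ∀ F : Equiv.Perm V, (∀ v, A v (F v)) → ∀ u₀ v₀ : V, ¬F.SameCycle u₀ v₀ →
      ∃ u u' : V, ¬F.SameCycle u u' ∧ A u (F u') ∧ A u' (F u)) :
    ∃ F : Equiv.Perm V, (∀ v, A v (F v)) ∧ ∀ u v : V, F.SameCycle u v := by
  classical
  set FS := (Finset.univ : Finset (Equiv.Perm V)).filter (fun F => ∀ v, A v (F v)) with hFS
  obtain ⟨F0, hF0⟩ := C.factor_exists
  have hFSne : FS.Nonempty := ⟨F0, by simp [hFS, hF0]⟩
  obtain ⟨F, hFmem, hmax⟩ := Finset.exists_max_image FS msr hFSne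
  have hFfac : ∀ v, A v (F v) := by
    have := Finset.mem_filter.mp hFmem
    exact this.2
  refine ⟨F, hFfac, ?_⟩
  by_contra hc
  push_neg at hc
  obtain ⟨u₀, v₀, hns⟩ := hc
  obtain ⟨u, u', hnsc, h1, h2⟩ := hme F hFfac u₀ v₀ hns
  set F' := F * Equiv.swap u u' with hF'
  have hfac' : ∀ v, A v (F' v) := by
    intro v
    rcases eq_or_ne v u with hv | hv
    · rw [hv]; show A u (F (Equiv.swap u u' u)); rwa [Equiv.swap_apply_left]
    rcases eq_or_ne v u' with hv' | hv'
    · rw [hv']; show A u' (F (Equiv.swap u u' u')); rwa [Equiv.swap_apply_right]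
    · show A v (F (Equiv.swap u u' v)); rw [Equiv.swap_apply_of_ne_of_ne hv hv']; exact hFfac v
  have hmem' : F' ∈ FS := by simp [hFS, hfac']
  have h8 := hmax F' hmem'
  have h9 := msr_lt F hnsc
  rw [← hF'] at h9
  omega


end Ctx

namespace Ctx
open Equiv
variable [Fintype V] [DecidableEq V] {A : V → V → Prop} {X Y : Set V} {a : ℕ}
  {Xf Yf : Finset V} [DecidableRel A]

lemma ham_of_factor_cycle (C : Ctx A X Y a Xf Yf)
    (F : Equiv.Perm V) (hF : ∀ v, A v (F v)) (hc : ∀ u v : V, F.SameCycle u v) :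
    Hamiltonian A := by
  classical
  have hcard : Fintype.card V = 2 * a := C.card_V
  have haa := C.ha
  set n := Fintype.card V with hn
  have hnpos : 0 < n := by omega
  have hfix : ∀ v : V, F v ≠ v := by
    intro v h
    rcases C.hcross v (F v) (hF v) with ⟨h1, h2⟩ | ⟨h1, h2⟩ <;> rw [h] at * <;>
      exact (Set.disjoint_left.mp C.hdisj ‹v ∈ X› ‹v ∈ Y›)
  have hne : Nonempty V := Fintype.card_pos_iff.mp (by omega)
  obtain ⟨v₀⟩ := hne
  have hcyc : F.IsCycle := ⟨v₀, hfix v₀, fun y _ => hc v₀ y⟩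
  have hsupp : F.support = Finset.univ := by
    apply Finset.eq_univ_iff_forall.mpr
    intro v; exact Equiv.Perm.mem_support.mpr (hfix v)
  have horder : orderOf F = n := by
    rw [hcyc.orderOf, hsupp, Finset.card_univ]
  haveI : NeZero n := ⟨by omega⟩
  set f : ZMod n → V := fun i => (F ^ (i.val)) v₀ with hf
  have hper : ∀ k : ℕ, (F ^ (k % n)) v₀ = (F ^ k) v₀ := by
    intro k
    conv_rhs => rw [← pow_mod_orderOf, horder]
  have hinj : Function.Injective f := by
    intro i j hij
    simp only [hf] at hij
    wlog hle : i.val ≤ j.val generalizing i j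
    · exact (this hij.symm (le_of_not_ge hle)).symm
    set d := j.val - i.val with hd
    have hdi : i.val + d = j.val := by omega
    have h4 : (F ^ d) ((F ^ i.val) v₀) = (F ^ i.val) v₀ := by
      rw [← Equiv.Perm.mul_apply, ← pow_add, Nat.add_comm, hdi, ← hij]
    have hji : d = 0 := by
      by_contra hd0
      have h1 : F ^ d = 1 := (hcyc.pow_eq_one_iff' (hfix ((F ^ i.val) v₀))).mpr h4
      have h2 := orderOf_dvd_of_pow_eq_one h1
      rw [horder] at h2
      have hj := j.val_lt
      have := Nat.le_of_dvd (by omega) h2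
      rw [hn] at *
      omega
    have : i.val = j.val := by omega
    exact ZMod.val_injective n this
  have hbij : Function.Bijective f := by
    rw [Fintype.bijective_iff_injective_and_card]
    exact ⟨hinj, by rw [ZMod.card]⟩
  refine ⟨f, hbij, ?_⟩
  intro i
  have hval : (i + 1).val = (i.val + 1) % n := by
    rw [ZMod.val_add, ZMod.val_one'' (by omega : n ≠ 1)]
  have hstep : f (i + 1) = F (f i) := by
    simp only [hf]
    rw [hval, hper, pow_succ', Equiv.Perm.mul_apply]
  rw [hstep]
  exact hF (f i)



lemma escape (C : Ctx A X Y a Xf Yf) (s : Finset V) (hne : s.Nonempty)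
    (hproper : ∃ v : V, v ∉ s) : ∃ u ∈ s, ∃ w, w ∉ s ∧ A u w := by
  obtain ⟨u, hu⟩ := hne
  obtain ⟨v, hv⟩ := hproper
  have key : ∀ w, Relation.ReflTransGen A u w →
      w ∈ s ∨ ∃ p ∈ s, ∃ q, q ∉ s ∧ A p q := by
    intro w hw
    induction hw with
    | refl => exact Or.inl hu
    | tail hbc harc ih =>
      rename_i b c
      rcases ih with hb | hdone
      · by_cases hc : c ∈ s
        · exact Or.inl hc
        · exact Or.inr ⟨b, hb, c, hc, harc⟩
      · exact Or.inr hdone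
  rcases key v (C.hstrong u v) with h1 | h2
  · exact absurd h1 hv
  · exact h2

lemma escape_into (C : Ctx A X Y a Xf Yf) (s : Finset V) (hne : s.Nonempty)
    (hproper : ∃ v : V, v ∉ s) : ∃ u, u ∉ s ∧ ∃ w ∈ s, A u w := by
  obtain ⟨v, hv⟩ := hproper
  obtain ⟨u, hu⟩ := hne
  obtain ⟨p, hp, q, hq, harc⟩ :=
    C.escape (Finset.univ \ s) ⟨v, by simp [hv]⟩ ⟨u, by simp [hu]⟩
  simp only [Finset.mem_sdiff, Finset.mem_univ, true_and, not_not] at hp hq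
  exact ⟨p, hp, q, hq, harc⟩

lemma heavy_no_two_out (C : Ctx A X Y a Xf Yf) {u y₁ y₂ : V} (hu : u ∈ Xf)
    (hh : 2 * a - 1 ≤ deg A u) (h1 : y₁ ∈ Yf) (h2 : y₂ ∈ Yf)
    (hn1 : ¬A u y₁) (hn2 : ¬A u y₂) : y₁ = y₂ := by
  by_contra hne
  have hsub : {y₁, y₂} ⊆ Yf \ outs A u := by
    intro z hz
    rcases Finset.mem_insert.mp hz with rfl | hz
    · simp only [Finset.mem_sdiff, mem_outs]; exact ⟨h1, hn1⟩
    · rcases Finset.mem_singleton.mp hz with rfl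
      simp only [Finset.mem_sdiff, mem_outs]; exact ⟨h2, hn2⟩
  have h3 : 2 ≤ (Yf \ outs A u).card := by
    have : ({y₁, y₂} : Finset V).card = 2 := by
      rw [Finset.card_insert_of_notMem (by simpa), Finset.card_singleton]
    rw [← this]
    exact Finset.card_le_card hsub
  have := C.heavy_missing hu hh
  omega

lemma heavy_no_two_in (C : Ctx A X Y a Xf Yf) {u y₁ y₂ : V} (hu : u ∈ Xf)
    (hh : 2 * a - 1 ≤ deg A u) (h1 : y₁ ∈ Yf) (h2 : y₂ ∈ Yf)
    (hn1 : ¬A y₁ u) (hn2 : ¬A y₂ u) : y₁ = y₂ := by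
  by_contra hne
  have hsub : {y₁, y₂} ⊆ Yf \ ins A u := by
    intro z hz
    rcases Finset.mem_insert.mp hz with rfl | hz
    · simp only [Finset.mem_sdiff, mem_ins]; exact ⟨h1, hn1⟩
    · rcases Finset.mem_singleton.mp hz with rfl
      simp only [Finset.mem_sdiff, mem_ins]; exact ⟨h2, hn2⟩
  have h3 : 2 ≤ (Yf \ ins A u).card := by
    have : ({y₁, y₂} : Finset V).card = 2 := by
      rw [Finset.card_insert_of_notMem (by simpa), Finset.card_singleton]
    rw [← this]
    exact Finset.card_le_card hsub
  have := C.heavy_missing hu hh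
  omega

lemma heavy_out_in (C : Ctx A X Y a Xf Yf) {u y₁ y₂ : V} (hu : u ∈ Xf)
    (hh : 2 * a - 1 ≤ deg A u) (h1 : y₁ ∈ Yf) (h2 : y₂ ∈ Yf)
    (hn1 : ¬A u y₁) : A y₂ u := by
  by_contra hn2
  have ha : 1 ≤ (Yf \ outs A u).card :=
    Finset.card_pos.mpr ⟨y₁, by simp only [Finset.mem_sdiff, mem_outs]; exact ⟨h1, hn1⟩⟩
  have hb : 1 ≤ (Yf \ ins A u).card :=
    Finset.card_pos.mpr ⟨y₂, by simp only [Finset.mem_sdiff, mem_ins]; exact ⟨h2, hn2⟩⟩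
  have := C.heavy_missing hu hh
  omega

lemma heavy_in_out (C : Ctx A X Y a Xf Yf) {u y₁ y₂ : V} (hu : u ∈ Xf)
    (hh : 2 * a - 1 ≤ deg A u) (h1 : y₁ ∈ Yf) (h2 : y₂ ∈ Yf)
    (hn1 : ¬A y₁ u) : A u y₂ := by
  by_contra hn2
  have ha : 1 ≤ (Yf \ ins A u).card :=
    Finset.card_pos.mpr ⟨y₁, by simp only [Finset.mem_sdiff, mem_ins]; exact ⟨h1, hn1⟩⟩
  have hb : 1 ≤ (Yf \ outs A u).card :=
    Finset.card_pos.mpr ⟨y₂, by simp only [Finset.mem_sdiff, mem_outs]; exact ⟨h2, hn2⟩⟩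
  have := C.heavy_missing hu hh
  omega

lemma lights_no_common (C : Ctx A X Y a Xf Yf) {u₁ u₂ z : V} (hne : u₁ ≠ u₂)
    (h1 : A u₁ z) (h2 : A u₂ z)
    (hl1 : deg A u₁ < 2 * a - 1) (hl2 : deg A u₂ < 2 * a - 1) : False := by
  rcases (C.common_heavy hne h1 h2).1 with h | h <;> omega

lemma light_dom_deg (C : Ctx A X Y a Xf Yf) {u₁ u₂ z : V} (hne : u₁ ≠ u₂)
    (h1 : A u₁ z) (h2 : A u₂ z) : a + 1 ≤ deg A u₁ :=
  (C.common_heavy hne h1 h2).2.1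

lemma heavy_in_card (C : Ctx A X Y a Xf Yf) {u : V} (hu : u ∈ Xf)
    (hh : 2 * a - 1 ≤ deg A u) : a - 1 ≤ (ins A u).card := by
  have h1 : (outs A u).card ≤ a := by
    calc (outs A u).card ≤ Yf.card := Finset.card_le_card (C.outs_sub hu)
    _ = a := C.cardY
  have := deg_eq A u
  have ha := C.ha
  omega

lemma lights_Y_le (C : Ctx A X Y a Xf Yf) {u : V} (hu : u ∈ Xf)
    (hh : 2 * a - 1 ≤ deg A u) :
    (Yf.filter (fun v => deg A v < 2 * a - 1)).card ≤ 2 := by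
  by_contra hcon
  push_neg at hcon
  have h2 : (Yf \ ins A u).card ≤ 1 := by
    have := C.heavy_missing hu hh; omega
  set L := Yf.filter (fun v => deg A v < 2 * a - 1) with hL
  have h3 : L.card ≤ (L \ (Yf \ ins A u)).card + (Yf \ ins A u).card :=
    Finset.card_le_card_sdiff_add_card
  have h4 : 2 ≤ (L \ (Yf \ ins A u)).card := by omega
  obtain ⟨g₁, hg₁, g₂, hg₂, hgne⟩ := Finset.one_lt_card.mp h4
  have hin : ∀ g ∈ L \ (Yf \ ins A u), A g u ∧ deg A g < 2 * a - 1 := by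
    intro g hg
    obtain ⟨hgL, hgns⟩ := Finset.mem_sdiff.mp hg
    obtain ⟨hgY, hgl⟩ := Finset.mem_filter.mp hgL
    refine ⟨?_, hgl⟩
    by_contra hna
    exact hgns (Finset.mem_sdiff.mpr ⟨hgY, fun hmem => hna ((mem_ins A).mp hmem)⟩)
  obtain ⟨ha1, hl1⟩ := hin g₁ hg₁
  obtain ⟨ha2, hl2⟩ := hin g₂ hg₂
  exact C.lights_no_common hgne ha1 ha2 hl1 hl2

lemma heavies_ge_aux (C : Ctx A X Y a Xf Yf) (hex : ∃ u ∈ Xf, 2 * a - 1 ≤ deg A u) :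
    a - 2 ≤ (Yf.filter (fun v => 2 * a - 1 ≤ deg A v)).card := by
  obtain ⟨u, hu, hh⟩ := hex
  have h1 := C.lights_Y_le hu hh
  have h2 : Yf.filter (fun v => 2 * a - 1 ≤ deg A v) =
      Yf \ Yf.filter (fun v => deg A v < 2 * a - 1) := by
    ext v
    simp only [Finset.mem_filter, Finset.mem_sdiff, not_and]
    constructor
    · intro ⟨hv, hd⟩; exact ⟨hv, fun _ => by omega⟩
    · intro ⟨hv, hd⟩; exact ⟨hv, by have := hd hv; omega⟩
  rw [h2, Finset.card_sdiff_of_subset (Finset.filter_subset _ _), C.cardY]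
  omega

lemma heavies_card (C : Ctx A X Y a Xf Yf) (hex : ∃ u : V, 2 * a - 1 ≤ deg A u) :
    a - 2 ≤ (Xf.filter (fun v => 2 * a - 1 ≤ deg A v)).card ∧
      a - 2 ≤ (Yf.filter (fun v => 2 * a - 1 ≤ deg A v)).card := by
  have ha := C.ha
  obtain ⟨u, hh⟩ := hex
  have hpick : ∀ (W : Finset V), a - 2 ≤ (W.filter (fun v => 2 * a - 1 ≤ deg A v)).card →
      ∃ g ∈ W, 2 * a - 1 ≤ deg A g := by
    intro W hW
    have h5 : (W.filter (fun v => 2 * a - 1 ≤ deg A v)).Nonempty := by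
      rw [← Finset.card_pos]; omega
    obtain ⟨g, hg⟩ := h5
    obtain ⟨hg1, hg2⟩ := Finset.mem_filter.mp hg
    exact ⟨g, hg1, hg2⟩
  rcases C.mem_part u with hu | hu
  · have hY := C.heavies_ge_aux ⟨u, hu, hh⟩
    obtain ⟨g, hg, hgh⟩ := hpick Yf hY
    exact ⟨C.symm.heavies_ge_aux ⟨g, hg, hgh⟩, hY⟩
  · have hX := C.symm.heavies_ge_aux ⟨u, hu, hh⟩
    obtain ⟨g, hg, hgh⟩ := hpick Xf hX
    exact ⟨hX, C.heavies_ge_aux ⟨g, hg, hgh⟩⟩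

lemma lights_X_card (C : Ctx A X Y a Xf Yf) (hex : ∃ u : V, 2 * a - 1 ≤ deg A u) :
    (Xf.filter (fun v => deg A v < 2 * a - 1)).card ≤ 2 := by
  have h1 := (C.heavies_card hex).1
  have h2 : Xf.filter (fun v => deg A v < 2 * a - 1) =
      Xf \ Xf.filter (fun v => 2 * a - 1 ≤ deg A v) := by
    ext v
    simp only [Finset.mem_filter, Finset.mem_sdiff, not_and]
    constructor
    · intro ⟨hv, hd⟩; exact ⟨hv, fun _ => by omega⟩
    · intro ⟨hv, hd⟩; exact ⟨hv, by have := hd hv; omega⟩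
  rw [h2, Finset.card_sdiff_of_subset (Finset.filter_subset _ _), C.cardX]
  have h3 : (Xf.filter (fun v => 2 * a - 1 ≤ deg A v)).card ≤ a := by
    calc _ ≤ Xf.card := Finset.card_le_card (Finset.filter_subset _ _)
    _ = a := C.cardX
  have ha := C.ha
  omega

lemma no_heavy_case (C : Ctx A X Y a Xf Yf) (F : Equiv.Perm V)
    (hF : ∀ v, A v (F v)) (u₀ v₀ : V) (hns : ¬F.SameCycle u₀ v₀)
    (hnoheavy : ∀ v : V, deg A v < 2 * a - 1) : False := by
  have hin1 : ∀ z : V, (ins A z).card ≤ 1 := by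
    intro z
    by_contra h
    push_neg at h
    obtain ⟨g₁, hg₁, g₂, hg₂, hne⟩ := Finset.one_lt_card.mp h
    exact C.lights_no_common hne ((mem_ins A).mp hg₁) ((mem_ins A).mp hg₂)
      (hnoheavy _) (hnoheavy _)
  have hsum : ∑ v : V, (outs A v).card = ∑ v : V, (ins A v).card := by
    simp only [outs, ins, Finset.card_filter]
    rw [Finset.sum_comm]
  have hout1 : ∀ v : V, (outs A v).card = 1 := by
    by_contra h
    push_neg at h
    obtain ⟨v, hv⟩ := h
    have h2 : 2 ≤ (outs A v).card := by
      have := (C.out_nonempty v).card_pos; omega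
    have hle : ∑ z : V, (ins A z).card ≤ Fintype.card V := by
      calc ∑ z : V, (ins A z).card ≤ ∑ _z : V, 1 := Finset.sum_le_sum (fun z _ => hin1 z)
      _ = Fintype.card V := by simp
    have hge : Fintype.card V + 1 ≤ ∑ z : V, (outs A z).card := by
      rw [← Finset.add_sum_erase Finset.univ _ (Finset.mem_univ v)]
      have h4 : (Finset.univ.erase v).card ≤ ∑ z ∈ Finset.univ.erase v, (outs A z).card := by
        calc (Finset.univ.erase v).card = ∑ _z ∈ Finset.univ.erase v, 1 := by simp
        _ ≤ _ := Finset.sum_le_sum (fun z _ => (C.out_nonempty z).card_pos)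
      have h5 : (Finset.univ.erase v).card = Fintype.card V - 1 := by
        rw [Finset.card_erase_of_mem (Finset.mem_univ v), Finset.card_univ]
      have h6 : 1 ≤ Fintype.card V := Fintype.card_pos_iff.mpr ⟨v⟩
      omega
    omega
  have houts : ∀ v w : V, A v w → w = F v := by
    intro v w hw
    have h1 : w ∈ outs A v := (mem_outs A).mpr hw
    have h2 : F v ∈ outs A v := (mem_outs A).mpr (hF v)
    exact Finset.card_le_one.mp (le_of_eq (hout1 v)) w h1 (F v) h2
  have hreach : ∀ u v : V, Relation.ReflTransGen A u v → F.SameCycle u v := by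
    intro u v h
    induction h with
    | refl => exact Equiv.Perm.SameCycle.refl _ _
    | tail hbc harc ih =>
      rename_i b c
      have hc : c = F b := houts b c harc
      rw [hc]
      exact ih.trans ((Equiv.Perm.sameCycle_apply_right).mpr (Equiv.Perm.SameCycle.refl _ _))
  exact hns (hreach u₀ v₀ (C.hstrong u₀ v₀))


lemma sc_next (F : Equiv.Perm V) {v w : V} (h : F.SameCycle v w) : F.SameCycle v (F w) :=
  h.trans ⟨(1 : ℤ), by simp⟩

lemma sc_prev (F : Equiv.Perm V) {v w : V} (h : F.SameCycle v w) : F.SameCycle v (F.symm w) :=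
  h.trans ⟨(-1 : ℤ), by simp [Equiv.Perm.inv_def]⟩

lemma sc_closed (F : Equiv.Perm V) (s : Finset V) (hclosed : ∀ w ∈ s, F w ∈ s)
    {v w : V} (hv : v ∈ s) (hsc : F.SameCycle v w) : w ∈ s := by
  obtain ⟨i, -, -, hi⟩ := Equiv.Perm.SameCycle.exists_pow_eq F hsc
  rw [← hi]
  clear hi
  induction i with
  | zero => simpa using hv
  | succ k ih =>
    have : (F ^ (k + 1)) v = F ((F ^ k) v) := by rw [pow_succ', Equiv.Perm.mul_apply]
    rw [this]
    exact hclosed _ ih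

def cyc [Fintype V] [DecidableEq V] (F : Equiv.Perm V) (v : V) : Finset V :=
  open scoped Classical in Finset.univ.filter (fun w => F.SameCycle v w)

lemma mem_cyc [Fintype V] [DecidableEq V] {F : Equiv.Perm V} {v w : V} :
    w ∈ cyc F v ↔ F.SameCycle v w := by
  classical
  simp [cyc]

lemma F_part (C : Ctx A X Y a Xf Yf) {F : Equiv.Perm V} (hF : ∀ v, A v (F v)) {v : V} :
    (v ∈ Xf → F v ∈ Yf) ∧ (v ∈ Yf → F v ∈ Xf) :=
  ⟨fun hv => C.arc_out (hF v) hv, fun hv => C.symm.arc_out (hF v) hv⟩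

lemma Fsymm_part (C : Ctx A X Y a Xf Yf) {F : Equiv.Perm V} (hF : ∀ v, A v (F v)) {v : V} :
    (v ∈ Xf → F.symm v ∈ Yf) ∧ (v ∈ Yf → F.symm v ∈ Xf) := by
  have harc : A (F.symm v) v := by
    have := hF (F.symm v)
    rwa [Equiv.apply_symm_apply] at this
  exact ⟨fun hv => C.symm.arc_in harc hv, fun hv => C.arc_in harc hv⟩

lemma cycle_balance (C : Ctx A X Y a Xf Yf) {F : Equiv.Perm V} (hF : ∀ v, A v (F v))
    (v : V) :
    ((cyc F v).filter (· ∈ Xf)).card = ((cyc F v).filter (· ∈ Yf)).card := by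
  apply Finset.card_bij' (i := fun w _ => F w) (j := fun w _ => F.symm w)
  · intro w hw
    obtain ⟨hw1, hw2⟩ := Finset.mem_filter.mp hw
    exact Finset.mem_filter.mpr ⟨mem_cyc.mpr (sc_next F (mem_cyc.mp hw1)),
      (C.F_part hF).1 hw2⟩
  · intro w hw
    obtain ⟨hw1, hw2⟩ := Finset.mem_filter.mp hw
    exact Finset.mem_filter.mpr ⟨mem_cyc.mpr (sc_prev F (mem_cyc.mp hw1)),
      (C.Fsymm_part hF).2 hw2⟩
  · intro w _; exact Equiv.symm_apply_apply _ _
  · intro w _; exact Equiv.apply_symm_apply _ _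


variable {F : Equiv.Perm V}

lemma twocycle_heavy (C : Ctx A X Y a Xf Yf) (hF : ∀ v, A v (F v))
    (hNS : ∀ u u' : V, A u (F u') → A u' (F u) → F.SameCycle u u')
    {x' y' : V} (hx : x' ∈ Xf) (hxy : F x' = y') (hyx : F y' = x')
    (hh : 2 * a - 1 ≤ deg A x') : False := by
  classical
  have ha := C.ha
  have hyY : y' ∈ Yf := hxy ▸ (C.F_part hF).1 hx
  have hD : ∀ w : V, F.SameCycle x' w → w = x' ∨ w = y' := by
    intro w hw
    have hclosed : ∀ z ∈ ({x', y'} : Finset V), F z ∈ ({x', y'} : Finset V) := by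
      intro z hz
      rcases Finset.mem_insert.mp hz with rfl | hz
      · simp [hxy]
      · rw [Finset.mem_singleton.mp hz]; simp [hyx]
    have := sc_closed F {x', y'} hclosed (by simp) hw
    rcases Finset.mem_insert.mp this with h | h
    · exact Or.inl h
    · exact Or.inr (Finset.mem_singleton.mp h)
  have hin : a - 1 ≤ (ins A x').card := C.heavy_in_card hx hh
  have hinsubY : ins A x' ⊆ Yf := C.ins_sub hx
  have hAy'x' : A y' x' := hyx ▸ hF y'
  have hdy : a + 1 ≤ deg A y' := by
    obtain ⟨g, hg, hgne⟩ := Finset.exists_mem_ne (s := ins A x') (by omega) y'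
    exact C.light_dom_deg (fun hc => hgne (hc.symm)) hAy'x' ((mem_ins A).mp hg)
  have hkey : ∀ h ∈ ins A y', h ≠ x' → ¬A x' (F h) := by
    intro h hmem hne hA
    have hAh : A h y' := (mem_ins A).mp hmem
    have hhX : h ∈ Xf := C.symm.ins_sub hyY hmem
    have hsc := hNS x' h hA (hxy ▸ hAh)
    rcases hD h hsc with hc | hc
    · exact hne hc
    · exact C.not_both hhX (hc ▸ hyY)
  have hiny : (ins A y').card ≤ 2 := by
    have h1 : ((ins A y') \ {x'}).card ≤ 1 := by
      apply Finset.card_le_one.mpr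
      intro h₁ hm₁ h₂ hm₂
      obtain ⟨hm₁', hne₁⟩ := Finset.mem_sdiff.mp hm₁
      obtain ⟨hm₂', hne₂⟩ := Finset.mem_sdiff.mp hm₂
      rw [Finset.mem_singleton] at hne₁ hne₂
      have k₁ := hkey h₁ hm₁' hne₁
      have k₂ := hkey h₂ hm₂' hne₂
      have hX₁ : h₁ ∈ Xf := C.symm.ins_sub hyY hm₁'
      have hX₂ : h₂ ∈ Xf := C.symm.ins_sub hyY hm₂'
      exact F.injective (C.heavy_no_two_out hx hh ((C.F_part hF).1 hX₁)
        ((C.F_part hF).1 hX₂) k₁ k₂)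
    have h2 : (ins A y').card ≤ ((ins A y') ∩ {x'}).card + ((ins A y') \ {x'}).card :=
      le_of_eq (Finset.card_inter_add_card_sdiff _ _).symm
    have h3 : ((ins A y') ∩ {x'}).card ≤ 1 := by
      calc _ ≤ ({x'} : Finset V).card := Finset.card_le_card Finset.inter_subset_right
      _ = 1 := Finset.card_singleton _
    omega
  have houty : a - 1 ≤ (outs A y').card := by
    have := deg_eq A y'
    omega
  have hscxy : F.SameCycle x' y' := ⟨1, by simp [hxy]⟩
  have hkey2 : ∀ x ∈ outs A y', x ≠ x' → ¬A (F.symm x) x' := by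
    intro x hmem hne hA
    have hxX : x ∈ Xf := C.symm.outs_sub hyY hmem
    have h1 : A y' (F (F.symm x)) := by
      rw [Equiv.apply_symm_apply]; exact (mem_outs A).mp hmem
    have h2 : A (F.symm x) (F y') := by rw [hyx]; exact hA
    have hsc := hNS y' (F.symm x) h1 h2
    rcases hD (F.symm x) (hscxy.trans hsc) with hc | hc
    · have hxy' : x = y' := by
        have := congrArg F hc
        rwa [Equiv.apply_symm_apply, hxy] at this
      exact C.not_both hxX (hxy' ▸ hyY)
    · have : x = x' := by
        have := congrArg F hc
        rwa [Equiv.apply_symm_apply, hyx] at this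
      exact hne this
  set G := (outs A y').erase x' with hG
  set T := G.image (fun x => F.symm x) with hT
  have hGcard : a - 2 ≤ G.card := by
    by_cases hmem : x' ∈ outs A y'
    · rw [hG, Finset.card_erase_of_mem hmem]; omega
    · rw [hG, Finset.erase_eq_of_notMem hmem]; omega
  have hTcard : T.card = G.card := Finset.card_image_of_injective _ F.symm.injective
  have hTsub : T ⊆ Yf.erase y' := by
    intro w hw
    obtain ⟨x, hxm, rfl⟩ := Finset.mem_image.mp hw
    obtain ⟨hxne, hxout⟩ := Finset.mem_erase.mp hxm
    have hxX : x ∈ Xf := C.symm.outs_sub hyY hxout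
    refine Finset.mem_erase.mpr ⟨?_, (C.Fsymm_part hF).1 hxX⟩
    intro hc
    apply hxne
    have := congrArg F hc
    rwa [Equiv.apply_symm_apply, hyx] at this
  have hIsub : (ins A x').erase y' ⊆ Yf.erase y' := by
    intro w hw
    obtain ⟨h1, h2⟩ := Finset.mem_erase.mp hw
    exact Finset.mem_erase.mpr ⟨h1, hinsubY h2⟩
  have hdisj : Disjoint T ((ins A x').erase y') := by
    rw [Finset.disjoint_left]
    intro w hwT hwI
    obtain ⟨x, hxm, rfl⟩ := Finset.mem_image.mp hwT
    obtain ⟨hxne, hxout⟩ := Finset.mem_erase.mp hxm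
    exact hkey2 x hxout hxne ((mem_ins A).mp (Finset.mem_erase.mp hwI).2)
  have hunion : (T ∪ (ins A x').erase y').card ≤ (Yf.erase y').card :=
    Finset.card_le_card (Finset.union_subset hTsub hIsub)
  rw [Finset.card_union_of_disjoint hdisj] at hunion
  have h8 : (Yf.erase y').card = a - 1 := by
    rw [Finset.card_erase_of_mem hyY, C.cardY]
  have h9 : a - 2 ≤ ((ins A x').erase y').card := by
    by_cases hmem : y' ∈ ins A x'
    · rw [Finset.card_erase_of_mem hmem]; omega
    · rw [Finset.erase_eq_of_notMem hmem]; omega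
  omega

lemma twocycle_light (C : Ctx A X Y a Xf Yf) (hF : ∀ v, A v (F v))
    (hNS : ∀ u u' : V, A u (F u') → A u' (F u) → F.SameCycle u u')
    {x' y' : V} (hx : x' ∈ Xf) (hxy : F x' = y') (hyx : F y' = x')
    (hlx : deg A x' < 2 * a - 1) (hly : deg A y' < 2 * a - 1)
    (hex : ∃ u : V, 2 * a - 1 ≤ deg A u)
    (hrest : ∀ w z : V, w ≠ x' → w ≠ y' → z ≠ x' → z ≠ y' → F.SameCycle w z) : False := by
  classical
  have ha := C.ha
  have hyY : y' ∈ Yf := hxy ▸ (C.F_part hF).1 hx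
  have hxyne : x' ≠ y' := fun hc => C.not_both hx (hc ▸ hyY)
  have hAxy : A x' y' := hxy ▸ hF x'
  have hAyx : A y' x' := hyx ▸ hF y'
  have hD : ∀ w : V, F.SameCycle x' w → w = x' ∨ w = y' := by
    intro w hw
    have hclosed : ∀ z ∈ ({x', y'} : Finset V), F z ∈ ({x', y'} : Finset V) := by
      intro z hz
      rcases Finset.mem_insert.mp hz with rfl | hz
      · simp [hxy]
      · rw [Finset.mem_singleton.mp hz]; simp [hyx]
    have := sc_closed F {x', y'} hclosed (by simp) hw
    rcases Finset.mem_insert.mp this with h | h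
    · exact Or.inl h
    · exact Or.inr (Finset.mem_singleton.mp h)
  have hD' : ∀ w : V, F.SameCycle y' w → w = x' ∨ w = y' := by
    intro w hw
    exact hD w (Equiv.Perm.SameCycle.trans (⟨1, by simp [hxy]⟩ : F.SameCycle x' y') hw)
  set X₀ := Xf.erase x' with hX₀
  set Y₀ := Yf.erase y' with hY₀
  have hX₀mem : ∀ {h : V}, h ∈ X₀ ↔ h ∈ Xf ∧ h ≠ x' := by
    intro h
    simp only [hX₀, Finset.mem_erase]
    tauto
  have hY₀mem : ∀ {g : V}, g ∈ Y₀ ↔ g ∈ Yf ∧ g ≠ y' := by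
    intro g
    simp only [hY₀, Finset.mem_erase]
    tauto
  have hX₀card : X₀.card = a - 1 := by
    rw [hX₀, Finset.card_erase_of_mem hx, C.cardX]
  have hY₀card : Y₀.card = a - 1 := by
    rw [hY₀, Finset.card_erase_of_mem hyY, C.cardY]
  set B := X₀.filter (fun h => 2 * a - 1 ≤ deg A h ∧ ¬A h y') with hB
  set HnB := X₀.filter (fun h => 2 * a - 1 ≤ deg A h ∧ A h y') with hHnB
  set Lx := X₀.filter (fun v => deg A v < 2 * a - 1) with hLx
  set B' := Y₀.filter (fun g => 2 * a - 1 ≤ deg A g ∧ ¬A g x') with hB'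
  set H'nB' := Y₀.filter (fun g => 2 * a - 1 ≤ deg A g ∧ A g x') with hH'nB'
  set Ly := Y₀.filter (fun v => deg A v < 2 * a - 1) with hLy
  have hpartX : X₀.card = B.card + HnB.card + Lx.card := by
    have h1 := Finset.card_filter_add_card_filter_not
      (s := X₀) (p := fun v => 2 * a - 1 ≤ deg A v)
    have h2 : X₀.filter (fun v => ¬(2 * a - 1 ≤ deg A v)) = Lx := by
      apply Finset.filter_congr
      intro z _
      simp only [not_le, iff_self]
    have h3 : X₀.filter (fun v => 2 * a - 1 ≤ deg A v) = B ∪ HnB := by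
      ext z
      simp only [hB, hHnB, Finset.mem_union, Finset.mem_filter]
      tauto
    have h4 : Disjoint B HnB := by
      rw [Finset.disjoint_left]
      intro z h1' h2'
      exact (Finset.mem_filter.mp h1').2.2 (Finset.mem_filter.mp h2').2.2
    rw [h2, h3, Finset.card_union_of_disjoint h4] at h1
    omega
  have hpartY : Y₀.card = B'.card + H'nB'.card + Ly.card := by
    have h1 := Finset.card_filter_add_card_filter_not
      (s := Y₀) (p := fun v => 2 * a - 1 ≤ deg A v)
    have h2 : Y₀.filter (fun v => ¬(2 * a - 1 ≤ deg A v)) = Ly := by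
      apply Finset.filter_congr
      intro z _
      simp only [not_le, iff_self]
    have h3 : Y₀.filter (fun v => 2 * a - 1 ≤ deg A v) = B' ∪ H'nB' := by
      ext z
      simp only [hB', hH'nB', Finset.mem_union, Finset.mem_filter]
      tauto
    have h4 : Disjoint B' H'nB' := by
      rw [Finset.disjoint_left]
      intro z h1' h2'
      exact (Finset.mem_filter.mp h1').2.2 (Finset.mem_filter.mp h2').2.2
    rw [h2, h3, Finset.card_union_of_disjoint h4] at h1
    omega
  have hLxcard : Lx.card ≤ 1 := by
    have hsub : insert x' Lx ⊆ Xf.filter (fun v => deg A v < 2 * a - 1) := by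
      intro z hz
      rcases Finset.mem_insert.mp hz with rfl | hz
      · exact Finset.mem_filter.mpr ⟨hx, hlx⟩
      · obtain ⟨hz1, hz2⟩ := Finset.mem_filter.mp hz
        exact Finset.mem_filter.mpr ⟨(hX₀mem.mp hz1).1, hz2⟩
    have hnm : x' ∉ Lx := fun hc => (hX₀mem.mp (Finset.mem_filter.mp hc).1).2 rfl
    have h1 := Finset.card_le_card hsub
    rw [Finset.card_insert_of_notMem hnm] at h1
    have := C.lights_X_card hex
    omega
  have hLycard : Ly.card ≤ 1 := by
    have hsub : insert y' Ly ⊆ Yf.filter (fun v => deg A v < 2 * a - 1) := by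
      intro z hz
      rcases Finset.mem_insert.mp hz with rfl | hz
      · exact Finset.mem_filter.mpr ⟨hyY, hly⟩
      · obtain ⟨hz1, hz2⟩ := Finset.mem_filter.mp hz
        exact Finset.mem_filter.mpr ⟨(hY₀mem.mp hz1).1, hz2⟩
    have hnm : y' ∉ Ly := fun hc => (hY₀mem.mp (Finset.mem_filter.mp hc).1).2 rfl
    have h1 := Finset.card_le_card hsub
    rw [Finset.card_insert_of_notMem hnm] at h1
    have := C.symm.lights_X_card hex
    omega
  -- lights of X₀ do not point at y', lights of Y₀ do not point at x'
  have hLxny : ∀ ℓ ∈ Lx, ¬A ℓ y' := by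
    intro ℓ hℓ hc
    obtain ⟨hℓ1, hℓ2⟩ := Finset.mem_filter.mp hℓ
    exact C.lights_no_common (fun h => (hX₀mem.mp hℓ1).2 h.symm) hAxy hc hlx hℓ2
  have hLynx : ∀ ℓ ∈ Ly, ¬A ℓ x' := by
    intro ℓ hℓ hc
    obtain ⟨hℓ1, hℓ2⟩ := Finset.mem_filter.mp hℓ
    exact C.lights_no_common (fun h => (hY₀mem.mp hℓ1).2 h.symm) hAyx hc hly hℓ2
  -- out/in bounds for x' and y'
  have houtsubx : outs A x' ⊆ insert y' ((B ∪ Lx).image F) := by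
    intro z hz
    have hzY : z ∈ Yf := C.outs_sub hx hz
    have hAz : A x' z := (mem_outs A).mp hz
    by_cases hz1 : z = y'
    · rw [hz1]; exact Finset.mem_insert_self _ _
    have hwX : F.symm z ∈ X₀ := by
      refine hX₀mem.mpr ⟨(C.Fsymm_part hF).2 hzY, fun hc => ?_⟩
      have := congrArg F hc
      rw [Equiv.apply_symm_apply, hxy] at this
      exact hz1 this
    have hnsc : ¬F.SameCycle x' (F.symm z) := by
      intro hsc
      rcases hD _ hsc with hc | hc
      · exact (hX₀mem.mp hwX).2 hc
      · exact C.not_both (hX₀mem.mp hwX).1 (hc ▸ hyY)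
    have hArc : A x' (F (F.symm z)) := by rw [Equiv.apply_symm_apply]; exact hAz
    have hnw : ¬A (F.symm z) y' := fun hc => hnsc (hNS x' (F.symm z) hArc (hxy ▸ hc))
    have hmem : F.symm z ∈ B ∪ Lx := by
      by_cases hw : 2 * a - 1 ≤ deg A (F.symm z)
      · exact Finset.mem_union_left _ (Finset.mem_filter.mpr ⟨hwX, hw, hnw⟩)
      · exact Finset.mem_union_right _ (Finset.mem_filter.mpr ⟨hwX, by omega⟩)
    exact Finset.mem_insert_of_mem (Finset.mem_image.mpr ⟨_, hmem, Equiv.apply_symm_apply _ _⟩)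
  have houtsuby : outs A y' ⊆ insert x' ((B' ∪ Ly).image F) := by
    intro z hz
    have hzX : z ∈ Xf := C.symm.outs_sub hyY hz
    have hAz : A y' z := (mem_outs A).mp hz
    by_cases hz1 : z = x'
    · rw [hz1]; exact Finset.mem_insert_self _ _
    have hwY : F.symm z ∈ Y₀ := by
      refine hY₀mem.mpr ⟨(C.Fsymm_part hF).1 hzX, fun hc => ?_⟩
      have := congrArg F hc
      rw [Equiv.apply_symm_apply, hyx] at this
      exact hz1 this
    have hnsc : ¬F.SameCycle y' (F.symm z) := by
      intro hsc
      rcases hD' _ hsc with hc | hc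
      · exact C.not_both (hc ▸ hx) (hY₀mem.mp hwY).1
      · exact (hY₀mem.mp hwY).2 hc
    have hArc : A y' (F (F.symm z)) := by rw [Equiv.apply_symm_apply]; exact hAz
    have hnw : ¬A (F.symm z) x' := fun hc => hnsc (hNS y' (F.symm z) hArc (hyx ▸ hc))
    have hmem : F.symm z ∈ B' ∪ Ly := by
      by_cases hw : 2 * a - 1 ≤ deg A (F.symm z)
      · exact Finset.mem_union_left _ (Finset.mem_filter.mpr ⟨hwY, hw, hnw⟩)
      · exact Finset.mem_union_right _ (Finset.mem_filter.mpr ⟨hwY, by omega⟩)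
    exact Finset.mem_insert_of_mem (Finset.mem_image.mpr ⟨_, hmem, Equiv.apply_symm_apply _ _⟩)
  have hinsubx : ins A x' ⊆ insert y' H'nB' := by
    intro z hz
    have hzY : z ∈ Yf := C.ins_sub hx hz
    have hAz : A z x' := (mem_ins A).mp hz
    by_cases hz1 : z = y'
    · rw [hz1]; exact Finset.mem_insert_self _ _
    have hzY₀ : z ∈ Y₀ := hY₀mem.mpr ⟨hzY, hz1⟩
    by_cases hw : 2 * a - 1 ≤ deg A z
    · exact Finset.mem_insert_of_mem (Finset.mem_filter.mpr ⟨hzY₀, hw, hAz⟩)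
    · exact absurd hAz (hLynx z (Finset.mem_filter.mpr ⟨hzY₀, by omega⟩))
  have hinsuby : ins A y' ⊆ insert x' HnB := by
    intro z hz
    have hzX : z ∈ Xf := C.symm.ins_sub hyY hz
    have hAz : A z y' := (mem_ins A).mp hz
    by_cases hz1 : z = x'
    · rw [hz1]; exact Finset.mem_insert_self _ _
    have hzX₀ : z ∈ X₀ := hX₀mem.mpr ⟨hzX, hz1⟩
    by_cases hw : 2 * a - 1 ≤ deg A z
    · exact Finset.mem_insert_of_mem (Finset.mem_filter.mpr ⟨hzX₀, hw, hAz⟩)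
    · exact absurd hAz (hLxny z (Finset.mem_filter.mpr ⟨hzX₀, by omega⟩))
  -- degenerate branches on HnB, H'nB'
  by_cases hHne : HnB.Nonempty
  swap
  · -- HnB empty: no in-arc into y' from outside, so look at x' and the dual side
    rw [Finset.not_nonempty_iff_eq_empty] at hHne
    by_cases hH'ne : H'nB'.Nonempty
    · -- d(y') ≥ a+1 but ins y' ⊆ {x'}
      obtain ⟨g, hg⟩ := hH'ne
      obtain ⟨hg1, hg2, hg3⟩ := Finset.mem_filter.mp hg
      have hdy : a + 1 ≤ deg A y' :=
        C.light_dom_deg (fun hc => (hY₀mem.mp hg1).2 hc.symm) hAyx hg3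
      have hiny : (ins A y').card ≤ 1 := by
        have h1 : ins A y' ⊆ insert x' HnB := hinsuby
        rw [hHne] at h1
        calc (ins A y').card ≤ (insert x' (∅ : Finset V)).card := Finset.card_le_card h1
        _ = 1 := by simp
      have houty : (outs A y').card ≤ 1 + (B'.card + Ly.card) := by
        calc (outs A y').card ≤ (insert x' ((B' ∪ Ly).image F)).card :=
              Finset.card_le_card houtsuby
        _ ≤ 1 + ((B' ∪ Ly).image F).card := by
            have := Finset.card_insert_le x' ((B' ∪ Ly).image F); omega
        _ ≤ 1 + (B'.card + Ly.card) := by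
            have h2 := Finset.card_image_le (s := B' ∪ Ly) (f := F)
            have h3 := Finset.card_union_le B' Ly
            omega
      have := deg_eq A y'
      have hpos : 1 ≤ H'nB'.card := Finset.card_pos.mpr ⟨g, hg⟩
      omega
    · -- both empty: D has no incoming arc, contradicting strong connectivity
      rw [Finset.not_nonempty_iff_eq_empty] at hH'ne
      have hbig : ∃ v : V, v ∉ ({x', y'} : Finset V) := by
        by_contra hc
        push_neg at hc
        have h1 : (Finset.univ : Finset V).card ≤ ({x', y'} : Finset V).card :=
          Finset.card_le_card (fun v _ => hc v)
        rw [Finset.card_univ, C.card_V] at h1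
        have h2 : ({x', y'} : Finset V).card ≤ 2 := Finset.card_insert_le _ _ |>.trans (by simp)
        omega
      obtain ⟨u, hu, w, hw, harc⟩ := C.escape_into {x', y'} ⟨x', by simp⟩ hbig
      rcases Finset.mem_insert.mp hw with rfl | hw'
      · have := hinsubx ((mem_ins A).mpr harc)
        rw [hH'ne] at this
        rcases Finset.mem_insert.mp this with hc | hc
        · exact hu (by simp [hc])
        · exact absurd hc (Finset.notMem_empty u)
      · rw [Finset.mem_singleton.mp hw'] at harc
        have := hinsuby ((mem_ins A).mpr harc)
        rw [hHne] at this
        rcases Finset.mem_insert.mp this with hc | hc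
        · exact hu (by simp [hc])
        · exact absurd hc (Finset.notMem_empty u)
  by_cases hH'ne : H'nB'.Nonempty
  swap
  · -- H'nB' empty but HnB not: ins x' ⊆ {y'}, d(x') ≥ a+1
    rw [Finset.not_nonempty_iff_eq_empty] at hH'ne
    obtain ⟨h, hh⟩ := hHne
    obtain ⟨hh1, hh2, hh3⟩ := Finset.mem_filter.mp hh
    have hdx : a + 1 ≤ deg A x' :=
      C.light_dom_deg (fun hc => (hX₀mem.mp hh1).2 hc.symm) hAxy hh3
    have hinx : (ins A x').card ≤ 1 := by
      have h1 : ins A x' ⊆ insert y' H'nB' := hinsubx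
      rw [hH'ne] at h1
      calc (ins A x').card ≤ (insert y' (∅ : Finset V)).card := Finset.card_le_card h1
      _ = 1 := by simp
    have houtx : (outs A x').card ≤ 1 + (B.card + Lx.card) := by
      calc (outs A x').card ≤ (insert y' ((B ∪ Lx).image F)).card :=
            Finset.card_le_card houtsubx
      _ ≤ 1 + ((B ∪ Lx).image F).card := by
          have := Finset.card_insert_le y' ((B ∪ Lx).image F); omega
      _ ≤ 1 + (B.card + Lx.card) := by
          have h2 := Finset.card_image_le (s := B ∪ Lx) (f := F)
          have h3 := Finset.card_union_le B Lx
          omega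
    have h5 := deg_eq A x'
    have hpos : 1 ≤ HnB.card := Finset.card_pos.mpr ⟨h, hh⟩
    omega
  -- main branch: both HnB and H'nB' nonempty
  obtain ⟨p, hp⟩ := hHne
  obtain ⟨hp1, hp2, hp3⟩ := Finset.mem_filter.mp hp
  obtain ⟨q, hq⟩ := hH'ne
  obtain ⟨hq1, hq2, hq3⟩ := Finset.mem_filter.mp hq
  have hdx : a + 1 ≤ deg A x' :=
    C.light_dom_deg (fun hc => (hX₀mem.mp hp1).2 hc.symm) hAxy hp3
  have hdy : a + 1 ≤ deg A y' :=
    C.light_dom_deg (fun hc => (hY₀mem.mp hq1).2 hc.symm) hAyx hq3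
  -- cardinalities of the bounding sets
  have hdisjBLx : Disjoint B Lx := by
    rw [Finset.disjoint_left]
    intro z h1 h2
    have := (Finset.mem_filter.mp h1).2.1
    have := (Finset.mem_filter.mp h2).2
    omega
  have hdisjBLy : Disjoint B' Ly := by
    rw [Finset.disjoint_left]
    intro z h1 h2
    have := (Finset.mem_filter.mp h1).2.1
    have := (Finset.mem_filter.mp h2).2
    omega
  have hSxcard : (insert y' ((B ∪ Lx).image F)).card = 1 + (B.card + Lx.card) := by
    have hnm : y' ∉ (B ∪ Lx).image F := by
      intro hc
      obtain ⟨w, hw, hw2⟩ := Finset.mem_image.mp hc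
      have hwX₀ : w ∈ X₀ := by
        rcases Finset.mem_union.mp hw with h | h
        · exact (Finset.mem_filter.mp h).1
        · exact (Finset.mem_filter.mp h).1
      have : w = x' := F.injective (hw2.trans hxy.symm)
      exact (hX₀mem.mp hwX₀).2 this
    rw [Finset.card_insert_of_notMem hnm, Finset.card_image_of_injective _ F.injective,
      Finset.card_union_of_disjoint hdisjBLx]
    omega
  have hSycard : (insert x' ((B' ∪ Ly).image F)).card = 1 + (B'.card + Ly.card) := by
    have hnm : x' ∉ (B' ∪ Ly).image F := by
      intro hc
      obtain ⟨w, hw, hw2⟩ := Finset.mem_image.mp hc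
      have hwY₀ : w ∈ Y₀ := by
        rcases Finset.mem_union.mp hw with h | h
        · exact (Finset.mem_filter.mp h).1
        · exact (Finset.mem_filter.mp h).1
      have : w = y' := F.injective (hw2.trans hyx.symm)
      exact (hY₀mem.mp hwY₀).2 this
    rw [Finset.card_insert_of_notMem hnm, Finset.card_image_of_injective _ F.injective,
      Finset.card_union_of_disjoint hdisjBLy]
    omega
  have hinxcard : (ins A x').card ≤ 1 + H'nB'.card := by
    calc (ins A x').card ≤ (insert y' H'nB').card := Finset.card_le_card hinsubx
    _ ≤ 1 + H'nB'.card := by have := Finset.card_insert_le y' H'nB'; omega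
  have hinycard : (ins A y').card ≤ 1 + HnB.card := by
    calc (ins A y').card ≤ (insert x' HnB).card := Finset.card_le_card hinsuby
    _ ≤ 1 + HnB.card := by have := Finset.card_insert_le x' HnB; omega
  have houtxcard : (outs A x').card ≤ 1 + (B.card + Lx.card) := by
    calc (outs A x').card ≤ (insert y' ((B ∪ Lx).image F)).card :=
          Finset.card_le_card houtsubx
    _ = 1 + (B.card + Lx.card) := hSxcard
  have houtycard : (outs A y').card ≤ 1 + (B'.card + Ly.card) := by
    calc (outs A y').card ≤ (insert x' ((B' ∪ Ly).image F)).card :=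
          Finset.card_le_card houtsuby
    _ = 1 + (B'.card + Ly.card) := hSycard
  have hdegeqx := deg_eq A x'
  have hdegeqy := deg_eq A y'
  -- the out-neighbourhoods are exactly the bounding sets
  have houteqx : outs A x' = insert y' ((B ∪ Lx).image F) := by
    apply Finset.eq_of_subset_of_card_le houtsubx
    rw [hSxcard]
    omega
  have houteqy : outs A y' = insert x' ((B' ∪ Ly).image F) := by
    apply Finset.eq_of_subset_of_card_le houtsuby
    rw [hSycard]
    omega
  -- no lights in X₀ or Y₀
  have hLxempty : Lx = ∅ := by
    by_contra hc
    obtain ⟨ℓ, hℓ⟩ := Finset.nonempty_of_ne_empty hc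
    have hFl : F ℓ ∈ outs A x' := by
      rw [houteqx]
      exact Finset.mem_insert_of_mem (Finset.mem_image.mpr ⟨ℓ, Finset.mem_union_right _ hℓ, rfl⟩)
    obtain ⟨hℓ1, hℓ2⟩ := Finset.mem_filter.mp hℓ
    exact C.lights_no_common (fun hc' => (hX₀mem.mp hℓ1).2 hc'.symm)
      ((mem_outs A).mp hFl) (hF ℓ) hlx hℓ2
  have hLyempty : Ly = ∅ := by
    by_contra hc
    obtain ⟨ℓ, hℓ⟩ := Finset.nonempty_of_ne_empty hc
    have hFl : F ℓ ∈ outs A y' := by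
      rw [houteqy]
      exact Finset.mem_insert_of_mem (Finset.mem_image.mpr ⟨ℓ, Finset.mem_union_right _ hℓ, rfl⟩)
    obtain ⟨hℓ1, hℓ2⟩ := Finset.mem_filter.mp hℓ
    exact C.lights_no_common (fun hc' => (hY₀mem.mp hℓ1).2 hc'.symm)
      ((mem_outs A).mp hFl) (hF ℓ) hly hℓ2
  rw [hLxempty, Finset.union_empty] at houteqx
  rw [hLyempty, Finset.union_empty] at houteqy
  -- membership in B gives complete in-neighbourhoods, and closure under F.symm
  have hBall : ∀ h ∈ B, ∀ z ∈ Yf, A z h := by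
    intro h hm z hz
    obtain ⟨hm1, hm2, hm3⟩ := Finset.mem_filter.mp hm
    exact C.heavy_out_in (hX₀mem.mp hm1).1 hm2 hyY hz hm3
  have hB'all : ∀ g ∈ B', ∀ z ∈ Xf, A z g := by
    intro g hm z hz
    obtain ⟨hm1, hm2, hm3⟩ := Finset.mem_filter.mp hm
    exact C.symm.heavy_out_in (hY₀mem.mp hm1).1 hm2 hx hz hm3
  have hclos1 : ∀ h ∈ B, F.symm h ∈ B' := by
    intro h hm
    have hhX : h ∈ Xf := (hX₀mem.mp (Finset.mem_filter.mp hm).1).1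
    have hAh : A y' h := hBall h hm y' hyY
    have : h ∈ outs A y' := (mem_outs A).mpr hAh
    rw [houteqy] at this
    rcases Finset.mem_insert.mp this with hc | hc
    · exact absurd hc (hX₀mem.mp (Finset.mem_filter.mp hm).1).2
    · obtain ⟨w, hw, hw2⟩ := Finset.mem_image.mp hc
      rw [← hw2]
      rw [Equiv.symm_apply_apply]
      exact hw
  have hclos2 : ∀ g ∈ B', F.symm g ∈ B := by
    intro g hm
    have hAg : A x' g := hB'all g hm x' hx
    have : g ∈ outs A x' := (mem_outs A).mpr hAg
    rw [houteqx] at this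
    rcases Finset.mem_insert.mp this with hc | hc
    · exact absurd hc (hY₀mem.mp (Finset.mem_filter.mp hm).1).2
    · obtain ⟨w, hw, hw2⟩ := Finset.mem_image.mp hc
      rw [← hw2, Equiv.symm_apply_apply]
      exact hw
  -- B must be nonempty: otherwise no arc leaves the 2-cycle
  have hBne : B.Nonempty := by
    by_cases hBc : B.Nonempty
    · exact hBc
    by_cases hB'c : B'.Nonempty
    · obtain ⟨g, hg⟩ := hB'c
      exact ⟨F.symm g, hclos2 g hg⟩
    exfalso
    rw [Finset.not_nonempty_iff_eq_empty] at hBc hB'c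
    rw [hBc, Finset.image_empty] at houteqx
    rw [hB'c, Finset.image_empty] at houteqy
    have hbig : ∃ v : V, v ∉ ({x', y'} : Finset V) := by
      by_contra hc
      push_neg at hc
      have h1 : (Finset.univ : Finset V).card ≤ ({x', y'} : Finset V).card :=
        Finset.card_le_card (fun v _ => hc v)
      rw [Finset.card_univ, C.card_V] at h1
      have h2 : ({x', y'} : Finset V).card ≤ 2 := Finset.card_insert_le _ _ |>.trans (by simp)
      omega
    obtain ⟨u, hu, w, hw, harc⟩ := C.escape {x', y'} ⟨x', by simp⟩ hbig
    rcases Finset.mem_insert.mp hu with rfl | hu'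
    · have : w ∈ outs A u := (mem_outs A).mpr harc
      rw [houteqx] at this
      exact hw (by simp [Finset.mem_singleton.mp this])
    · rw [Finset.mem_singleton.mp hu'] at harc
      have : w ∈ outs A y' := (mem_outs A).mpr harc
      rw [houteqy] at this
      exact hw (by simp [Finset.mem_singleton.mp this])
  -- final contradiction via the cycle through p and a member of B
  obtain ⟨h₀, hh₀⟩ := hBne
  set T := B ∪ B' with hT
  have hTclosed : ∀ v : V, v ∉ T → F v ∉ T := by
    intro v hv hc
    apply hv
    rcases Finset.mem_union.mp hc with hc' | hc'
    · have := hclos1 _ hc'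
      rw [Equiv.symm_apply_apply] at this
      exact Finset.mem_union_right _ this
    · have := hclos2 _ hc'
      rw [Equiv.symm_apply_apply] at this
      exact Finset.mem_union_left _ this
  have hpT : p ∉ T := by
    intro hc
    rcases Finset.mem_union.mp hc with hc' | hc'
    · exact (Finset.mem_filter.mp hc').2.2 hp3
    · exact C.not_both (hX₀mem.mp hp1).1 (hY₀mem.mp (Finset.mem_filter.mp hc').1).1
  have hscph : F.SameCycle p h₀ := by
    apply hrest
    · exact (hX₀mem.mp hp1).2
    · exact fun hc => C.not_both (hX₀mem.mp hp1).1 (hc ▸ hyY)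
    · exact (hX₀mem.mp (Finset.mem_filter.mp hh₀).1).2
    · exact fun hc => C.not_both (hX₀mem.mp (Finset.mem_filter.mp hh₀).1).1 (hc ▸ hyY)
  have hstay : h₀ ∈ Finset.univ \ T := by
    refine sc_closed F (Finset.univ \ T) ?_ ?_ hscph
    · intro w hw
      obtain ⟨-, hw2⟩ := Finset.mem_sdiff.mp hw
      exact Finset.mem_sdiff.mpr ⟨Finset.mem_univ _, hTclosed w hw2⟩
    · exact Finset.mem_sdiff.mpr ⟨Finset.mem_univ _, hpT⟩
  exact (Finset.mem_sdiff.mp hstay).2 (Finset.mem_union_left _ hh₀)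

lemma twotwo_degen (C : Ctx A X Y a Xf Yf) (hF : ∀ v, A v (F v))
    (hNS : ∀ u u' : V, A u (F u') → A u' (F u) → F.SameCycle u u')
    {x₁ y₁ x₂ y₂ : V} (hx₁ : x₁ ∈ Xf) (hx₂ : x₂ ∈ Xf) (hne : x₁ ≠ x₂)
    (h11 : F x₁ = y₁) (h12 : F y₁ = x₁) (h21 : F x₂ = y₂) (h22 : F y₂ = x₂)
    (hl1 : deg A x₁ < 2 * a - 1) (hl2 : deg A y₁ < 2 * a - 1)
    (hl3 : deg A x₂ < 2 * a - 1) (hl4 : deg A y₂ < 2 * a - 1)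
    (hex : ∃ u : V, 2 * a - 1 ≤ deg A u)
    (hdeg1 : ∀ h ∈ Xf, h ≠ x₁ → h ≠ x₂ → ¬A h y₁) : False := by
  classical
  have ha := C.ha
  have hy₁Y : y₁ ∈ Yf := h11 ▸ (C.F_part hF).1 hx₁
  have hy₂Y : y₂ ∈ Yf := h21 ▸ (C.F_part hF).1 hx₂
  have hy12 : y₁ ≠ y₂ := by
    intro hc
    exact hne (F.injective (h11.trans (hc.trans h21.symm)))
  have hA11 : A x₁ y₁ := h11 ▸ hF x₁
  have hA12 : A y₁ x₁ := h12 ▸ hF y₁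
  have hA21 : A x₂ y₂ := h21 ▸ hF x₂
  have hA22 : A y₂ x₂ := h22 ▸ hF y₂
  have hD2c : ∀ u ∈ ({x₂, y₂} : Finset V), ∀ w, F.SameCycle u w →
      w ∈ ({x₂, y₂} : Finset V) := by
    intro u hu w hw
    refine sc_closed F {x₂, y₂} ?_ hu hw
    intro z hz
    rcases Finset.mem_insert.mp hz with rfl | hz
    · simp [h21]
    · rw [Finset.mem_singleton.mp hz]; simp [h22]
  set X' := Xf \ {x₁, x₂} with hX'
  have hX'card : X'.card = a - 2 := by
    rw [hX', Finset.card_sdiff_of_subset, C.cardX]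
    · congr 1
      rw [Finset.card_insert_of_notMem (by simpa), Finset.card_singleton]
    · intro z hz
      rcases Finset.mem_insert.mp hz with rfl | hz
      · exact hx₁
      · rw [Finset.mem_singleton.mp hz]; exact hx₂
  have hX'mem : ∀ {h : V}, h ∈ X' ↔ h ∈ Xf ∧ h ≠ x₁ ∧ h ≠ x₂ := by
    intro h
    simp only [hX', Finset.mem_sdiff, Finset.mem_insert, Finset.mem_singleton]
    tauto
  have hX'heavy : ∀ h ∈ X', 2 * a - 1 ≤ deg A h := by
    intro h hmem
    obtain ⟨hhX, hh1, hh2⟩ := hX'mem.mp hmem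
    by_contra hlh
    push_neg at hlh
    have hsub : ({x₁, x₂, h} : Finset V) ⊆ Xf.filter (fun v => deg A v < 2 * a - 1) := by
      intro z hz
      simp only [Finset.mem_insert, Finset.mem_singleton] at hz
      rcases hz with rfl | rfl | rfl <;> exact Finset.mem_filter.mpr ⟨by assumption, by omega⟩
    have hcard3 : ({x₁, x₂, h} : Finset V).card = 3 := by
      rw [Finset.card_insert_of_notMem (by simp [hne, hh1.symm, hh2.symm]),
        Finset.card_insert_of_notMem (by simp [hh2.symm]), Finset.card_singleton]
    have := Finset.card_le_card hsub
    have := C.lights_X_card hex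
    omega
  have hX'D2 : ∀ h ∈ X', h ∉ ({x₂, y₂} : Finset V) := by
    intro h hmem hmemD
    obtain ⟨hhX, hh1, hh2⟩ := hX'mem.mp hmem
    rcases Finset.mem_insert.mp hmemD with rfl | hz
    · exact hh2 rfl
    · exact C.not_both hhX ((Finset.mem_singleton.mp hz) ▸ hy₂Y)
  have hmiss : ∀ h ∈ X', ¬A h y₁ := by
    intro h hmem
    obtain ⟨hhX, hh1, hh2⟩ := hX'mem.mp hmem
    exact hdeg1 h hhX hh1 hh2
  have hhy₂ : ∀ h ∈ X', A h y₂ := by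
    intro h hmem
    by_contra hc
    exact hy12 (C.heavy_no_two_out (hX'mem.mp hmem).1 (hX'heavy h hmem) hy₁Y hy₂Y
      (hmiss h hmem) hc)
  have hins : ∀ h ∈ X', ∀ z ∈ Yf, A z h := by
    intro h hmem z hz
    exact C.heavy_out_in (hX'mem.mp hmem).1 (hX'heavy h hmem) hy₁Y hz (hmiss h hmem)
  have hn21 : ¬A x₂ y₁ := fun hc => C.lights_no_common hne.symm hc hA11 hl3 hl1
  have hny₁ : ¬A y₁ x₂ := fun hc => C.lights_no_common hy12 hc hA22 hl2 hl4
  -- every g ∈ Y' fails to point at x₂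
  have hgx₂ : ∀ g, g ∈ Yf → g ≠ y₁ → g ≠ y₂ → ¬A g x₂ := by
    intro g hgY hg1 hg2 hAg
    have hFgX' : F g ∈ X' := by
      refine hX'mem.mpr ⟨(C.F_part hF).2 hgY, ?_, ?_⟩
      · intro hc
        exact hg1 (F.injective (hc.trans h12.symm))
      · intro hc
        exact hg2 (F.injective (hc.trans h22.symm))
    have h1 : A y₂ (F g) := hins _ hFgX' y₂ hy₂Y
    have h2 : A g (F y₂) := h22 ▸ hAg
    have hsc := hNS y₂ g h1 h2
    have : g ∈ ({x₂, y₂} : Finset V) := hD2c y₂ (by simp) g hsc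
    rcases Finset.mem_insert.mp this with rfl | hz
    · exact C.not_both hx₂ hgY
    · exact hg2 (Finset.mem_singleton.mp hz)
  -- hence the in-neighbourhood of x₂ is contained in {y₂}
  have hinx₂ : ins A x₂ ⊆ {y₂} := by
    intro z hz
    have hzY : z ∈ Yf := C.ins_sub hx₂ hz
    have hAz : A z x₂ := (mem_ins A).mp hz
    rw [Finset.mem_singleton]
    by_contra hz2
    by_cases hz1 : z = y₁
    · exact hny₁ (hz1 ▸ hAz)
    · exact hgx₂ z hzY hz1 hz2 hAz
  -- and the out-neighbourhood of x₂ is contained in {y₂}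
  have houtx₂ : outs A x₂ ⊆ {y₂} := by
    intro z hz
    have hzY : z ∈ Yf := C.outs_sub hx₂ hz
    have hAz : A x₂ z := (mem_outs A).mp hz
    rw [Finset.mem_singleton]
    by_contra hz2
    by_cases hz1 : z = y₁
    · exact hn21 (hz1 ▸ hAz)
    have hFsz : F.symm z ∈ X' := by
      refine hX'mem.mpr ⟨(C.Fsymm_part hF).2 hzY, ?_, ?_⟩
      · intro hc
        have := congrArg F hc
        rw [Equiv.apply_symm_apply, h11] at this
        exact hz1 this
      · intro hc
        have := congrArg F hc
        rw [Equiv.apply_symm_apply, h21] at this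
        exact hz2 this
    have h1 : A (F.symm z) (F x₂) := by rw [h21]; exact hhy₂ _ hFsz
    have h2 : A x₂ (F (F.symm z)) := by rw [Equiv.apply_symm_apply]; exact hAz
    have hsc := (hNS x₂ (F.symm z) h2 h1).symm
    have : x₂ ∈ ({x₂, y₂} : Finset V) := by simp
    exact hX'D2 _ hFsz (hD2c x₂ this _ (hNS x₂ (F.symm z) h2 h1))
  -- x₂ is in a dominating pair
  have hX'ne : X'.Nonempty := by
    rw [← Finset.card_pos, hX'card]; omega
  obtain ⟨h₀, hh₀⟩ := hX'ne
  have hdx₂ : a + 1 ≤ deg A x₂ := by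
    refine C.light_dom_deg (fun hc => ?_) hA21 (hhy₂ h₀ hh₀)
    exact (hX'mem.mp hh₀).2.2 hc.symm
  have c1 : (outs A x₂).card ≤ 1 := by
    calc (outs A x₂).card ≤ ({y₂} : Finset V).card := Finset.card_le_card houtx₂
    _ = 1 := Finset.card_singleton _
  have c2 : (ins A x₂).card ≤ 1 := by
    calc (ins A x₂).card ≤ ({y₂} : Finset V).card := Finset.card_le_card hinx₂
    _ = 1 := Finset.card_singleton _
  have := deg_eq A x₂
  omega

lemma twotwo_light (C : Ctx A X Y a Xf Yf) (hF : ∀ v, A v (F v))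
    (hNS : ∀ u u' : V, A u (F u') → A u' (F u) → F.SameCycle u u')
    {x₁ y₁ x₂ y₂ : V} (hx₁ : x₁ ∈ Xf) (hx₂ : x₂ ∈ Xf) (hne : x₁ ≠ x₂)
    (h11 : F x₁ = y₁) (h12 : F y₁ = x₁) (h21 : F x₂ = y₂) (h22 : F y₂ = x₂)
    (hl1 : deg A x₁ < 2 * a - 1) (hl2 : deg A y₁ < 2 * a - 1)
    (hl3 : deg A x₂ < 2 * a - 1) (hl4 : deg A y₂ < 2 * a - 1)
    (hex : ∃ u : V, 2 * a - 1 ≤ deg A u) : False := by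
  classical
  have ha := C.ha
  have hy₁Y : y₁ ∈ Yf := h11 ▸ (C.F_part hF).1 hx₁
  have hy₂Y : y₂ ∈ Yf := h21 ▸ (C.F_part hF).1 hx₂
  have hy12 : y₁ ≠ y₂ := by
    intro hc
    exact hne (F.injective (h11.trans (hc.trans h21.symm)))
  have hA11 : A x₁ y₁ := h11 ▸ hF x₁
  have hA12 : A y₁ x₁ := h12 ▸ hF y₁
  have hA21 : A x₂ y₂ := h21 ▸ hF x₂
  have hA22 : A y₂ x₂ := h22 ▸ hF y₂
  have hD1c : ∀ u ∈ ({x₁, y₁} : Finset V), ∀ w, F.SameCycle u w →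
      w ∈ ({x₁, y₁} : Finset V) := by
    intro u hu w hw
    refine sc_closed F {x₁, y₁} ?_ hu hw
    intro z hz
    rcases Finset.mem_insert.mp hz with rfl | hz
    · simp [h11]
    · rw [Finset.mem_singleton.mp hz]; simp [h12]
  have hD2c : ∀ u ∈ ({x₂, y₂} : Finset V), ∀ w, F.SameCycle u w →
      w ∈ ({x₂, y₂} : Finset V) := by
    intro u hu w hw
    refine sc_closed F {x₂, y₂} ?_ hu hw
    intro z hz
    rcases Finset.mem_insert.mp hz with rfl | hz
    · simp [h21]
    · rw [Finset.mem_singleton.mp hz]; simp [h22]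
  set X' := Xf \ {x₁, x₂} with hX'
  set Y' := Yf \ {y₁, y₂} with hY'
  have hX'mem : ∀ {h : V}, h ∈ X' ↔ h ∈ Xf ∧ h ≠ x₁ ∧ h ≠ x₂ := by
    intro h
    simp only [hX', Finset.mem_sdiff, Finset.mem_insert, Finset.mem_singleton]
    tauto
  have hY'mem : ∀ {g : V}, g ∈ Y' ↔ g ∈ Yf ∧ g ≠ y₁ ∧ g ≠ y₂ := by
    intro g
    simp only [hY', Finset.mem_sdiff, Finset.mem_insert, Finset.mem_singleton]
    tauto
  have hX'card : X'.card = a - 2 := by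
    rw [hX', Finset.card_sdiff_of_subset, C.cardX]
    · congr 1
      rw [Finset.card_insert_of_notMem (by simpa), Finset.card_singleton]
    · intro z hz
      rcases Finset.mem_insert.mp hz with rfl | hz
      · exact hx₁
      · rw [Finset.mem_singleton.mp hz]; exact hx₂
  have hY'card : Y'.card = a - 2 := by
    rw [hY', Finset.card_sdiff_of_subset, C.cardY]
    · congr 1
      rw [Finset.card_insert_of_notMem (by simpa), Finset.card_singleton]
    · intro z hz
      rcases Finset.mem_insert.mp hz with rfl | hz
      · exact hy₁Y
      · rw [Finset.mem_singleton.mp hz]; exact hy₂Y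
  have hn12 : ¬A x₁ y₂ := fun hc => C.lights_no_common hne hc hA21 hl1 hl3
  have hn21 : ¬A x₂ y₁ := fun hc => C.lights_no_common hne.symm hc hA11 hl3 hl1
  have hny₁ : ¬A y₁ x₂ := fun hc => C.lights_no_common hy12 hc hA22 hl2 hl4
  have hny₂ : ¬A y₂ x₁ := fun hc => C.lights_no_common hy12.symm hc hA12 hl4 hl2
  set B₁ := X'.filter (fun h => ¬A h y₁) with hB₁
  set B₂ := X'.filter (fun h => ¬A h y₂) with hB₂
  set B'₁ := Y'.filter (fun g => ¬A g x₁) with hB'₁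
  set B'₂ := Y'.filter (fun g => ¬A g x₂) with hB'₂
  by_cases hne1 : (X' \ B₁).Nonempty
  swap
  · rw [Finset.not_nonempty_iff_eq_empty, Finset.sdiff_eq_empty_iff_subset] at hne1
    refine C.twotwo_degen hF hNS hx₁ hx₂ hne h11 h12 h21 h22 hl1 hl2 hl3 hl4 hex ?_
    intro h hhX hh1 hh2
    exact (Finset.mem_filter.mp (hne1 (hX'mem.mpr ⟨hhX, hh1, hh2⟩))).2
  by_cases hne2 : (X' \ B₂).Nonempty
  swap
  · rw [Finset.not_nonempty_iff_eq_empty, Finset.sdiff_eq_empty_iff_subset] at hne2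
    refine C.twotwo_degen hF hNS hx₂ hx₁ hne.symm h21 h22 h11 h12 hl3 hl4 hl1 hl2 hex ?_
    intro h hhX hh1 hh2
    exact (Finset.mem_filter.mp (hne2 (hX'mem.mpr ⟨hhX, hh2, hh1⟩))).2
  by_cases hne3 : (Y' \ B'₁).Nonempty
  swap
  · rw [Finset.not_nonempty_iff_eq_empty, Finset.sdiff_eq_empty_iff_subset] at hne3
    refine C.symm.twotwo_degen hF hNS hy₁Y hy₂Y hy12 h12 h11 h22 h21 hl2 hl1 hl4 hl3 hex ?_
    intro g hgY hg1 hg2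
    exact (Finset.mem_filter.mp (hne3 (hY'mem.mpr ⟨hgY, hg1, hg2⟩))).2
  by_cases hne4 : (Y' \ B'₂).Nonempty
  swap
  · rw [Finset.not_nonempty_iff_eq_empty, Finset.sdiff_eq_empty_iff_subset] at hne4
    refine C.symm.twotwo_degen hF hNS hy₂Y hy₁Y hy12.symm h22 h21 h12 h11 hl4 hl3 hl2 hl1 hex ?_
    intro g hgY hg1 hg2
    exact (Finset.mem_filter.mp (hne4 (hY'mem.mpr ⟨hgY, hg2, hg1⟩))).2
  obtain ⟨p₁, hp₁⟩ := hne1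
  obtain ⟨p₂, hp₂⟩ := hne2
  obtain ⟨q₁, hq₁⟩ := hne3
  obtain ⟨q₂, hq₂⟩ := hne4
  have hp₁' : p₁ ∈ X' ∧ A p₁ y₁ := by
    obtain ⟨hm, hnm⟩ := Finset.mem_sdiff.mp hp₁
    exact ⟨hm, by by_contra hc; exact hnm (Finset.mem_filter.mpr ⟨hm, hc⟩)⟩
  have hp₂' : p₂ ∈ X' ∧ A p₂ y₂ := by
    obtain ⟨hm, hnm⟩ := Finset.mem_sdiff.mp hp₂
    exact ⟨hm, by by_contra hc; exact hnm (Finset.mem_filter.mpr ⟨hm, hc⟩)⟩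
  have hq₁' : q₁ ∈ Y' ∧ A q₁ x₁ := by
    obtain ⟨hm, hnm⟩ := Finset.mem_sdiff.mp hq₁
    exact ⟨hm, by by_contra hc; exact hnm (Finset.mem_filter.mpr ⟨hm, hc⟩)⟩
  have hq₂' : q₂ ∈ Y' ∧ A q₂ x₂ := by
    obtain ⟨hm, hnm⟩ := Finset.mem_sdiff.mp hq₂
    exact ⟨hm, by by_contra hc; exact hnm (Finset.mem_filter.mpr ⟨hm, hc⟩)⟩
  have hdx₁ : a + 1 ≤ deg A x₁ :=
    C.light_dom_deg (fun hc => (hX'mem.mp hp₁'.1).2.1 hc.symm) hA11 hp₁'.2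
  have hdx₂ : a + 1 ≤ deg A x₂ :=
    C.light_dom_deg (fun hc => (hX'mem.mp hp₂'.1).2.2 hc.symm) hA21 hp₂'.2
  have hdy₁ : a + 1 ≤ deg A y₁ :=
    C.light_dom_deg (fun hc => (hY'mem.mp hq₁'.1).2.1 hc.symm) hA12 hq₁'.2
  have hdy₂ : a + 1 ≤ deg A y₂ :=
    C.light_dom_deg (fun hc => (hY'mem.mp hq₂'.1).2.2 hc.symm) hA22 hq₂'.2
  -- out-bounds
  have hout1 : (outs A x₁).card ≤ 1 + B₁.card := by
    have hsub : outs A x₁ ⊆ insert y₁ (B₁.image F) := by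
      intro z hz
      have hzY : z ∈ Yf := C.outs_sub hx₁ hz
      have hAz : A x₁ z := (mem_outs A).mp hz
      by_cases hz1 : z = y₁
      · rw [hz1]; exact Finset.mem_insert_self _ _
      by_cases hz2 : z = y₂
      · exact absurd (hz2 ▸ hAz) hn12
      have hw : F.symm z ∈ X' := by
        refine hX'mem.mpr ⟨(C.Fsymm_part hF).2 hzY, ?_, ?_⟩
        · intro hc
          have := congrArg F hc
          rw [Equiv.apply_symm_apply, h11] at this
          exact hz1 this
        · intro hc
          have := congrArg F hc
          rw [Equiv.apply_symm_apply, h21] at this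
          exact hz2 this
      have hArc : A x₁ (F (F.symm z)) := by rw [Equiv.apply_symm_apply]; exact hAz
      have hmem : F.symm z ∈ B₁ := by
        refine Finset.mem_filter.mpr ⟨hw, fun hc => ?_⟩
        have hsc := hNS x₁ (F.symm z) hArc (h11 ▸ hc)
        have : F.symm z ∈ ({x₁, y₁} : Finset V) := hD1c x₁ (by simp) _ hsc
        rcases Finset.mem_insert.mp this with hz' | hz'
        · exact (hX'mem.mp hw).2.1 hz'
        · exact C.not_both (hX'mem.mp hw).1 ((Finset.mem_singleton.mp hz') ▸ hy₁Y)
      exact Finset.mem_insert_of_mem (Finset.mem_image.mpr ⟨_, hmem, Equiv.apply_symm_apply _ _⟩)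
    calc (outs A x₁).card ≤ (insert y₁ (B₁.image F)).card := Finset.card_le_card hsub
    _ ≤ 1 + (B₁.image F).card := by have := Finset.card_insert_le y₁ (B₁.image F); omega
    _ = 1 + B₁.card := by rw [Finset.card_image_of_injective _ F.injective]
  have hout2 : (outs A x₂).card ≤ 1 + B₂.card := by
    have hsub : outs A x₂ ⊆ insert y₂ (B₂.image F) := by
      intro z hz
      have hzY : z ∈ Yf := C.outs_sub hx₂ hz
      have hAz : A x₂ z := (mem_outs A).mp hz
      by_cases hz2 : z = y₂
      · rw [hz2]; exact Finset.mem_insert_self _ _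
      by_cases hz1 : z = y₁
      · exact absurd (hz1 ▸ hAz) hn21
      have hw : F.symm z ∈ X' := by
        refine hX'mem.mpr ⟨(C.Fsymm_part hF).2 hzY, ?_, ?_⟩
        · intro hc
          have := congrArg F hc
          rw [Equiv.apply_symm_apply, h11] at this
          exact hz1 this
        · intro hc
          have := congrArg F hc
          rw [Equiv.apply_symm_apply, h21] at this
          exact hz2 this
      have hArc : A x₂ (F (F.symm z)) := by rw [Equiv.apply_symm_apply]; exact hAz
      have hmem : F.symm z ∈ B₂ := by
        refine Finset.mem_filter.mpr ⟨hw, fun hc => ?_⟩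
        have hsc := hNS x₂ (F.symm z) hArc (h21 ▸ hc)
        have : F.symm z ∈ ({x₂, y₂} : Finset V) := hD2c x₂ (by simp) _ hsc
        rcases Finset.mem_insert.mp this with hz' | hz'
        · exact (hX'mem.mp hw).2.2 hz'
        · exact C.not_both (hX'mem.mp hw).1 ((Finset.mem_singleton.mp hz') ▸ hy₂Y)
      exact Finset.mem_insert_of_mem (Finset.mem_image.mpr ⟨_, hmem, Equiv.apply_symm_apply _ _⟩)
    calc (outs A x₂).card ≤ (insert y₂ (B₂.image F)).card := Finset.card_le_card hsub
    _ ≤ 1 + (B₂.image F).card := by have := Finset.card_insert_le y₂ (B₂.image F); omega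
    _ = 1 + B₂.card := by rw [Finset.card_image_of_injective _ F.injective]
  have houty₁ : (outs A y₁).card ≤ 1 + B'₁.card := by
    have hsub : outs A y₁ ⊆ insert x₁ (B'₁.image F) := by
      intro z hz
      have hzX : z ∈ Xf := C.symm.outs_sub hy₁Y hz
      have hAz : A y₁ z := (mem_outs A).mp hz
      by_cases hz1 : z = x₁
      · rw [hz1]; exact Finset.mem_insert_self _ _
      by_cases hz2 : z = x₂
      · exact absurd (hz2 ▸ hAz) hny₁
      have hw : F.symm z ∈ Y' := by
        refine hY'mem.mpr ⟨(C.Fsymm_part hF).1 hzX, ?_, ?_⟩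
        · intro hc
          have := congrArg F hc
          rw [Equiv.apply_symm_apply, h12] at this
          exact hz1 this
        · intro hc
          have := congrArg F hc
          rw [Equiv.apply_symm_apply, h22] at this
          exact hz2 this
      have hArc : A y₁ (F (F.symm z)) := by rw [Equiv.apply_symm_apply]; exact hAz
      have hmem : F.symm z ∈ B'₁ := by
        refine Finset.mem_filter.mpr ⟨hw, fun hc => ?_⟩
        have hsc := hNS y₁ (F.symm z) hArc (h12 ▸ hc)
        have : F.symm z ∈ ({x₁, y₁} : Finset V) := hD1c y₁ (by simp) _ hsc
        rcases Finset.mem_insert.mp this with hz' | hz'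
        · exact C.not_both (hz' ▸ hx₁) (hY'mem.mp hw).1
        · exact (hY'mem.mp hw).2.1 (Finset.mem_singleton.mp hz')
      exact Finset.mem_insert_of_mem (Finset.mem_image.mpr ⟨_, hmem, Equiv.apply_symm_apply _ _⟩)
    calc (outs A y₁).card ≤ (insert x₁ (B'₁.image F)).card := Finset.card_le_card hsub
    _ ≤ 1 + (B'₁.image F).card := by have := Finset.card_insert_le x₁ (B'₁.image F); omega
    _ = 1 + B'₁.card := by rw [Finset.card_image_of_injective _ F.injective]
  have houty₂ : (outs A y₂).card ≤ 1 + B'₂.card := by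
    have hsub : outs A y₂ ⊆ insert x₂ (B'₂.image F) := by
      intro z hz
      have hzX : z ∈ Xf := C.symm.outs_sub hy₂Y hz
      have hAz : A y₂ z := (mem_outs A).mp hz
      by_cases hz2 : z = x₂
      · rw [hz2]; exact Finset.mem_insert_self _ _
      by_cases hz1 : z = x₁
      · exact absurd (hz1 ▸ hAz) hny₂
      have hw : F.symm z ∈ Y' := by
        refine hY'mem.mpr ⟨(C.Fsymm_part hF).1 hzX, ?_, ?_⟩
        · intro hc
          have := congrArg F hc
          rw [Equiv.apply_symm_apply, h12] at this
          exact hz1 this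
        · intro hc
          have := congrArg F hc
          rw [Equiv.apply_symm_apply, h22] at this
          exact hz2 this
      have hArc : A y₂ (F (F.symm z)) := by rw [Equiv.apply_symm_apply]; exact hAz
      have hmem : F.symm z ∈ B'₂ := by
        refine Finset.mem_filter.mpr ⟨hw, fun hc => ?_⟩
        have hsc := hNS y₂ (F.symm z) hArc (h22 ▸ hc)
        have : F.symm z ∈ ({x₂, y₂} : Finset V) := hD2c y₂ (by simp) _ hsc
        rcases Finset.mem_insert.mp this with hz' | hz'
        · exact C.not_both (hz' ▸ hx₂) (hY'mem.mp hw).1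
        · exact (hY'mem.mp hw).2.2 (Finset.mem_singleton.mp hz')
      exact Finset.mem_insert_of_mem (Finset.mem_image.mpr ⟨_, hmem, Equiv.apply_symm_apply _ _⟩)
    calc (outs A y₂).card ≤ (insert x₂ (B'₂.image F)).card := Finset.card_le_card hsub
    _ ≤ 1 + (B'₂.image F).card := by have := Finset.card_insert_le x₂ (B'₂.image F); omega
    _ = 1 + B'₂.card := by rw [Finset.card_image_of_injective _ F.injective]
  -- in-bounds
  have hin1 : (ins A x₁).card ≤ 1 + (Y'.card - B'₁.card) := by
    have hsub : ins A x₁ ⊆ insert y₁ (Y' \ B'₁) := by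
      intro z hz
      have hzY : z ∈ Yf := C.ins_sub hx₁ hz
      have hAz : A z x₁ := (mem_ins A).mp hz
      by_cases hz1 : z = y₁
      · rw [hz1]; exact Finset.mem_insert_self _ _
      by_cases hz2 : z = y₂
      · exact absurd (hz2 ▸ hAz) hny₂
      refine Finset.mem_insert_of_mem (Finset.mem_sdiff.mpr ⟨hY'mem.mpr ⟨hzY, hz1, hz2⟩, ?_⟩)
      intro hc
      exact (Finset.mem_filter.mp hc).2 hAz
    calc (ins A x₁).card ≤ (insert y₁ (Y' \ B'₁)).card := Finset.card_le_card hsub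
    _ ≤ 1 + (Y' \ B'₁).card := by have := Finset.card_insert_le y₁ (Y' \ B'₁); omega
    _ = 1 + (Y'.card - B'₁.card) := by rw [Finset.card_sdiff_of_subset (Finset.filter_subset _ _)]
  have hin2 : (ins A x₂).card ≤ 1 + (Y'.card - B'₂.card) := by
    have hsub : ins A x₂ ⊆ insert y₂ (Y' \ B'₂) := by
      intro z hz
      have hzY : z ∈ Yf := C.ins_sub hx₂ hz
      have hAz : A z x₂ := (mem_ins A).mp hz
      by_cases hz2 : z = y₂
      · rw [hz2]; exact Finset.mem_insert_self _ _
      by_cases hz1 : z = y₁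
      · exact absurd (hz1 ▸ hAz) hny₁
      refine Finset.mem_insert_of_mem (Finset.mem_sdiff.mpr ⟨hY'mem.mpr ⟨hzY, hz1, hz2⟩, ?_⟩)
      intro hc
      exact (Finset.mem_filter.mp hc).2 hAz
    calc (ins A x₂).card ≤ (insert y₂ (Y' \ B'₂)).card := Finset.card_le_card hsub
    _ ≤ 1 + (Y' \ B'₂).card := by have := Finset.card_insert_le y₂ (Y' \ B'₂); omega
    _ = 1 + (Y'.card - B'₂.card) := by rw [Finset.card_sdiff_of_subset (Finset.filter_subset _ _)]
  have hiny₁ : (ins A y₁).card ≤ 1 + (X'.card - B₁.card) := by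
    have hsub : ins A y₁ ⊆ insert x₁ (X' \ B₁) := by
      intro z hz
      have hzX : z ∈ Xf := C.symm.ins_sub hy₁Y hz
      have hAz : A z y₁ := (mem_ins A).mp hz
      by_cases hz1 : z = x₁
      · rw [hz1]; exact Finset.mem_insert_self _ _
      by_cases hz2 : z = x₂
      · exact absurd (hz2 ▸ hAz) hn21
      refine Finset.mem_insert_of_mem (Finset.mem_sdiff.mpr ⟨hX'mem.mpr ⟨hzX, hz1, hz2⟩, ?_⟩)
      intro hc
      exact (Finset.mem_filter.mp hc).2 hAz
    calc (ins A y₁).card ≤ (insert x₁ (X' \ B₁)).card := Finset.card_le_card hsub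
    _ ≤ 1 + (X' \ B₁).card := by have := Finset.card_insert_le x₁ (X' \ B₁); omega
    _ = 1 + (X'.card - B₁.card) := by rw [Finset.card_sdiff_of_subset (Finset.filter_subset _ _)]
  have hiny₂ : (ins A y₂).card ≤ 1 + (X'.card - B₂.card) := by
    have hsub : ins A y₂ ⊆ insert x₂ (X' \ B₂) := by
      intro z hz
      have hzX : z ∈ Xf := C.symm.ins_sub hy₂Y hz
      have hAz : A z y₂ := (mem_ins A).mp hz
      by_cases hz2 : z = x₂
      · rw [hz2]; exact Finset.mem_insert_self _ _
      by_cases hz1 : z = x₁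
      · exact absurd (hz1 ▸ hAz) hn12
      refine Finset.mem_insert_of_mem (Finset.mem_sdiff.mpr ⟨hX'mem.mpr ⟨hzX, hz1, hz2⟩, ?_⟩)
      intro hc
      exact (Finset.mem_filter.mp hc).2 hAz
    calc (ins A y₂).card ≤ (insert x₂ (X' \ B₂)).card := Finset.card_le_card hsub
    _ ≤ 1 + (X' \ B₂).card := by have := Finset.card_insert_le x₂ (X' \ B₂); omega
    _ = 1 + (X'.card - B₂.card) := by rw [Finset.card_sdiff_of_subset (Finset.filter_subset _ _)]
  have e1 := deg_eq A x₁
  have e2 := deg_eq A x₂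
  have e3 := deg_eq A y₁
  have e4 := deg_eq A y₂
  have b1 : B₁.card ≤ X'.card := Finset.card_le_card (Finset.filter_subset _ _)
  have b2 : B₂.card ≤ X'.card := Finset.card_le_card (Finset.filter_subset _ _)
  have b3 : B'₁.card ≤ Y'.card := Finset.card_le_card (Finset.filter_subset _ _)
  have b4 : B'₂.card ≤ Y'.card := Finset.card_le_card (Finset.filter_subset _ _)
  omega

lemma four_light_degen (C : Ctx A X Y a Xf Yf) (hF : ∀ v, A v (F v))
    (hNS : ∀ u u' : V, A u (F u') → A u' (F u) → F.SameCycle u u')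
    {x₁ y₁ x₂ y₂ : V} (hx₁ : x₁ ∈ Xf) (hx₂ : x₂ ∈ Xf) (hne : x₁ ≠ x₂)
    (h11 : F x₁ = y₁) (h12 : F y₁ = x₂) (h21 : F x₂ = y₂) (h22 : F y₂ = x₁)
    (hl1 : deg A x₁ < 2 * a - 1) (hl2 : deg A y₁ < 2 * a - 1)
    (hl3 : deg A x₂ < 2 * a - 1) (hl4 : deg A y₂ < 2 * a - 1)
    (hex : ∃ u : V, 2 * a - 1 ≤ deg A u)
    (hdeg1 : ∀ h ∈ Xf, h ≠ x₁ → h ≠ x₂ → ¬A h y₁) : False := by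
  classical
  have ha := C.ha
  have hy₁Y : y₁ ∈ Yf := h11 ▸ (C.F_part hF).1 hx₁
  have hy₂Y : y₂ ∈ Yf := h21 ▸ (C.F_part hF).1 hx₂
  have hy12 : y₁ ≠ y₂ := by
    intro hc
    exact hne (F.injective (h11.trans (hc.trans h21.symm)))
  have hA11 : A x₁ y₁ := h11 ▸ hF x₁
  have hA1 : A y₁ x₂ := h12 ▸ hF y₁
  have hA22 : A x₂ y₂ := h21 ▸ hF x₂
  have hA2 : A y₂ x₁ := h22 ▸ hF y₂
  set D : Finset V := {x₁, y₁, x₂, y₂} with hD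
  have hDc : ∀ u ∈ D, ∀ w, F.SameCycle u w → w ∈ D := by
    intro u hu w hw
    refine sc_closed F D ?_ hu hw
    intro z hz
    simp only [hD, Finset.mem_insert, Finset.mem_singleton] at hz ⊢
    rcases hz with rfl | rfl | rfl | rfl <;> simp [h11, h12, h21, h22]
  set X' := Xf \ {x₁, x₂} with hX'
  have hX'card : X'.card = a - 2 := by
    rw [hX', Finset.card_sdiff_of_subset, C.cardX]
    · congr 1
      rw [Finset.card_insert_of_notMem (by simpa), Finset.card_singleton]
    · intro z hz
      rcases Finset.mem_insert.mp hz with rfl | hz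
      · exact hx₁
      · rw [Finset.mem_singleton.mp hz]; exact hx₂
  have hX'mem : ∀ {h : V}, h ∈ X' ↔ h ∈ Xf ∧ h ≠ x₁ ∧ h ≠ x₂ := by
    intro h
    simp only [hX', Finset.mem_sdiff, Finset.mem_insert, Finset.mem_singleton]
    tauto
  have hX'heavy : ∀ h ∈ X', 2 * a - 1 ≤ deg A h := by
    intro h hmem
    obtain ⟨hhX, hh1, hh2⟩ := hX'mem.mp hmem
    by_contra hlh
    push_neg at hlh
    have hsub : ({x₁, x₂, h} : Finset V) ⊆ Xf.filter (fun v => deg A v < 2 * a - 1) := by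
      intro z hz
      simp only [Finset.mem_insert, Finset.mem_singleton] at hz
      rcases hz with rfl | rfl | rfl <;> exact Finset.mem_filter.mpr ⟨by assumption, by omega⟩
    have hcard3 : ({x₁, x₂, h} : Finset V).card = 3 := by
      rw [Finset.card_insert_of_notMem (by simp [hne, hh1.symm, hh2.symm]),
        Finset.card_insert_of_notMem (by simp [hh2.symm]), Finset.card_singleton]
    have := Finset.card_le_card hsub
    have := C.lights_X_card hex
    omega
  have hX'D : ∀ h ∈ X', h ∉ D := by
    intro h hmem hmemD
    obtain ⟨hhX, hh1, hh2⟩ := hX'mem.mp hmem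
    simp only [hD, Finset.mem_insert, Finset.mem_singleton] at hmemD
    rcases hmemD with rfl | rfl | rfl | rfl
    · exact hh1 rfl
    · exact C.not_both hhX hy₁Y
    · exact hh2 rfl
    · exact C.not_both hhX hy₂Y
  -- every h ∈ X' misses y₁, hence arcs to y₂ and receives from all of Yf
  have hmiss : ∀ h ∈ X', ¬A h y₁ := by
    intro h hmem
    obtain ⟨hhX, hh1, hh2⟩ := hX'mem.mp hmem
    exact hdeg1 h hhX hh1 hh2
  have hhy₂ : ∀ h ∈ X', A h y₂ := by
    intro h hmem
    by_contra hc
    exact hy12 (C.heavy_no_two_out (hX'mem.mp hmem).1 (hX'heavy h hmem) hy₁Y hy₂Y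
      (hmiss h hmem) hc)
  have hins : ∀ h ∈ X', ∀ z ∈ Yf, A z h := by
    intro h hmem z hz
    exact C.heavy_out_in (hX'mem.mp hmem).1 (hX'heavy h hmem) hy₁Y hz (hmiss h hmem)
  -- lights pair exclusions
  have hn21 : ¬A x₂ y₁ := fun hc => C.lights_no_common hne.symm hc hA11 hl3 hl1
  have hn22 : ¬A y₂ x₂ := fun hc => C.lights_no_common hy12.symm hc hA1 hl4 hl2
  -- outs x₂ ⊆ {y₂}
  have houtx₂ : outs A x₂ ⊆ {y₂} := by
    intro z hz
    have hzY : z ∈ Yf := C.outs_sub hx₂ hz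
    have hAz : A x₂ z := (mem_outs A).mp hz
    by_cases hz2 : z = y₂
    · simp [hz2]
    by_cases hz1 : z = y₁
    · exact absurd (hz1 ▸ hAz) hn21
    have hzY' : F.symm z ∈ X' := by
      refine hX'mem.mpr ⟨(C.Fsymm_part hF).2 hzY, ?_, ?_⟩
      · intro hc
        have := congrArg F hc
        rw [Equiv.apply_symm_apply, h11] at this
        exact hz1 this
      · intro hc
        have := congrArg F hc
        rw [Equiv.apply_symm_apply, h21] at this
        exact hz2 this
    have hnsc : ¬F.SameCycle x₂ (F.symm z) := by
      intro hsc
      exact hX'D _ hzY' (hDc x₂ (by simp [hD]) _ hsc)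
    have h1 : A x₂ (F (F.symm z)) := by rw [Equiv.apply_symm_apply]; exact hAz
    have h2 : A (F.symm z) (F x₂) := by rw [h21]; exact hhy₂ _ hzY'
    exact absurd (hNS x₂ (F.symm z) h1 h2) hnsc
  -- x₂ is in a dominating pair
  have hX'ne : X'.Nonempty := by
    rw [← Finset.card_pos, hX'card]; omega
  obtain ⟨h₀, hh₀⟩ := hX'ne
  have hdx₂ : a + 1 ≤ deg A x₂ := by
    refine C.light_dom_deg (fun hc => ?_) hA22 (hhy₂ h₀ hh₀)
    exact (hX'mem.mp hh₀).2.2 hc.symm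
  have hinx₂ : ins A x₂ ⊆ Yf.erase y₂ := by
    intro z hz
    have hzY : z ∈ Yf := C.ins_sub hx₂ hz
    refine Finset.mem_erase.mpr ⟨?_, hzY⟩
    intro hc
    exact hn22 (hc ▸ (mem_ins A).mp hz)
  have c1 : (outs A x₂).card ≤ 1 := by
    calc (outs A x₂).card ≤ ({y₂} : Finset V).card := Finset.card_le_card houtx₂
    _ = 1 := Finset.card_singleton _
  have c2 : (ins A x₂).card ≤ a - 1 := by
    calc (ins A x₂).card ≤ (Yf.erase y₂).card := Finset.card_le_card hinx₂
    _ = a - 1 := by rw [Finset.card_erase_of_mem hy₂Y, C.cardY]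
  have := deg_eq A x₂
  omega

lemma four_light (C : Ctx A X Y a Xf Yf) (hF : ∀ v, A v (F v))
    (hNS : ∀ u u' : V, A u (F u') → A u' (F u) → F.SameCycle u u')
    {x₁ y₁ x₂ y₂ : V} (hx₁ : x₁ ∈ Xf) (hx₂ : x₂ ∈ Xf) (hne : x₁ ≠ x₂)
    (h11 : F x₁ = y₁) (h12 : F y₁ = x₂) (h21 : F x₂ = y₂) (h22 : F y₂ = x₁)
    (hl1 : deg A x₁ < 2 * a - 1) (hl2 : deg A y₁ < 2 * a - 1)
    (hl3 : deg A x₂ < 2 * a - 1) (hl4 : deg A y₂ < 2 * a - 1)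
    (hex : ∃ u : V, 2 * a - 1 ≤ deg A u) : False := by
  classical
  have ha := C.ha
  have hy₁Y : y₁ ∈ Yf := h11 ▸ (C.F_part hF).1 hx₁
  have hy₂Y : y₂ ∈ Yf := h21 ▸ (C.F_part hF).1 hx₂
  have hy12 : y₁ ≠ y₂ := by
    intro hc
    exact hne (F.injective (h11.trans (hc.trans h21.symm)))
  have hA11 : A x₁ y₁ := h11 ▸ hF x₁
  have hA1 : A y₁ x₂ := h12 ▸ hF y₁
  have hA22 : A x₂ y₂ := h21 ▸ hF x₂
  have hA2 : A y₂ x₁ := h22 ▸ hF y₂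
  set D : Finset V := {x₁, y₁, x₂, y₂} with hD
  have hDc : ∀ u ∈ D, ∀ w, F.SameCycle u w → w ∈ D := by
    intro u hu w hw
    refine sc_closed F D ?_ hu hw
    intro z hz
    simp only [hD, Finset.mem_insert, Finset.mem_singleton] at hz ⊢
    rcases hz with rfl | rfl | rfl | rfl <;> simp [h11, h12, h21, h22]
  set X' := Xf \ {x₁, x₂} with hX'
  set Y' := Yf \ {y₁, y₂} with hY'
  have hX'mem : ∀ {h : V}, h ∈ X' ↔ h ∈ Xf ∧ h ≠ x₁ ∧ h ≠ x₂ := by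
    intro h
    simp only [hX', Finset.mem_sdiff, Finset.mem_insert, Finset.mem_singleton]
    tauto
  have hY'mem : ∀ {g : V}, g ∈ Y' ↔ g ∈ Yf ∧ g ≠ y₁ ∧ g ≠ y₂ := by
    intro g
    simp only [hY', Finset.mem_sdiff, Finset.mem_insert, Finset.mem_singleton]
    tauto
  have hX'card : X'.card = a - 2 := by
    rw [hX', Finset.card_sdiff_of_subset, C.cardX]
    · congr 1
      rw [Finset.card_insert_of_notMem (by simpa), Finset.card_singleton]
    · intro z hz
      rcases Finset.mem_insert.mp hz with rfl | hz
      · exact hx₁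
      · rw [Finset.mem_singleton.mp hz]; exact hx₂
  have hY'card : Y'.card = a - 2 := by
    rw [hY', Finset.card_sdiff_of_subset, C.cardY]
    · congr 1
      rw [Finset.card_insert_of_notMem (by simpa), Finset.card_singleton]
    · intro z hz
      rcases Finset.mem_insert.mp hz with rfl | hz
      · exact hy₁Y
      · rw [Finset.mem_singleton.mp hz]; exact hy₂Y
  have hX'D : ∀ h ∈ X', h ∉ D := by
    intro h hmem hmemD
    obtain ⟨hhX, hh1, hh2⟩ := hX'mem.mp hmem
    simp only [hD, Finset.mem_insert, Finset.mem_singleton] at hmemD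
    rcases hmemD with rfl | rfl | rfl | rfl
    · exact hh1 rfl
    · exact C.not_both hhX hy₁Y
    · exact hh2 rfl
    · exact C.not_both hhX hy₂Y
  have hY'D : ∀ g ∈ Y', g ∉ D := by
    intro g hmem hmemD
    obtain ⟨hgY, hg1, hg2⟩ := hY'mem.mp hmem
    simp only [hD, Finset.mem_insert, Finset.mem_singleton] at hmemD
    rcases hmemD with rfl | rfl | rfl | rfl
    · exact C.not_both hx₁ hgY
    · exact hg1 rfl
    · exact C.not_both hx₂ hgY
    · exact hg2 rfl
  have hn12 : ¬A x₁ y₂ := fun hc => C.lights_no_common hne hc hA22 hl1 hl3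
  have hn21 : ¬A x₂ y₁ := fun hc => C.lights_no_common hne.symm hc hA11 hl3 hl1
  have hn11 : ¬A y₁ x₁ := fun hc => C.lights_no_common hy12 hc hA2 hl2 hl4
  have hn22 : ¬A y₂ x₂ := fun hc => C.lights_no_common hy12.symm hc hA1 hl4 hl2
  have hFsX' : ∀ {z : V}, z ∈ Y' → F.symm z ∈ X' := by
    intro z hz
    obtain ⟨hzY, hz1, hz2⟩ := hY'mem.mp hz
    refine hX'mem.mpr ⟨(C.Fsymm_part hF).2 hzY, ?_, ?_⟩
    · intro hc
      have := congrArg F hc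
      rw [Equiv.apply_symm_apply, h11] at this
      exact hz1 this
    · intro hc
      have := congrArg F hc
      rw [Equiv.apply_symm_apply, h21] at this
      exact hz2 this
  have hFsY' : ∀ {z : V}, z ∈ X' → F.symm z ∈ Y' := by
    intro z hz
    obtain ⟨hzX, hz1, hz2⟩ := hX'mem.mp hz
    refine hY'mem.mpr ⟨(C.Fsymm_part hF).1 hzX, ?_, ?_⟩
    · intro hc
      have := congrArg F hc
      rw [Equiv.apply_symm_apply, h12] at this
      exact hz2 this
    · intro hc
      have := congrArg F hc
      rw [Equiv.apply_symm_apply, h22] at this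
      exact hz1 this
  set B₁ := X'.filter (fun h => ¬A h y₁) with hB₁
  set B₂ := X'.filter (fun h => ¬A h y₂) with hB₂
  set B'₁ := Y'.filter (fun g => ¬A g x₁) with hB'₁
  set B'₂ := Y'.filter (fun g => ¬A g x₂) with hB'₂
  -- degenerate branches
  by_cases hne1 : (X' \ B₁).Nonempty
  swap
  · rw [Finset.not_nonempty_iff_eq_empty, Finset.sdiff_eq_empty_iff_subset] at hne1
    refine C.four_light_degen hF hNS hx₁ hx₂ hne h11 h12 h21 h22 hl1 hl2 hl3 hl4 hex ?_
    intro h hhX hh1 hh2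
    exact (Finset.mem_filter.mp (hne1 (hX'mem.mpr ⟨hhX, hh1, hh2⟩))).2
  by_cases hne2 : (X' \ B₂).Nonempty
  swap
  · rw [Finset.not_nonempty_iff_eq_empty, Finset.sdiff_eq_empty_iff_subset] at hne2
    refine C.four_light_degen hF hNS hx₂ hx₁ hne.symm h21 h22 h11 h12 hl3 hl4 hl1 hl2 hex ?_
    intro h hhX hh1 hh2
    exact (Finset.mem_filter.mp (hne2 (hX'mem.mpr ⟨hhX, hh2, hh1⟩))).2
  by_cases hne3 : (Y' \ B'₂).Nonempty
  swap
  · rw [Finset.not_nonempty_iff_eq_empty, Finset.sdiff_eq_empty_iff_subset] at hne3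
    refine C.symm.four_light_degen hF hNS hy₁Y hy₂Y hy12 h12 h21 h22 h11 hl2 hl3 hl4 hl1 hex ?_
    intro g hgY hg1 hg2
    exact (Finset.mem_filter.mp (hne3 (hY'mem.mpr ⟨hgY, hg1, hg2⟩))).2
  by_cases hne4 : (Y' \ B'₁).Nonempty
  swap
  · rw [Finset.not_nonempty_iff_eq_empty, Finset.sdiff_eq_empty_iff_subset] at hne4
    refine C.symm.four_light_degen hF hNS hy₂Y hy₁Y hy12.symm h22 h11 h12 h21 hl4 hl1 hl2 hl3 hex ?_
    intro g hgY hg1 hg2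
    exact (Finset.mem_filter.mp (hne4 (hY'mem.mpr ⟨hgY, hg2, hg1⟩))).2
  -- dominating-pair degree bounds
  obtain ⟨p₁, hp₁⟩ := hne1
  obtain ⟨p₂, hp₂⟩ := hne2
  obtain ⟨q₂, hq₂⟩ := hne3
  obtain ⟨q₁, hq₁⟩ := hne4
  have hp₁' : p₁ ∈ X' ∧ A p₁ y₁ := by
    obtain ⟨hm, hnm⟩ := Finset.mem_sdiff.mp hp₁
    refine ⟨hm, ?_⟩
    by_contra hc
    exact hnm (Finset.mem_filter.mpr ⟨hm, hc⟩)
  have hp₂' : p₂ ∈ X' ∧ A p₂ y₂ := by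
    obtain ⟨hm, hnm⟩ := Finset.mem_sdiff.mp hp₂
    refine ⟨hm, ?_⟩
    by_contra hc
    exact hnm (Finset.mem_filter.mpr ⟨hm, hc⟩)
  have hq₂' : q₂ ∈ Y' ∧ A q₂ x₂ := by
    obtain ⟨hm, hnm⟩ := Finset.mem_sdiff.mp hq₂
    refine ⟨hm, ?_⟩
    by_contra hc
    exact hnm (Finset.mem_filter.mpr ⟨hm, hc⟩)
  have hq₁' : q₁ ∈ Y' ∧ A q₁ x₁ := by
    obtain ⟨hm, hnm⟩ := Finset.mem_sdiff.mp hq₁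
    refine ⟨hm, ?_⟩
    by_contra hc
    exact hnm (Finset.mem_filter.mpr ⟨hm, hc⟩)
  have hdx₁ : a + 1 ≤ deg A x₁ :=
    C.light_dom_deg (fun hc => (hX'mem.mp hp₁'.1).2.1 hc.symm) hA11 hp₁'.2
  have hdx₂ : a + 1 ≤ deg A x₂ :=
    C.light_dom_deg (fun hc => (hX'mem.mp hp₂'.1).2.2 hc.symm) hA22 hp₂'.2
  have hdy₁ : a + 1 ≤ deg A y₁ :=
    C.light_dom_deg (fun hc => (hY'mem.mp hq₂'.1).2.1 hc.symm) hA1 hq₂'.2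
  have hdy₂ : a + 1 ≤ deg A y₂ :=
    C.light_dom_deg (fun hc => (hY'mem.mp hq₁'.1).2.2 hc.symm) hA2 hq₁'.2
  -- out-neighbourhood bounds
  have houtb : ∀ (u w : V) (Bu : Finset V), u ∈ D → F u = w →
      (∀ z ∈ Y' ∪ X', A u z → F.symm z ∈ Bu) → (∀ z, A u z → z ∈ D → z = w) →
      (outs A u).card ≤ 1 + Bu.card := by
    intro u w Bu huD hFu hstep hexc
    have hsub : outs A u ⊆ insert w (Bu.image F) := by
      intro z hz
      have hAz : A u z := (mem_outs A).mp hz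
      by_cases hzD : z ∈ D
      · rw [hexc z hAz hzD]; exact Finset.mem_insert_self _ _
      · have hzP : z ∈ Y' ∪ X' := by
          rcases C.mem_part z with hp | hp
          · refine Finset.mem_union_right _ (hX'mem.mpr ⟨hp, ?_, ?_⟩) <;>
              (intro hc; subst hc; simp [hD] at hzD)
          · refine Finset.mem_union_left _ (hY'mem.mpr ⟨hp, ?_, ?_⟩) <;>
              (intro hc; subst hc; simp [hD] at hzD)
        have := hstep z hzP hAz
        refine Finset.mem_insert_of_mem (Finset.mem_image.mpr ⟨F.symm z, this, ?_⟩)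
        exact Equiv.apply_symm_apply _ _
    calc (outs A u).card ≤ (insert w (Bu.image F)).card := Finset.card_le_card hsub
    _ ≤ 1 + (Bu.image F).card := by
        have := Finset.card_insert_le w (Bu.image F); omega
    _ = 1 + Bu.card := by rw [Finset.card_image_of_injective _ F.injective]
  have hout1 : (outs A x₁).card ≤ 1 + B₁.card := by
    refine houtb x₁ y₁ B₁ (by simp [hD]) h11 ?_ ?_
    · intro z hzP hAz
      have hzY : z ∈ Yf := C.outs_sub hx₁ ((mem_outs A).mpr hAz)
      have hzY' : z ∈ Y' := by
        rcases Finset.mem_union.mp hzP with h | h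
        · exact h
        · exact absurd ((hX'mem.mp h).1) (fun hc => C.not_both hc hzY)
      have hwX' := hFsX' hzY'
      have hnsc : ¬F.SameCycle x₁ (F.symm z) := fun hsc =>
        hX'D _ hwX' (hDc x₁ (by simp [hD]) _ hsc)
      have hArc : A x₁ (F (F.symm z)) := by rw [Equiv.apply_symm_apply]; exact hAz
      refine Finset.mem_filter.mpr ⟨hwX', fun hc => hnsc (hNS x₁ (F.symm z) hArc ?_)⟩
      rw [h11]; exact hc
    · intro z hAz hzD
      simp only [hD, Finset.mem_insert, Finset.mem_singleton] at hzD
      rcases hzD with rfl | rfl | rfl | rfl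
      · exact absurd hAz (fun hc => C.not_both hx₁ (C.arc_out hc hx₁))
      · rfl
      · exact absurd hAz (fun hc => C.not_both hx₂ (C.arc_out hc hx₁))
      · exact absurd hAz hn12
  have hout2 : (outs A x₂).card ≤ 1 + B₂.card := by
    refine houtb x₂ y₂ B₂ (by simp [hD]) h21 ?_ ?_
    · intro z hzP hAz
      have hzY : z ∈ Yf := C.outs_sub hx₂ ((mem_outs A).mpr hAz)
      have hzY' : z ∈ Y' := by
        rcases Finset.mem_union.mp hzP with h | h
        · exact h
        · exact absurd ((hX'mem.mp h).1) (fun hc => C.not_both hc hzY)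
      have hwX' := hFsX' hzY'
      have hnsc : ¬F.SameCycle x₂ (F.symm z) := fun hsc =>
        hX'D _ hwX' (hDc x₂ (by simp [hD]) _ hsc)
      have hArc : A x₂ (F (F.symm z)) := by rw [Equiv.apply_symm_apply]; exact hAz
      refine Finset.mem_filter.mpr ⟨hwX', fun hc => hnsc (hNS x₂ (F.symm z) hArc ?_)⟩
      rw [h21]; exact hc
    · intro z hAz hzD
      simp only [hD, Finset.mem_insert, Finset.mem_singleton] at hzD
      rcases hzD with rfl | rfl | rfl | rfl
      · exact absurd hAz (fun hc => C.not_both hx₁ (C.arc_out hc hx₂))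
      · exact absurd hAz hn21
      · exact absurd hAz (fun hc => C.not_both hx₂ (C.arc_out hc hx₂))
      · rfl
  have houty₁ : (outs A y₁).card ≤ 1 + B'₂.card := by
    refine houtb y₁ x₂ B'₂ (by simp [hD]) h12 ?_ ?_
    · intro z hzP hAz
      have hzX : z ∈ Xf := C.symm.outs_sub hy₁Y ((mem_outs A).mpr hAz)
      have hzX' : z ∈ X' := by
        rcases Finset.mem_union.mp hzP with h | h
        · exact absurd ((hY'mem.mp h).1) (fun hc => C.not_both hzX hc)
        · exact h
      have hwY' := hFsY' hzX'
      have hnsc : ¬F.SameCycle y₁ (F.symm z) := fun hsc =>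
        hY'D _ hwY' (hDc y₁ (by simp [hD]) _ hsc)
      have hArc : A y₁ (F (F.symm z)) := by rw [Equiv.apply_symm_apply]; exact hAz
      refine Finset.mem_filter.mpr ⟨hwY', fun hc => hnsc (hNS y₁ (F.symm z) hArc ?_)⟩
      rw [h12]; exact hc
    · intro z hAz hzD
      simp only [hD, Finset.mem_insert, Finset.mem_singleton] at hzD
      rcases hzD with rfl | rfl | rfl | rfl
      · exact absurd hAz hn11
      · exact absurd hAz (fun hc => C.not_both (C.symm.arc_out hc hy₁Y) hy₁Y)
      · rfl
      · exact absurd hAz (fun hc => C.not_both (C.symm.arc_out hc hy₁Y) hy₂Y)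
  have houty₂ : (outs A y₂).card ≤ 1 + B'₁.card := by
    refine houtb y₂ x₁ B'₁ (by simp [hD]) h22 ?_ ?_
    · intro z hzP hAz
      have hzX : z ∈ Xf := C.symm.outs_sub hy₂Y ((mem_outs A).mpr hAz)
      have hzX' : z ∈ X' := by
        rcases Finset.mem_union.mp hzP with h | h
        · exact absurd ((hY'mem.mp h).1) (fun hc => C.not_both hzX hc)
        · exact h
      have hwY' := hFsY' hzX'
      have hnsc : ¬F.SameCycle y₂ (F.symm z) := fun hsc =>
        hY'D _ hwY' (hDc y₂ (by simp [hD]) _ hsc)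
      have hArc : A y₂ (F (F.symm z)) := by rw [Equiv.apply_symm_apply]; exact hAz
      refine Finset.mem_filter.mpr ⟨hwY', fun hc => hnsc (hNS y₂ (F.symm z) hArc ?_)⟩
      rw [h22]; exact hc
    · intro z hAz hzD
      simp only [hD, Finset.mem_insert, Finset.mem_singleton] at hzD
      rcases hzD with rfl | rfl | rfl | rfl
      · rfl
      · exact absurd hAz (fun hc => C.not_both (C.symm.arc_out hc hy₂Y) hy₁Y)
      · exact absurd hAz hn22
      · exact absurd hAz (fun hc => C.not_both (C.symm.arc_out hc hy₂Y) hy₂Y)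
  -- in-neighbourhood bounds
  have hin1 : (ins A x₁).card ≤ 1 + (Y'.card - B'₁.card) := by
    have hsub : ins A x₁ ⊆ insert y₂ (Y' \ B'₁) := by
      intro z hz
      have hzY : z ∈ Yf := C.ins_sub hx₁ hz
      have hAz : A z x₁ := (mem_ins A).mp hz
      by_cases hz2 : z = y₂
      · rw [hz2]; exact Finset.mem_insert_self _ _
      by_cases hz1 : z = y₁
      · exact absurd (hz1 ▸ hAz) hn11
      refine Finset.mem_insert_of_mem (Finset.mem_sdiff.mpr ⟨hY'mem.mpr ⟨hzY, hz1, hz2⟩, ?_⟩)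
      intro hc
      exact (Finset.mem_filter.mp hc).2 hAz
    calc (ins A x₁).card ≤ (insert y₂ (Y' \ B'₁)).card := Finset.card_le_card hsub
    _ ≤ 1 + (Y' \ B'₁).card := by have := Finset.card_insert_le y₂ (Y' \ B'₁); omega
    _ = 1 + (Y'.card - B'₁.card) := by rw [Finset.card_sdiff_of_subset (Finset.filter_subset _ _)]
  have hin2 : (ins A x₂).card ≤ 1 + (Y'.card - B'₂.card) := by
    have hsub : ins A x₂ ⊆ insert y₁ (Y' \ B'₂) := by
      intro z hz
      have hzY : z ∈ Yf := C.ins_sub hx₂ hz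
      have hAz : A z x₂ := (mem_ins A).mp hz
      by_cases hz1 : z = y₁
      · rw [hz1]; exact Finset.mem_insert_self _ _
      by_cases hz2 : z = y₂
      · exact absurd (hz2 ▸ hAz) hn22
      refine Finset.mem_insert_of_mem (Finset.mem_sdiff.mpr ⟨hY'mem.mpr ⟨hzY, hz1, hz2⟩, ?_⟩)
      intro hc
      exact (Finset.mem_filter.mp hc).2 hAz
    calc (ins A x₂).card ≤ (insert y₁ (Y' \ B'₂)).card := Finset.card_le_card hsub
    _ ≤ 1 + (Y' \ B'₂).card := by have := Finset.card_insert_le y₁ (Y' \ B'₂); omega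
    _ = 1 + (Y'.card - B'₂.card) := by rw [Finset.card_sdiff_of_subset (Finset.filter_subset _ _)]
  have hiny₁ : (ins A y₁).card ≤ 1 + (X'.card - B₁.card) := by
    have hsub : ins A y₁ ⊆ insert x₁ (X' \ B₁) := by
      intro z hz
      have hzX : z ∈ Xf := C.symm.ins_sub hy₁Y hz
      have hAz : A z y₁ := (mem_ins A).mp hz
      by_cases hz1 : z = x₁
      · rw [hz1]; exact Finset.mem_insert_self _ _
      by_cases hz2 : z = x₂
      · exact absurd (hz2 ▸ hAz) hn21
      refine Finset.mem_insert_of_mem (Finset.mem_sdiff.mpr ⟨hX'mem.mpr ⟨hzX, hz1, hz2⟩, ?_⟩)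
      intro hc
      exact (Finset.mem_filter.mp hc).2 hAz
    calc (ins A y₁).card ≤ (insert x₁ (X' \ B₁)).card := Finset.card_le_card hsub
    _ ≤ 1 + (X' \ B₁).card := by have := Finset.card_insert_le x₁ (X' \ B₁); omega
    _ = 1 + (X'.card - B₁.card) := by rw [Finset.card_sdiff_of_subset (Finset.filter_subset _ _)]
  have hiny₂ : (ins A y₂).card ≤ 1 + (X'.card - B₂.card) := by
    have hsub : ins A y₂ ⊆ insert x₂ (X' \ B₂) := by
      intro z hz
      have hzX : z ∈ Xf := C.symm.ins_sub hy₂Y hz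
      have hAz : A z y₂ := (mem_ins A).mp hz
      by_cases hz2 : z = x₂
      · rw [hz2]; exact Finset.mem_insert_self _ _
      by_cases hz1 : z = x₁
      · exact absurd (hz1 ▸ hAz) hn12
      refine Finset.mem_insert_of_mem (Finset.mem_sdiff.mpr ⟨hX'mem.mpr ⟨hzX, hz1, hz2⟩, ?_⟩)
      intro hc
      exact (Finset.mem_filter.mp hc).2 hAz
    calc (ins A y₂).card ≤ (insert x₂ (X' \ B₂)).card := Finset.card_le_card hsub
    _ ≤ 1 + (X' \ B₂).card := by have := Finset.card_insert_le x₂ (X' \ B₂); omega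
    _ = 1 + (X'.card - B₂.card) := by rw [Finset.card_sdiff_of_subset (Finset.filter_subset _ _)]
  -- final counting
  have e1 := deg_eq A x₁
  have e2 := deg_eq A x₂
  have e3 := deg_eq A y₁
  have e4 := deg_eq A y₂
  have b1 : B₁.card ≤ X'.card := Finset.card_le_card (Finset.filter_subset _ _)
  have b2 : B₂.card ≤ X'.card := Finset.card_le_card (Finset.filter_subset _ _)
  have b3 : B'₁.card ≤ Y'.card := Finset.card_le_card (Finset.filter_subset _ _)
  have b4 : B'₂.card ≤ Y'.card := Finset.card_le_card (Finset.filter_subset _ _)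
  omega

lemma four_heavy (C : Ctx A X Y a Xf Yf) (hF : ∀ v, A v (F v))
    (hNS : ∀ u u' : V, A u (F u') → A u' (F u) → F.SameCycle u u')
    {x₁ y₁ x₂ y₂ : V} (hx₁ : x₁ ∈ Xf) (hx₂ : x₂ ∈ Xf) (hne : x₁ ≠ x₂)
    (h11 : F x₁ = y₁) (h12 : F y₁ = x₂) (h21 : F x₂ = y₂) (h22 : F y₂ = x₁)
    (hh : 2 * a - 1 ≤ deg A x₁)
    (hex : ∃ u : V, 2 * a - 1 ≤ deg A u) : False := by
  classical
  have ha := C.ha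
  have hy₁Y : y₁ ∈ Yf := h11 ▸ (C.F_part hF).1 hx₁
  have hy₂Y : y₂ ∈ Yf := h21 ▸ (C.F_part hF).1 hx₂
  have hy12 : y₁ ≠ y₂ := by
    intro hc
    exact hne (F.injective (h11.trans (hc.trans h21.symm)))
  have hA11 : A x₁ y₁ := h11 ▸ hF x₁
  have hA1 : A y₁ x₂ := h12 ▸ hF y₁
  have hA22 : A x₂ y₂ := h21 ▸ hF x₂
  have hA2 : A y₂ x₁ := h22 ▸ hF y₂
  set D : Finset V := {x₁, y₁, x₂, y₂} with hD
  have hDc : ∀ u ∈ D, ∀ w, F.SameCycle u w → w ∈ D := by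
    intro u hu w hw
    refine sc_closed F D ?_ hu hw
    intro z hz
    simp only [hD, Finset.mem_insert, Finset.mem_singleton] at hz ⊢
    rcases hz with rfl | rfl | rfl | rfl <;> simp [h11, h12, h21, h22]
  set X' := Xf \ {x₁, x₂} with hX'
  have hX'mem : ∀ {h : V}, h ∈ X' ↔ h ∈ Xf ∧ h ≠ x₁ ∧ h ≠ x₂ := by
    intro h
    simp only [hX', Finset.mem_sdiff, Finset.mem_insert, Finset.mem_singleton]
    tauto
  have hX'card : X'.card = a - 2 := by
    rw [hX', Finset.card_sdiff_of_subset, C.cardX]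
    · congr 1
      rw [Finset.card_insert_of_notMem (by simpa), Finset.card_singleton]
    · intro z hz
      rcases Finset.mem_insert.mp hz with rfl | hz
      · exact hx₁
      · rw [Finset.mem_singleton.mp hz]; exact hx₂
  have hX'D : ∀ h ∈ X', h ∉ D := by
    intro h hmem hmemD
    obtain ⟨hhX, hh1, hh2⟩ := hX'mem.mp hmem
    simp only [hD, Finset.mem_insert, Finset.mem_singleton] at hmemD
    rcases hmemD with rfl | rfl | rfl | rfl
    · exact hh1 rfl
    · exact C.not_both hhX hy₁Y
    · exact hh2 rfl
    · exact C.not_both hhX hy₂Y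
  have hFsYnotD : ∀ {h : V}, h ∈ X' → (F.symm h ∈ Yf ∧ F.symm h ≠ y₁ ∧ F.symm h ≠ y₂) := by
    intro h hmem
    obtain ⟨hhX, hh1, hh2⟩ := hX'mem.mp hmem
    refine ⟨(C.Fsymm_part hF).1 hhX, ?_, ?_⟩
    · intro hc
      have := congrArg F hc
      rw [Equiv.apply_symm_apply, h12] at this
      exact hh2 this
    · intro hc
      have := congrArg F hc
      rw [Equiv.apply_symm_apply, h22] at this
      exact hh1 this
  have hFsnotD : ∀ {h : V}, h ∈ X' → F.symm h ∉ D := by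
    intro h hmem hmemD
    obtain ⟨hgY, hg1, hg2⟩ := hFsYnotD hmem
    simp only [hD, Finset.mem_insert, Finset.mem_singleton] at hmemD
    rcases hmemD with hc | hc | hc | hc
    · exact C.not_both (hc ▸ hx₁) hgY
    · exact hg1 hc
    · exact C.not_both (hc ▸ hx₂) hgY
    · exact hg2 hc
  -- y₂ is light
  have hy₂l : deg A y₂ < 2 * a - 1 := by
    by_contra h'
    push_neg at h'
    have key : ∀ w ∈ ins A x₁, w ≠ y₁ → w ≠ y₂ → ¬A y₂ (F w) := by
      intro w hw hw1 hw2 hAc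
      have hwY : w ∈ Yf := C.ins_sub hx₁ hw
      have hwD : w ∉ D := by
        intro hmemD
        simp only [hD, Finset.mem_insert, Finset.mem_singleton] at hmemD
        rcases hmemD with rfl | rfl | rfl | rfl
        · exact C.not_both hx₁ hwY
        · exact hw1 rfl
        · exact C.not_both hx₂ hwY
        · exact hw2 rfl
      have hsc := hNS y₂ w hAc (h22 ▸ (mem_ins A).mp hw)
      exact hwD (hDc y₂ (by simp [hD]) w hsc)
    have hone : ((ins A x₁) \ {y₁, y₂}).card ≤ 1 := by
      apply Finset.card_le_one.mpr
      intro w₁ hm₁ w₂ hm₂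
      obtain ⟨hw₁, hn₁⟩ := Finset.mem_sdiff.mp hm₁
      obtain ⟨hw₂, hn₂⟩ := Finset.mem_sdiff.mp hm₂
      simp only [Finset.mem_insert, Finset.mem_singleton, not_or] at hn₁ hn₂
      have k₁ := key w₁ hw₁ hn₁.1 hn₁.2
      have k₂ := key w₂ hw₂ hn₂.1 hn₂.2
      have hX₁ : F w₁ ∈ Xf := (C.F_part hF).2 (C.ins_sub hx₁ hw₁)
      have hX₂ : F w₂ ∈ Xf := (C.F_part hF).2 (C.ins_sub hx₁ hw₂)
      exact F.injective (C.symm.heavy_no_two_out hy₂Y h' hX₁ hX₂ k₁ k₂)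
    have h4 := Finset.card_inter_add_card_sdiff (ins A x₁) ({y₁, y₂} : Finset V)
    have h5 : ((ins A x₁) ∩ {y₁, y₂}).card ≤ 2 := by
      calc _ ≤ ({y₁, y₂} : Finset V).card := Finset.card_le_card Finset.inter_subset_right
      _ ≤ 2 := by
          rw [Finset.card_insert_of_notMem (by simpa), Finset.card_singleton]
    have h6 := C.heavy_in_card hx₁ hh
    omega
  -- y₁ is light
  have hy₁l : deg A y₁ < 2 * a - 1 := by
    have key : ∀ w ∈ ins A y₁, w ≠ x₁ → w ≠ x₂ → ¬A x₁ (F w) := by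
      intro w hw hw1 hw2 hAc
      have hwX : w ∈ Xf := C.symm.ins_sub hy₁Y hw
      have hwD : w ∉ D := hX'D w (hX'mem.mpr ⟨hwX, hw1, hw2⟩)
      have hsc := hNS x₁ w hAc (h11 ▸ (mem_ins A).mp hw)
      exact hwD (hDc x₁ (by simp [hD]) w hsc)
    have hone : ((ins A y₁) \ {x₁, x₂}).card ≤ 1 := by
      apply Finset.card_le_one.mpr
      intro w₁ hm₁ w₂ hm₂
      obtain ⟨hw₁, hn₁⟩ := Finset.mem_sdiff.mp hm₁
      obtain ⟨hw₂, hn₂⟩ := Finset.mem_sdiff.mp hm₂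
      simp only [Finset.mem_insert, Finset.mem_singleton, not_or] at hn₁ hn₂
      have k₁ := key w₁ hw₁ hn₁.1 hn₁.2
      have k₂ := key w₂ hw₂ hn₂.1 hn₂.2
      have hY₁ : F w₁ ∈ Yf := (C.F_part hF).1 (C.symm.ins_sub hy₁Y hw₁)
      have hY₂ : F w₂ ∈ Yf := (C.F_part hF).1 (C.symm.ins_sub hy₁Y hw₂)
      exact F.injective (C.heavy_no_two_out hx₁ hh hY₁ hY₂ k₁ k₂)
    have h4 := Finset.card_inter_add_card_sdiff (ins A y₁) ({x₁, x₂} : Finset V)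
    have h5 : ((ins A y₁) ∩ {x₁, x₂}).card ≤ 2 := by
      calc _ ≤ ({x₁, x₂} : Finset V).card := Finset.card_le_card Finset.inter_subset_right
      _ ≤ 2 := by
          rw [Finset.card_insert_of_notMem (by simpa), Finset.card_singleton]
    have h6 : (outs A y₁).card ≤ a := by
      calc _ ≤ Xf.card := Finset.card_le_card (C.symm.outs_sub hy₁Y)
      _ = a := C.cardX
    have h7 := deg_eq A y₁
    omega
  have hn11 : ¬A y₁ x₁ := fun hc => C.lights_no_common hy12 hc hA2 hy₁l hy₂l
  have hn22 : ¬A y₂ x₂ := fun hc => C.lights_no_common hy12.symm hc hA1 hy₂l hy₁l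
  -- the heavy vertices of X' split into B (missing y₁) and Bc (pointing at y₁)
  set B := X'.filter (fun h => 2 * a - 1 ≤ deg A h ∧ ¬A h y₁) with hB
  set Bc := X'.filter (fun h => 2 * a - 1 ≤ deg A h ∧ A h y₁) with hBc
  have hBmiss : ∀ h ∈ B, ¬A (F.symm h) x₁ := by
    intro h hm
    obtain ⟨hmX, hmh, hmn⟩ := Finset.mem_filter.mp hm
    have hinsall : ∀ z ∈ Yf, A z h :=
      fun z hz => C.heavy_out_in (hX'mem.mp hmX).1 hmh hy₁Y hz hmn
    intro hAc
    have h1 : A y₂ (F (F.symm h)) := by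
      rw [Equiv.apply_symm_apply]
      exact hinsall y₂ hy₂Y
    have h2 : A (F.symm h) (F y₂) := h22 ▸ hAc
    have hsc := hNS y₂ (F.symm h) h1 h2
    exact (hFsnotD hmX) (hDc y₂ (by simp [hD]) _ hsc)
  have hBcmiss : ∀ h ∈ Bc, ¬A x₁ (F h) := by
    intro h hm hAc
    obtain ⟨hmX, hmh, hmy⟩ := Finset.mem_filter.mp hm
    have hsc := hNS x₁ h hAc (h11 ▸ hmy)
    exact (hX'D h hmX) (hDc x₁ (by simp [hD]) h hsc)
  have hBcard : B.card ≤ 1 := by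
    apply Finset.card_le_one.mpr
    intro h₁ hm₁ h₂ hm₂
    have hY₁ := (hFsYnotD (Finset.mem_filter.mp hm₁).1).1
    have hY₂ := (hFsYnotD (Finset.mem_filter.mp hm₂).1).1
    have := C.heavy_no_two_in hx₁ hh hY₁ hY₂ (hBmiss h₁ hm₁) (hBmiss h₂ hm₂)
    exact F.symm.injective this
  have hBccard : Bc.card ≤ 1 := by
    apply Finset.card_le_one.mpr
    intro h₁ hm₁ h₂ hm₂
    have hY₁ : F h₁ ∈ Yf := (C.F_part hF).1 (hX'mem.mp (Finset.mem_filter.mp hm₁).1).1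
    have hY₂ : F h₂ ∈ Yf := (C.F_part hF).1 (hX'mem.mp (Finset.mem_filter.mp hm₂).1).1
    exact F.injective (C.heavy_no_two_out hx₁ hh hY₁ hY₂ (hBcmiss h₁ hm₁) (hBcmiss h₂ hm₂))
  have hXl : (X'.filter (fun v => deg A v < 2 * a - 1)).card ≤ 2 := by
    have hsub : X'.filter (fun v => deg A v < 2 * a - 1) ⊆
        Xf.filter (fun v => deg A v < 2 * a - 1) := by
      intro z hz
      obtain ⟨hz1, hz2⟩ := Finset.mem_filter.mp hz
      exact Finset.mem_filter.mpr ⟨(hX'mem.mp hz1).1, hz2⟩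
    exact le_trans (Finset.card_le_card hsub) (C.lights_X_card hex)
  have hsplit : X'.card ≤ B.card + Bc.card +
      (X'.filter (fun v => deg A v < 2 * a - 1)).card := by
    have hpart := Finset.card_filter_add_card_filter_not
      (s := X') (p := fun v => 2 * a - 1 ≤ deg A v)
    have hheavysub : X'.filter (fun v => 2 * a - 1 ≤ deg A v) ⊆ B ∪ Bc := by
      intro z hz
      obtain ⟨hz1, hz2⟩ := Finset.mem_filter.mp hz
      by_cases hAz : A z y₁
      · exact Finset.mem_union_right _ (Finset.mem_filter.mpr ⟨hz1, hz2, hAz⟩)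
      · exact Finset.mem_union_left _ (Finset.mem_filter.mpr ⟨hz1, hz2, hAz⟩)
    have h1 := Finset.card_le_card hheavysub
    have h2 := Finset.card_union_le B Bc
    have h3 : X'.filter (fun v => ¬(2 * a - 1 ≤ deg A v)) =
        X'.filter (fun v => deg A v < 2 * a - 1) := by
      apply Finset.filter_congr
      intro z _
      simp only [not_le, iff_self]
    rw [h3] at hpart
    omega
  -- x₂ is heavy (established in either branch below, where X'.card ≤ 3)
  have hx₂heavy : B.card + Bc.card ≤ 1 → 2 * a - 1 ≤ deg A x₂ := by
    intro hBB
    by_contra hx₂l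
    push_neg at hx₂l
    have h2 : 2 ≤ (X'.filter (fun v => deg A v < 2 * a - 1)).card := by omega
    have hsub : insert x₂ (X'.filter (fun v => deg A v < 2 * a - 1)) ⊆
        Xf.filter (fun v => deg A v < 2 * a - 1) := by
      intro z hz
      rcases Finset.mem_insert.mp hz with rfl | hz
      · exact Finset.mem_filter.mpr ⟨hx₂, hx₂l⟩
      · obtain ⟨hz1, hz2⟩ := Finset.mem_filter.mp hz
        exact Finset.mem_filter.mpr ⟨(hX'mem.mp hz1).1, hz2⟩
    have hnotmem : x₂ ∉ X'.filter (fun v => deg A v < 2 * a - 1) := by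
      intro hc
      exact (hX'mem.mp (Finset.mem_filter.mp hc).1).2.2 rfl
    have h4 := Finset.card_le_card hsub
    rw [Finset.card_insert_of_notMem hnotmem] at h4
    have h5 := C.lights_X_card hex
    omega
  by_cases hBne : B.Nonempty
  · -- B nonempty: x₁ has an in-miss, so its out-neighbourhood is all of Yf
    obtain ⟨h₀, hh₀⟩ := hBne
    have hmiss := hBmiss h₀ hh₀
    have hg₁Y := (hFsYnotD (Finset.mem_filter.mp hh₀).1).1
    have houtall : ∀ z ∈ Yf, A x₁ z := fun z hz =>
      C.heavy_in_out hx₁ hh hg₁Y hz hmiss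
    have hBcempty : Bc.card = 0 := by
      rw [Finset.card_eq_zero]
      by_contra hc
      obtain ⟨h, hm⟩ := Finset.nonempty_of_ne_empty hc
      exact hBcmiss h hm (houtall _ ((C.F_part hF).1 (hX'mem.mp (Finset.mem_filter.mp hm).1).1))
    have hx₂h := hx₂heavy (by omega)
    -- the predecessor g₁ of h₀ does not point at x₂ either
    obtain ⟨hg₁Y', hg₁1, hg₁2⟩ := hFsYnotD (Finset.mem_filter.mp hh₀).1
    have hinsall : ∀ z ∈ Yf, A z h₀ := by
      obtain ⟨hmX, hmh, hmn⟩ := Finset.mem_filter.mp hh₀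
      exact fun z hz => C.heavy_out_in (hX'mem.mp hmX).1 hmh hy₁Y hz hmn
    have hg₁x₂ : ¬A (F.symm h₀) x₂ := by
      intro hAc
      have h1 : A y₁ (F (F.symm h₀)) := by
        rw [Equiv.apply_symm_apply]
        exact hinsall y₁ hy₁Y
      have h2 : A (F.symm h₀) (F y₁) := h12 ▸ hAc
      have hsc := hNS y₁ (F.symm h₀) h1 h2
      exact (hFsnotD (Finset.mem_filter.mp hh₀).1) (hDc y₁ (by simp [hD]) _ hsc)
    have hinx₂ : ins A x₂ ⊆ (Yf.erase y₂).erase (F.symm h₀) := by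
      intro z hz
      have hzY : z ∈ Yf := C.ins_sub hx₂ hz
      have hAz : A z x₂ := (mem_ins A).mp hz
      refine Finset.mem_erase.mpr ⟨fun hc => hg₁x₂ (hc ▸ hAz), Finset.mem_erase.mpr
        ⟨fun hc => hn22 (hc ▸ hAz), hzY⟩⟩
    have hc1 : (ins A x₂).card ≤ a - 2 := by
      have h4 := Finset.card_le_card hinx₂
      have h5 : ((Yf.erase y₂).erase (F.symm h₀)).card = a - 2 := by
        rw [Finset.card_erase_of_mem (Finset.mem_erase.mpr ⟨hg₁2, hg₁Y'⟩),
          Finset.card_erase_of_mem hy₂Y, C.cardY]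
        omega
      omega
    have := C.heavy_in_card hx₂ hx₂h
    omega
  · -- B empty
    rw [Finset.not_nonempty_iff_eq_empty] at hBne
    have hBc1 : Bc.card = 1 := by
      have : B.card = 0 := by rw [hBne]; exact Finset.card_empty
      omega
    obtain ⟨h, hhmem⟩ := Finset.card_eq_one.mp hBc1
    have hm : h ∈ Bc := by rw [hhmem]; exact Finset.mem_singleton_self h
    obtain ⟨hmX, hmh, hmy⟩ := Finset.mem_filter.mp hm
    have hmiss := hBcmiss h hm
    have hFhY : F h ∈ Yf := (C.F_part hF).1 (hX'mem.mp hmX).1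
    have hinall : ∀ z ∈ Yf, A z x₁ := fun z hz =>
      C.heavy_out_in hx₁ hh hFhY hz hmiss
    have hx₂h := hx₂heavy (by rw [hBne]; simp only [Finset.card_empty]; omega)
    by_cases hhy₂arc : A h y₂
    · have h1 : A h (F x₂) := h21 ▸ hhy₂arc
      have h2 : ¬A x₂ (F h) := by
        intro hAc
        have hsc := hNS x₂ h hAc h1
        exact (hX'D h hmX) (hDc x₂ (by simp [hD]) h hsc)
      exact hn22 (C.heavy_out_in hx₂ hx₂h hFhY hy₂Y h2)
    · have hinsallh : ∀ z ∈ Yf, A z h := fun z hz =>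
        C.heavy_out_in (hX'mem.mp hmX).1 hmh hy₂Y hz hhy₂arc
      have h1 : A y₂ (F (F.symm h)) := by
        rw [Equiv.apply_symm_apply]
        exact hinsallh y₂ hy₂Y
      have h2 : A (F.symm h) (F y₂) := by
        rw [h22]
        exact hinall _ (hFsYnotD hmX).1
      have hsc := hNS y₂ (F.symm h) h1 h2
      exact (hFsnotD hmX) (hDc y₂ (by simp [hD]) _ hsc)

lemma main_contra (C : Ctx A X Y a Xf Yf) (hF : ∀ v, A v (F v))
    (hNS : ∀ u u' : V, A u (F u') → A u' (F u) → F.SameCycle u u')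
    (u₀ v₀ : V) (hns : ¬F.SameCycle u₀ v₀)
    (hex : ∃ u : V, 2 * a - 1 ≤ deg A u)
    {v₁ : V} (hv₁X : v₁ ∈ Xf) (hv₁h : 2 * a - 1 ≤ deg A v₁)
    (hFv₁h : 2 * a - 1 ≤ deg A (F v₁)) : False := by
  classical
  set C₀ := cyc F v₁ with hC₀
  have hmemC₀ : ∀ {w : V}, w ∈ C₀ ↔ F.SameCycle v₁ w := fun {w} => mem_cyc
  have hFin : ∀ {w : V}, w ∈ C₀ → F w ∈ C₀ := fun {w} hw =>
    hmemC₀.mpr (sc_next F (hmemC₀.mp hw))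
  have hFout : ∀ {w : V}, w ∉ C₀ → F w ∉ C₀ := by
    intro w hw hFw
    exact hw (hmemC₀.mpr (by simpa using sc_prev F (hmemC₀.mp hFw)))
  have hFv₁Y : F v₁ ∈ Yf := (C.F_part hF).1 hv₁X
  set Sx := Xf \ C₀ with hSx
  set Sy := Yf \ C₀ with hSy
  -- |Sx| ≤ 2
  have hinsub : ins A (F v₁) ⊆ Xf := C.symm.ins_sub hFv₁Y
  have hincard : a - 1 ≤ (ins A (F v₁)).card := C.symm.heavy_in_card hFv₁Y hFv₁h
  have hK : ∀ w₁ ∈ Sx ∩ ins A (F v₁), ∀ w₂ ∈ Sx ∩ ins A (F v₁), w₁ = w₂ := by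
    intro w₁ hw₁ w₂ hw₂
    obtain ⟨hw₁s, hw₁i⟩ := Finset.mem_inter.mp hw₁
    obtain ⟨hw₂s, hw₂i⟩ := Finset.mem_inter.mp hw₂
    have key : ∀ w, w ∈ Sx → w ∈ ins A (F v₁) → ¬A v₁ (F w) := by
      intro w hws hwi hA
      have hsc := hNS v₁ w hA ((mem_ins A).mp hwi)
      exact (Finset.mem_sdiff.mp hws).2 (hmemC₀.mpr hsc)
    have h1 := key w₁ hw₁s hw₁i
    have h2 := key w₂ hw₂s hw₂i
    have hw₁X : w₁ ∈ Xf := hinsub hw₁i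
    have hw₂X : w₂ ∈ Xf := hinsub hw₂i
    have := C.heavy_no_two_out hv₁X hv₁h ((C.F_part hF).1 hw₁X) ((C.F_part hF).1 hw₂X) h1 h2
    exact F.injective this
  have hSxcard : Sx.card ≤ 2 := by
    have h1 : (Sx ∩ ins A (F v₁)).card ≤ 1 := Finset.card_le_one.mpr hK
    have h2 : (Sx \ ins A (F v₁)).card ≤ (Xf \ ins A (F v₁)).card := by
      apply Finset.card_le_card
      intro w hw
      obtain ⟨hw1, hw2⟩ := Finset.mem_sdiff.mp hw
      exact Finset.mem_sdiff.mpr ⟨(Finset.mem_sdiff.mp hw1).1, hw2⟩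
    have h3 : (Xf \ ins A (F v₁)).card ≤ 1 := by
      rw [Finset.card_sdiff_of_subset hinsub, C.cardX]
      omega
    have h4 := Finset.card_inter_add_card_sdiff Sx (ins A (F v₁))
    omega
  -- Sx nonempty
  have hSxne : Sx.Nonempty := by
    have hout : ∃ w : V, w ∉ C₀ := by
      by_cases h : u₀ ∈ C₀
      · refine ⟨v₀, fun hc => hns ?_⟩
        exact (hmemC₀.mp h).symm.trans (hmemC₀.mp hc)
      · exact ⟨u₀, h⟩
    obtain ⟨w, hw⟩ := hout
    rcases C.mem_part w with hwX | hwY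
    · exact ⟨w, Finset.mem_sdiff.mpr ⟨hwX, hw⟩⟩
    · exact ⟨F w, Finset.mem_sdiff.mpr ⟨(C.F_part hF).2 hwY, hFout hw⟩⟩
  -- |Sy| = |Sx|
  have hbal := C.cycle_balance hF v₁
  have hXinter : Xf ∩ C₀ = C₀.filter (· ∈ Xf) := by
    ext w; simp only [Finset.mem_inter, Finset.mem_filter]; tauto
  have hYinter : Yf ∩ C₀ = C₀.filter (· ∈ Yf) := by
    ext w; simp only [Finset.mem_inter, Finset.mem_filter]; tauto
  have hSycard : Sy.card = Sx.card := by
    have h1 := Finset.card_inter_add_card_sdiff Xf C₀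
    have h2 := Finset.card_inter_add_card_sdiff Yf C₀
    rw [hXinter, ← hSx] at h1
    rw [hYinter, ← hSy] at h2
    rw [← hC₀] at hbal
    rw [C.cardX] at h1
    rw [C.cardY] at h2
    omega
  -- case split on |Sx|
  have hmemSx : ∀ {w : V}, w ∈ Sx ↔ w ∈ Xf ∧ w ∉ C₀ := fun {w} => Finset.mem_sdiff
  have hmemSy : ∀ {w : V}, w ∈ Sy ↔ w ∈ Yf ∧ w ∉ C₀ := fun {w} => Finset.mem_sdiff
  have hcard12 : Sx.card = 1 ∨ Sx.card = 2 := by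
    have := hSxne.card_pos
    omega
  rcases hcard12 with h | h
  · -- one 2-cycle
    obtain ⟨x', hx'⟩ := Finset.card_eq_one.mp h
    have hx'mem : x' ∈ Sx := by rw [hx']; exact Finset.mem_singleton_self x'
    obtain ⟨hx'X, hx'nc⟩ := hmemSx.mp hx'mem
    set y' := F x' with hy'
    have hy'mem : y' ∈ Sy := hmemSy.mpr ⟨(C.F_part hF).1 hx'X, hFout hx'nc⟩
    have hy'eq : Sy = {y'} := by
      apply Finset.eq_of_subset_of_card_le
      · intro z hz; rw [Finset.mem_singleton]
        have : Sy.card = 1 := by omega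
        obtain ⟨w, hw⟩ := Finset.card_eq_one.mp this
        rw [hw] at hz hy'mem
        rw [Finset.mem_singleton] at hz hy'mem
        rw [hz, hy'mem]
      · simp only [Finset.card_singleton]
        omega
    have hFy' : F y' = x' := by
      have h1 : F y' ∈ Sx := hmemSx.mpr ⟨(C.F_part hF).2 (hmemSy.mp hy'mem).1, hFout (hmemSy.mp hy'mem).2⟩
      rw [hx'] at h1
      exact Finset.mem_singleton.mp h1
    by_cases hhx : 2 * a - 1 ≤ deg A x'
    · exact C.twocycle_heavy hF hNS hx'X hy'.symm hFy' hhx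
    by_cases hhy : 2 * a - 1 ≤ deg A y'
    · exact C.symm.twocycle_heavy hF hNS (hmemSy.mp hy'mem).1 hFy' hy'.symm hhy
    · apply C.twocycle_light hF hNS hx'X hy'.symm hFy' (by omega) (by omega) hex
      intro w z hw1 hw2 hz1 hz2
      have hmem : ∀ u : V, u ≠ x' → u ≠ y' → u ∈ C₀ := by
        intro u hu1 hu2
        by_contra hc
        rcases C.mem_part u with hu | hu
        · have : u ∈ Sx := hmemSx.mpr ⟨hu, hc⟩
          rw [hx'] at this
          exact hu1 (Finset.mem_singleton.mp this)
        · have : u ∈ Sy := hmemSy.mpr ⟨hu, hc⟩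
          rw [hy'eq] at this
          exact hu2 (Finset.mem_singleton.mp this)
      exact (hmemC₀.mp (hmem w hw1 hw2)).symm.trans (hmemC₀.mp (hmem z hz1 hz2))
  · -- two X-vertices outside
    obtain ⟨x₁, x₂, hx12, hx'⟩ := Finset.card_eq_two.mp h
    have hx₁mem : x₁ ∈ Sx := by rw [hx']; simp
    have hx₂mem : x₂ ∈ Sx := by rw [hx']; simp
    obtain ⟨hx₁X, hx₁nc⟩ := hmemSx.mp hx₁mem
    obtain ⟨hx₂X, hx₂nc⟩ := hmemSx.mp hx₂mem
    set y₁ := F x₁ with hy₁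
    set y₂ := F x₂ with hy₂
    have hy₁mem : y₁ ∈ Sy := hmemSy.mpr ⟨(C.F_part hF).1 hx₁X, hFout hx₁nc⟩
    have hy₂mem : y₂ ∈ Sy := hmemSy.mpr ⟨(C.F_part hF).1 hx₂X, hFout hx₂nc⟩
    have hy12 : y₁ ≠ y₂ := fun hc => hx12 (F.injective hc)
    have hy'eq : Sy = {y₁, y₂} := by
      symm
      apply Finset.eq_of_subset_of_card_le
      · intro z hz
        rcases Finset.mem_insert.mp hz with rfl | hz
        · exact hy₁mem
        · rw [Finset.mem_singleton] at hz; rw [hz]; exact hy₂mem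
      · rw [Finset.card_insert_of_notMem (by simpa), Finset.card_singleton]; omega
    have hFy₁Sx : F y₁ ∈ Sx := hmemSx.mpr ⟨(C.F_part hF).2 (hmemSy.mp hy₁mem).1, hFout (hmemSy.mp hy₁mem).2⟩
    have hFy₂Sx : F y₂ ∈ Sx := hmemSx.mpr ⟨(C.F_part hF).2 (hmemSy.mp hy₂mem).1, hFout (hmemSy.mp hy₂mem).2⟩
    rw [hx'] at hFy₁Sx hFy₂Sx
    rcases Finset.mem_insert.mp hFy₁Sx with hFy₁ | hFy₁'
    · -- two 2-cycles
      have hFy₂ : F y₂ = x₂ := by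
        rcases Finset.mem_insert.mp hFy₂Sx with hc | hc
        · exact absurd (F.injective (hFy₁ ▸ hc : F y₂ = F y₁)) hy12.symm
        · exact Finset.mem_singleton.mp hc
      by_cases hh1 : 2 * a - 1 ≤ deg A x₁
      · exact C.twocycle_heavy hF hNS hx₁X hy₁.symm hFy₁ hh1
      by_cases hh2 : 2 * a - 1 ≤ deg A y₁
      · exact C.symm.twocycle_heavy hF hNS (hmemSy.mp hy₁mem).1 hFy₁ hy₁.symm hh2
      by_cases hh3 : 2 * a - 1 ≤ deg A x₂
      · exact C.twocycle_heavy hF hNS hx₂X hy₂.symm hFy₂ hh3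
      by_cases hh4 : 2 * a - 1 ≤ deg A y₂
      · exact C.symm.twocycle_heavy hF hNS (hmemSy.mp hy₂mem).1 hFy₂ hy₂.symm hh4
      · exact C.twotwo_light hF hNS hx₁X hx₂X hx12 hy₁.symm hFy₁ hy₂.symm hFy₂
          (by omega) (by omega) (by omega) (by omega) hex
    · -- 4-cycle
      have hFy₁x₂ : F y₁ = x₂ := Finset.mem_singleton.mp hFy₁'
      have hFy₂x₁ : F y₂ = x₁ := by
        rcases Finset.mem_insert.mp hFy₂Sx with hc | hc
        · exact hc
        · exact absurd (F.injective ((Finset.mem_singleton.mp hc) ▸ hFy₁x₂ ▸ rfl : F y₂ = F y₁)) hy12.symm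
      by_cases hh1 : 2 * a - 1 ≤ deg A x₁
      · exact C.four_heavy hF hNS hx₁X hx₂X hx12 hy₁.symm hFy₁x₂ hy₂.symm hFy₂x₁ hh1 hex
      by_cases hh3 : 2 * a - 1 ≤ deg A x₂
      · exact C.four_heavy hF hNS hx₂X hx₁X hx12.symm hy₂.symm hFy₂x₁ hy₁.symm hFy₁x₂ hh3 hex
      by_cases hh2 : 2 * a - 1 ≤ deg A y₁
      · exact C.symm.four_heavy hF hNS (hmemSy.mp hy₁mem).1 (hmemSy.mp hy₂mem).1 hy12
          hFy₁x₂ hy₂.symm hFy₂x₁ hy₁.symm hh2 hex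
      by_cases hh4 : 2 * a - 1 ≤ deg A y₂
      · exact C.symm.four_heavy hF hNS (hmemSy.mp hy₂mem).1 (hmemSy.mp hy₁mem).1 hy12.symm
          hFy₂x₁ hy₁.symm hFy₁x₂ hy₂.symm hh4 hex
      · exact C.four_light hF hNS hx₁X hx₂X hx12 hy₁.symm hFy₁x₂ hy₂.symm hFy₂x₁
          (by omega) (by omega) (by omega) (by omega) hex


lemma merge_exists' (C : Ctx A X Y a Xf Yf) (hF : ∀ v, A v (F v))
    (u₀ v₀ : V) (hns : ¬F.SameCycle u₀ v₀) :
    ∃ u u' : V, ¬F.SameCycle u u' ∧ A u (F u') ∧ A u' (F u) := by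
  classical
  by_contra hcon
  push_neg at hcon
  have hNS : ∀ u u' : V, A u (F u') → A u' (F u) → F.SameCycle u u' := by
    intro u u' h1 h2
    by_contra hsc
    exact hcon u u' hsc h1 h2
  by_cases hex : ∃ u : V, 2 * a - 1 ≤ deg A u
  · have hdom : ∃ v : V, (2 * a - 1 ≤ deg A v) ∧ (2 * a - 1 ≤ deg A (F v)) := by
      by_contra hno
      push_neg at hno
      set Hx := Xf.filter (fun v => 2 * a - 1 ≤ deg A v) with hHx
      set Hy := Yf.filter (fun v => 2 * a - 1 ≤ deg A v) with hHy
      have hdisjH : Disjoint Hx Hy := by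
        rw [Finset.disjoint_left]
        intro v h1 h2
        exact C.not_both (Finset.mem_filter.mp h1).1 (Finset.mem_filter.mp h2).1
      have hcards := C.heavies_card hex
      rw [← hHx, ← hHy] at hcards
      have hHH : 2 * a - 4 ≤ (Hx ∪ Hy).card := by
        rw [Finset.card_union_of_disjoint hdisjH]
        have ha := C.ha
        omega
      have himg : (Hx ∪ Hy).image F ⊆
          (Xf.filter (fun v => deg A v < 2 * a - 1)) ∪
            (Yf.filter (fun v => deg A v < 2 * a - 1)) := by
        intro w hw
        obtain ⟨v, hv, rfl⟩ := Finset.mem_image.mp hw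
        have hvh : 2 * a - 1 ≤ deg A v := by
          rcases Finset.mem_union.mp hv with h | h
          · exact (Finset.mem_filter.mp h).2
          · exact (Finset.mem_filter.mp h).2
        have hlight := hno v hvh
        rcases C.mem_part (F v) with h | h
        · exact Finset.mem_union_left _ (Finset.mem_filter.mpr ⟨h, hlight⟩)
        · exact Finset.mem_union_right _ (Finset.mem_filter.mpr ⟨h, hlight⟩)
      have h2 : (Hx ∪ Hy).card = ((Hx ∪ Hy).image F).card :=
        (Finset.card_image_of_injective _ F.injective).symm
      have h3 := Finset.card_le_card himg
      have h4 := Finset.card_union_le (Xf.filter (fun v => deg A v < 2 * a - 1))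
        (Yf.filter (fun v => deg A v < 2 * a - 1))
      have h5 := C.lights_X_card hex
      have h6 := C.symm.lights_X_card hex
      have ha := C.ha
      omega
    obtain ⟨v₁, hv₁, hFv₁⟩ := hdom
    rcases C.mem_part v₁ with h | h
    · exact C.main_contra hF hNS u₀ v₀ hns hex h hv₁ hFv₁
    · exact C.symm.main_contra hF hNS u₀ v₀ hns hex h hv₁ hFv₁
  · push_neg at hex
    exact C.no_heavy_case F hF u₀ v₀ hns hex


lemma merge_exists (C : Ctx A X Y a Xf Yf) :
    ∀ F : Equiv.Perm V, (∀ v, A v (F v)) → ∀ u₀ v₀ : V, ¬F.SameCycle u₀ v₀ →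
      ∃ u u' : V, ¬F.SameCycle u u' ∧ A u (F u') ∧ A u' (F u) :=
  fun _F hF u₀ v₀ hns => merge_exists' C hF u₀ v₀ hns

end Ctx

/-- Wang's theorem (Corollary 5.1): a strongly connected balanced bipartite digraph of
order `2a`, `a ≥ 5`, is hamiltonian provided that for every dominating pair `{x, y}`
either `d(x) ≥ 2a − 1` and `d(y) ≥ a + 1`, or `d(y) ≥ 2a − 1` and `d(x) ≥ a + 1`. -/
theorem stmt7 [Fintype V] (A : V → V → Prop) (X Y : Set V) (a : ℕ) (ha : 5 ≤ a)
    (hX : X.ncard = a) (hY : Y.ncard = a) (hbip : IsBipartition A X Y)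
    (hstrong : StrongConn A)
    (hdeg : ∀ x y : V, DomPair A x y →
      (2 * a - 1 ≤ deg A x ∧ a + 1 ≤ deg A y) ∨
      (2 * a - 1 ≤ deg A y ∧ a + 1 ≤ deg A x)) :
    Hamiltonian A := by

  classical
  obtain ⟨hdisj, huniv, hcross⟩ := hbip
  haveI : DecidableRel A := Classical.decRel A
  set Xf := Finset.univ.filter (fun v => v ∈ X) with hXfdef
  set Yf := Finset.univ.filter (fun v => v ∈ Y) with hYfdef
  have hXfm : ∀ v : V, v ∈ Xf ↔ v ∈ X := by intro v; simp [hXfdef]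
  have hYfm : ∀ v : V, v ∈ Yf ↔ v ∈ Y := by intro v; simp [hYfdef]
  have hcX : Xf.card = a := by
    rw [← hX, Set.ncard_eq_toFinset_card']
    congr 1
    ext v
    simp [hXfdef]
  have hcY : Yf.card = a := by
    rw [← hY, Set.ncard_eq_toFinset_card']
    congr 1
    ext v
    simp [hYfdef]
  have C : Ctx A X Y a Xf Yf :=
    ⟨ha, hdisj, huniv, hcross, hstrong, hdeg, hXfm, hYfm, hcX, hcY⟩
  obtain ⟨F, hFfac, hc⟩ := C.exists_good_factor (C.merge_exists)
  exact C.ham_of_factor_cycle F hFfac hc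
end

section
/- The digraph D(8) is strongly connected, balanced bipartite of order 8, satisfies max{d(x), d(y)} ≥ 7 for every dominating pair of vertices {x, y}, but is not hamiltonian. -/
open Finset

variable {V : Type*}

/-- The arcs of the exceptional digraph `D(8)`; vertices `0,1,2,3` are `x₀,…,x₃` and
`4,5,6,7` are `y₀,…,y₃`. -/
def D8Arcs : List (Fin 8 × Fin 8) :=
  [(4,1), (5,0), (2,7), (3,6),
   (0,4), (4,0), (1,5), (5,1), (2,6), (6,2), (3,7), (7,3),
   (4,2), (2,4), (4,3), (3,4), (5,2), (2,5), (5,3), (3,5)]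

/-- The exceptional digraph `D(8)`. -/
def D8 (u v : Fin 8) : Prop := (u, v) ∈ D8Arcs


instance : DecidableRel D8 := fun u v => inferInstanceAs (Decidable ((u,v) ∈ D8Arcs))

instance : DecidableRel (DomPair D8) := fun x y =>
  inferInstanceAs (Decidable (x ≠ y ∧ ∃ z, D8 x z ∧ D8 y z))

-- auxiliary lemmas
private lemma arcR {u v : Fin 8} (h : D8 u v) : Relation.ReflTransGen D8 u v :=
  Relation.ReflTransGen.single h

private lemma to4 : ∀ u : Fin 8, Relation.ReflTransGen D8 u 4 := by
  intro u
  fin_cases u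
  · exact arcR (by decide)
  · exact (arcR (show D8 1 5 by decide)).trans ((arcR (show D8 5 2 by decide)).trans (arcR (by decide)))
  · exact arcR (by decide)
  · exact arcR (by decide)
  · exact Relation.ReflTransGen.refl
  · exact (arcR (show D8 5 2 by decide)).trans (arcR (by decide))
  · exact (arcR (show D8 6 2 by decide)).trans (arcR (by decide))
  · exact (arcR (show D8 7 3 by decide)).trans (arcR (by decide))

private lemma from4 : ∀ v : Fin 8, Relation.ReflTransGen D8 4 v := by
  intro v
  fin_cases v
  · exact arcR (by decide)
  · exact arcR (by decide)
  · exact arcR (by decide)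
  · exact arcR (by decide)
  · exact Relation.ReflTransGen.refl
  · exact (arcR (show D8 4 3 by decide)).trans (arcR (by decide))
  · exact (arcR (show D8 4 2 by decide)).trans (arcR (by decide))
  · exact (arcR (show D8 4 2 by decide)).trans (arcR (by decide))

private lemma deg0 : deg D8 0 = 3 := by
  unfold deg; rw [Set.ncard_eq_toFinset_card', Set.ncard_eq_toFinset_card']; decide
private lemma deg1 : deg D8 1 = 3 := by
  unfold deg; rw [Set.ncard_eq_toFinset_card', Set.ncard_eq_toFinset_card']; decide
private lemma deg2 : deg D8 2 = 7 := by
  unfold deg; rw [Set.ncard_eq_toFinset_card', Set.ncard_eq_toFinset_card']; decide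
private lemma deg3 : deg D8 3 = 7 := by
  unfold deg; rw [Set.ncard_eq_toFinset_card', Set.ncard_eq_toFinset_card']; decide
private lemma deg4 : deg D8 4 = 7 := by
  unfold deg; rw [Set.ncard_eq_toFinset_card', Set.ncard_eq_toFinset_card']; decide
private lemma deg5 : deg D8 5 = 7 := by
  unfold deg; rw [Set.ncard_eq_toFinset_card', Set.ncard_eq_toFinset_card']; decide
private lemma deg6 : deg D8 6 = 3 := by
  unfold deg; rw [Set.ncard_eq_toFinset_card', Set.ncard_eq_toFinset_card']; decide
private lemma deg7 : deg D8 7 = 3 := by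
  unfold deg; rw [Set.ncard_eq_toFinset_card', Set.ncard_eq_toFinset_card']; decide

private lemma out0 : ∀ v, D8 0 v → v = 4 := by decide
private lemma out1 : ∀ v, D8 1 v → v = 5 := by decide
private lemma out6 : ∀ v, D8 6 v → v = 2 := by decide
private lemma out7 : ∀ v, D8 7 v → v = 3 := by decide
private lemma out4 : ∀ v, D8 4 v → v = 0 ∨ v = 1 ∨ v = 2 ∨ v = 3 := by decide
private lemma out5 : ∀ v, D8 5 v → v = 0 ∨ v = 1 ∨ v = 2 ∨ v = 3 := by decide

private lemma zmod_cancel {n : ℕ} {j c : ZMod n} (h : j + c = j) : c = 0 :=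
  add_left_cancel (a := j) (h.trans (add_zero j).symm)

/-- The digraph `D(8)` is strongly connected, balanced bipartite of order `8`, satisfies
`max {d(x), d(y)} ≥ 7` for every dominating pair, but is not hamiltonian. -/
theorem stmt8 :
    StrongConn D8 ∧
    IsBipartition D8 {u : Fin 8 | (u : ℕ) < 4} {u : Fin 8 | 4 ≤ (u : ℕ)} ∧
    Set.ncard {u : Fin 8 | (u : ℕ) < 4} = 4 ∧
    Set.ncard {u : Fin 8 | 4 ≤ (u : ℕ)} = 4 ∧
    (∀ x y : Fin 8, DomPair D8 x y → 7 ≤ max (deg D8 x) (deg D8 y)) ∧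
    ¬ Hamiltonian D8 := by
  refine ⟨?_, ⟨?_, ?_, ?_⟩, ?_, ?_, ?_, ?_⟩
  · intro u v; exact (to4 u).trans (from4 v)
  · rw [Set.disjoint_left]; intro a ha hb; simp only [Set.mem_setOf_eq] at ha hb; omega
  · ext u; simp only [Set.mem_union, Set.mem_setOf_eq, Set.mem_univ, iff_true]; omega
  · intro u v h; revert h; revert v; revert u; decide
  · rw [Set.ncard_eq_toFinset_card']; decide
  · rw [Set.ncard_eq_toFinset_card']; decide
  · intro x y hd
    fin_cases x <;> fin_cases y <;>
      first
        | exact absurd hd (by decide)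
        | simp [deg0, deg1, deg2, deg3, deg4, deg5, deg6, deg7]
  · rintro ⟨f, ⟨finj, fsurj⟩, harc⟩
    obtain ⟨j, hj⟩ := fsurj 0
    obtain ⟨k, hk⟩ := fsurj 6
    obtain ⟨l, hl⟩ := fsurj 7
    have hk1 : f (k + 1) = 2 := out6 _ (by have h := harc k; rwa [hk] at h)
    have hl1 : f (l + 1) = 3 := out7 _ (by have h := harc l; rwa [hl] at h)
    have h1 : f (j + 1) = 4 := out0 _ (by have h := harc j; rwa [hj] at h)
    have h2 : D8 4 (f (j + 1 + 1)) := by have h := harc (j + 1); rwa [h1] at h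
    rcases out4 _ h2 with e0 | e1 | e2 | e3
    · have := finj (e0.trans hj.symm)
      simp only [add_assoc] at this
      exact absurd (zmod_cancel this) (by decide)
    · have h3 : f (j + 1 + 1 + 1) = 5 := out1 _ (by have h := harc (j + 1 + 1); rwa [e1] at h)
      have h4 : D8 5 (f (j + 1 + 1 + 1 + 1)) := by have h := harc (j + 1 + 1 + 1); rwa [h3] at h
      rcases out5 _ h4 with g0 | g1 | g2 | g3
      · have := finj (g0.trans hj.symm)
        simp only [add_assoc] at this
        exact absurd (zmod_cancel this) (by decide)
      · have := finj (g1.trans e1.symm)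
        have h5 := add_right_cancel (add_right_cancel this)
        simp only [add_assoc] at h5
        exact absurd (zmod_cancel h5) (by decide)
      · have := add_right_cancel (finj (g2.trans hk1.symm))
        rw [this, hk] at h3
        exact absurd h3 (by decide)
      · have := add_right_cancel (finj (g3.trans hl1.symm))
        rw [this, hl] at h3
        exact absurd h3 (by decide)
    · have := add_right_cancel (finj (e2.trans hk1.symm))
      rw [this, hk] at h1
      exact absurd h1 (by decide)
    · have := add_right_cancel (finj (e3.trans hl1.symm))
      rw [this, hl] at h1
      exact absurd h1 (by decide)
end

section
/- The digraph H(6) is strongly connected and satisfies max{d(x), d(y)} ≥ 4 for every dominating pair of vertices {x, y}, but contains no perfect matching from X to Y; in particular H(6) is not hamiltonian. (Hence the bound 2a ≥ 8 in the perfect-matching lemma is sharp.) -/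
open Finset

variable {V : Type*}

/-- A perfect matching from `X` to `Y`: pairwise vertex-disjoint arcs, one leaving
each vertex of `X`, all ending in `Y`. -/
def PerfectMatchingFromTo (A : V → V → Prop) (X Y : Set V) : Prop :=
  ∃ f : V → V, Set.InjOn f X ∧ ∀ x ∈ X, A x (f x) ∧ f x ∈ Y

/-- The arcs of the digraph `H(6)`; vertices `0,1,2` are `x,y,z` and `3,4,5` are `u,v,w`. -/
def H6Arcs : List (Fin 6 × Fin 6) :=
  [(0,3), (1,3),
   (3,0), (4,0), (5,0),
   (4,1), (4,2),
   (2,4), (2,5),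
   (3,2)]

/-- The digraph `H(6)` of Example 3. -/
def H6 (u v : Fin 6) : Prop := (u, v) ∈ H6Arcs


instance : DecidableRel H6 := fun u v => inferInstanceAs (Decidable ((u,v) ∈ H6Arcs))

lemma deg_H6 (x : Fin 6) : deg H6 x = ![4,2,4,4,4,2] x := by
  have h1 : {y | H6 x y} = ↑((Finset.univ : Finset (Fin 6)).filter (fun y => H6 x y)) := by
    ext y; simp
  have h2 : {y | H6 y x} = ↑((Finset.univ : Finset (Fin 6)).filter (fun y => H6 y x)) := by
    ext y; simp
  rw [deg, h1, h2, Set.ncard_coe_finset, Set.ncard_coe_finset]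
  fin_cases x <;> decide

lemma H6_noPM : ¬ PerfectMatchingFromTo H6 {u : Fin 6 | (u : ℕ) < 3} {u : Fin 6 | 3 ≤ (u : ℕ)} := by
  rintro ⟨f, hinj, h⟩
  have hy : ∀ y : Fin 6, H6 0 y → y = 3 := by decide
  have hy1 : ∀ y : Fin 6, H6 1 y → y = 3 := by decide
  have h0 : f 0 = 3 := hy _ (h 0 (by norm_num)).1
  have h1 : f 1 = 3 := hy1 _ (h 1 (by norm_num)).1
  have : (0 : Fin 6) = 1 := hinj (by norm_num) (by norm_num) (h0.trans h1.symm)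
  simp at this

/-- The digraph `H(6)` is strongly connected and satisfies `max {d(x), d(y)} ≥ 4` for
every dominating pair, but has no perfect matching from `X` to `Y`; in particular it is
not hamiltonian. -/
theorem stmt10 :
    StrongConn H6 ∧
    (∀ x y : Fin 6, DomPair H6 x y → 4 ≤ max (deg H6 x) (deg H6 y)) ∧
    ¬ PerfectMatchingFromTo H6 {u : Fin 6 | (u : ℕ) < 3} {u : Fin 6 | 3 ≤ (u : ℕ)} ∧
    ¬ Hamiltonian H6 := by
  
  have arc : ∀ u v : Fin 6, (u,v) ∈ H6Arcs → Relation.ReflTransGen H6 u v := by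
    intro u v h
    exact Relation.ReflTransGen.single h
  have to0 : ∀ v : Fin 6, Relation.ReflTransGen H6 v 0 := by
    intro v
    fin_cases v
    · exact .refl
    · exact (arc 1 3 (by decide)).trans (arc 3 0 (by decide))
    · exact (arc 2 4 (by decide)).trans (arc 4 0 (by decide))
    · exact arc 3 0 (by decide)
    · exact arc 4 0 (by decide)
    · exact arc 5 0 (by decide)
  have from0 : ∀ v : Fin 6, Relation.ReflTransGen H6 0 v := by
    have h03 := arc 0 3 (by decide)
    have h32 := arc 3 2 (by decide)
    have h24 := arc 2 4 (by decide)
    intro v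
    fin_cases v
    · exact .refl
    · exact ((h03.trans h32).trans h24).trans (arc 4 1 (by decide))
    · exact h03.trans h32
    · exact h03
    · exact (h03.trans h32).trans h24
    · exact (h03.trans h32).trans (arc 2 5 (by decide))
  refine ⟨fun u v => (to0 u).trans (from0 v), ?_, H6_noPM, ?_⟩
  · intro x y hxy
    rw [deg_H6, deg_H6]
    obtain ⟨hne, z, hxz, hyz⟩ := hxy
    revert hne hxz hyz
    fin_cases x <;> fin_cases y <;> fin_cases z <;> decide
  · rintro ⟨f, hbij, harc⟩
    apply H6_noPM
    let e := Equiv.ofBijective f hbij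
    refine ⟨fun v => f (e.symm v + 1), ?_, ?_⟩
    · intro a _ b _ hab
      have := hbij.1 hab
      have := add_right_cancel this
      have : e (e.symm a) = e (e.symm b) := congrArg e this
      simpa using this
    · intro x hx
      have hfx : f (e.symm x) = x := e.apply_symm_apply x
      have ha := harc (e.symm x)
      rw [hfx] at ha
      refine ⟨ha, ?_⟩
      have : ∀ x y : Fin 6, (x : ℕ) < 3 → H6 x y → 3 ≤ (y : ℕ) := by decide
      exact this x _ hx ha
end

section
/- For every a ≥ 4 there exists a strongly connected balanced bipartite digraph D of order 2a satisfying max{d(x), d(y)} ≥ 2a − 3 for every dominating pair of vertices {x, y}, such that D contains no perfect matching from X to Y. (Hence condition B_0 in the perfect-matching lemma cannot be weakened to B_{−1}.) -/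
open Finset

variable {V : Type*}

def Iset (n l m : ℕ) : Finset (Fin n) :=
  Finset.univ.filter fun i => l ≤ i.val ∧ i.val < m

lemma mem_Iset {n l m : ℕ} {x : Fin n} : x ∈ Iset n l m ↔ l ≤ x.val ∧ x.val < m := by
  simp [Iset]

lemma Iset_card (n l m : ℕ) (h : m ≤ n) : (Iset n l m).card = m - l := by
  classical
  have : Iset n l m = Finset.map
      ⟨fun i : Fin (m - l) => (⟨i.val + l, by omega⟩ : Fin n),
        fun i j hij => by
          apply Fin.ext
          have := congrArg Fin.val hij
          simpa using this⟩ Finset.univ := by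
    ext x
    simp only [mem_Iset, Finset.mem_map, Finset.mem_univ, true_and,
      Function.Embedding.coeFn_mk]
    constructor
    · rintro ⟨h1, h2⟩
      exact ⟨⟨x.val - l, by omega⟩, by apply Fin.ext; show x.val - l + l = x.val; omega⟩
    · rintro ⟨i, rfl⟩
      have := i.isLt
      show l ≤ i.val + l ∧ i.val + l < m
      omega
  rw [this, Finset.card_map, Finset.card_univ, Fintype.card_fin]

def Arc (a : ℕ) (i j : Fin (2 * a)) : Prop :=
  (i.val < a ∧ a + 2 ≤ j.val) ∨ (a + 2 ≤ i.val ∧ j.val < a) ∨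
  (i.val = 0 ∧ j.val = a) ∨ (i.val = 0 ∧ j.val = a + 1) ∨ (i.val = a + 1 ∧ j.val = 0) ∨
  (i.val = a ∧ j.val = 1) ∨ (i.val = a + 1 ∧ 2 ≤ j.val ∧ j.val < a)

/-- lower bound on ncard via a Finset inside the set -/
lemma card_le_ncard {n : ℕ} {s : Set (Fin n)} {F : Finset (Fin n)}
    (h : ∀ i ∈ F, i ∈ s) : F.card ≤ s.ncard := by
  rw [← Set.ncard_coe_finset]
  exact Set.ncard_le_ncard h (Set.toFinite s)

lemma deg_ge (a : ℕ) (ha : 4 ≤ a) (w : Fin (2 * a))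
    (hw : w.val < a ∨ a + 2 ≤ w.val) : 2 * a - 3 ≤ deg (Arc a) w := by
  rcases hw with hw | hw
  · -- w in X
    have hout : a - 2 ≤ Set.ncard {y | Arc a w y} := by
      have h1 : (Iset (2 * a) (a + 2) (2 * a)).card ≤ Set.ncard {y | Arc a w y} := by
        apply card_le_ncard
        intro i hi
        rw [mem_Iset] at hi
        exact Or.inl ⟨hw, hi.1⟩
      rw [Iset_card _ _ _ (le_refl _)] at h1
      omega
    -- in-set contains C ∪ {e}
    set e : Fin (2 * a) := if w.val = 1 then ⟨a, by omega⟩ else ⟨a + 1, by omega⟩ with he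
    have hein : Arc a e w := by
      by_cases h1 : w.val = 1
      · simp only [he, h1, if_pos]
        right; right; right; right; right; left; exact ⟨rfl, h1⟩
      · simp only [he, h1, if_neg, if_false]
        by_cases h0 : w.val = 0
        · right; right; right; right; left; exact ⟨rfl, h0⟩
        · right; right; right; right; right; right; exact ⟨rfl, by omega, hw⟩
    have heC : e ∉ Iset (2 * a) (a + 2) (2 * a) := by
      rw [mem_Iset]
      by_cases h1 : w.val = 1 <;> simp [he, h1] <;> omega
    have hin : a - 1 ≤ Set.ncard {y | Arc a y w} := by
      have hcard : (insert e (Iset (2 * a) (a + 2) (2 * a))).card = a - 1 := by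
        rw [Finset.card_insert_of_notMem heC, Iset_card _ _ _ (le_refl _)]
        omega
      rw [← hcard]
      apply card_le_ncard
      intro i hi
      rcases Finset.mem_insert.mp hi with rfl | hi
      · exact hein
      · rw [mem_Iset] at hi
        exact Or.inr (Or.inl ⟨hi.1, hw⟩)
    unfold deg; omega
  · -- w in C
    have hout : a ≤ Set.ncard {y | Arc a w y} := by
      have h1 : (Iset (2 * a) 0 a).card ≤ Set.ncard {y | Arc a w y} := by
        apply card_le_ncard
        intro i hi
        rw [mem_Iset] at hi
        exact Or.inr (Or.inl ⟨hw, hi.2⟩)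
      rw [Iset_card _ _ _ (by omega)] at h1
      omega
    have hin : a ≤ Set.ncard {y | Arc a y w} := by
      have h1 : (Iset (2 * a) 0 a).card ≤ Set.ncard {y | Arc a y w} := by
        apply card_le_ncard
        intro i hi
        rw [mem_Iset] at hi
        exact Or.inl ⟨hi.2, hw⟩
      rw [Iset_card _ _ _ (by omega)] at h1
      omega
    unfold deg; omega

lemma strong (a : ℕ) (ha : 4 ≤ a) : ∀ u v : Fin (2 * a),
    Relation.ReflTransGen (Arc a) u v := by
  have h2a : a + 2 < 2 * a := by omega
  set c0 : Fin (2 * a) := ⟨a + 2, h2a⟩ with hc0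
  set z : Fin (2 * a) := ⟨0, by omega⟩ with hz
  set one : Fin (2 * a) := ⟨1, by omega⟩ with hone
  have hzc0 : Arc a z c0 := Or.inl ⟨by simp [hz]; omega, by simp [hc0]⟩
  have honec0 : Arc a one c0 := Or.inl ⟨by simp [hone]; omega, by simp [hc0]⟩
  have toc0 : ∀ w : Fin (2 * a), Relation.ReflTransGen (Arc a) w c0 := by
    intro w
    have hwlt := w.isLt
    rcases lt_or_ge w.val a with hw | hw
    · exact Relation.ReflTransGen.single (Or.inl ⟨hw, by simp [hc0]⟩)
    · rcases Nat.lt_or_ge w.val (a + 2) with hw2 | hw2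
      · -- w = u or v : w → (one or z) → c0
        by_cases hu : w.val = a
        · exact Relation.ReflTransGen.head
            (Or.inr (Or.inr (Or.inr (Or.inr (Or.inr (Or.inl ⟨hu, by simp [hone]⟩))))))
            (Relation.ReflTransGen.single honec0)
        · have hv : w.val = a + 1 := by omega
          exact Relation.ReflTransGen.head
            (Or.inr (Or.inr (Or.inr (Or.inr (Or.inl ⟨hv, by simp [hz]⟩)))))
            (Relation.ReflTransGen.single hzc0)
      · -- w in C : w → z → c0
        exact Relation.ReflTransGen.head
          (Or.inr (Or.inl ⟨hw2, by simp [hz]; omega⟩))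
          (Relation.ReflTransGen.single hzc0)
  have fromc0 : ∀ w : Fin (2 * a), Relation.ReflTransGen (Arc a) c0 w := by
    intro w
    have hc0X : ∀ x : Fin (2 * a), x.val < a → Arc a c0 x :=
      fun x hx => Or.inr (Or.inl ⟨by simp [hc0], hx⟩)
    rcases lt_or_ge w.val a with hw | hw
    · exact Relation.ReflTransGen.single (hc0X w hw)
    · rcases Nat.lt_or_ge w.val (a + 2) with hw2 | hw2
      · by_cases hu : w.val = a
        · exact Relation.ReflTransGen.head (hc0X z (by simp [hz]; omega))
            (Relation.ReflTransGen.single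
              (Or.inr (Or.inr (Or.inl ⟨by simp [hz], hu⟩))))
        · have hv : w.val = a + 1 := by omega
          exact Relation.ReflTransGen.head (hc0X z (by simp [hz]; omega))
            (Relation.ReflTransGen.single
              (Or.inr (Or.inr (Or.inr (Or.inl ⟨by simp [hz], hv⟩)))))
      · exact Relation.ReflTransGen.head (hc0X one (by simp [hone]; omega))
          (Relation.ReflTransGen.single (Or.inl ⟨by simp [hone]; omega, hw2⟩))
  exact fun u v => (toc0 u).trans (fromc0 v)

/-- For every `a ≥ 4` there is a strongly connected balanced bipartite digraph of order
`2a` satisfying `max {d(x), d(y)} ≥ 2a − 3` for every dominating pair, which contains no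
perfect matching from `X` to `Y`. -/
theorem stmt11 (a : ℕ) (ha : 4 ≤ a) :
    ∃ (A : Fin (2 * a) → Fin (2 * a) → Prop) (X Y : Set (Fin (2 * a))),
      IsBipartition A X Y ∧ X.ncard = a ∧ Y.ncard = a ∧ StrongConn A ∧
      (∀ x y, DomPair A x y → 2 * a - 3 ≤ max (deg A x) (deg A y)) ∧
      ¬ PerfectMatchingFromTo A X Y := by
  classical
  refine ⟨Arc a, {i | i.val < a}, {i | a ≤ i.val}, ?_, ?_, ?_, strong a ha, ?_, ?_⟩
  · refine ⟨?_, ?_, ?_⟩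
    · rw [Set.disjoint_left]; intro i hi hi'; exact absurd hi' (by simpa using hi)
    · ext i; simp only [Set.mem_union, Set.mem_setOf_eq, Set.mem_univ, iff_true]; omega
    · intro u v huv
      simp only [Set.mem_setOf_eq]
      unfold Arc at huv
      omega
  · have : {i : Fin (2 * a) | i.val < a} = ↑(Iset (2 * a) 0 a) := by
      ext i; simp [mem_Iset]
    rw [this, Set.ncard_coe_finset, Iset_card _ _ _ (by omega)]; omega
  · have : {i : Fin (2 * a) | a ≤ i.val} = ↑(Iset (2 * a) a (2 * a)) := by
      ext i; simp [mem_Iset, i.isLt]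
    rw [this, Set.ncard_coe_finset, Iset_card _ _ _ (le_refl _)]; omega
  · rintro x y ⟨hne, w, hxw, hyw⟩
    have hxlt := x.isLt; have hylt := y.isLt
    by_cases hx : x.val < a ∨ a + 2 ≤ x.val
    · exact le_max_of_le_left (deg_ge a ha x hx)
    by_cases hy : y.val < a ∨ a + 2 ≤ y.val
    · exact le_max_of_le_right (deg_ge a ha y hy)
    · exfalso
      have hvals : x.val ≠ y.val := fun h => hne (Fin.ext h)
      unfold Arc at hxw hyw
      omega
  · rintro ⟨f, hinj, hf⟩
    have key : ∀ x ∈ Iset (2 * a) 1 a, f x ∈ Iset (2 * a) (a + 2) (2 * a) := by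
      intro x hx
      rw [mem_Iset] at hx
      have hfx := hf x (by simp [Set.mem_setOf_eq]; exact hx.2)
      have h1 : Arc a x (f x) := hfx.1
      have h2 : a ≤ (f x).val := hfx.2
      have h3 := (f x).isLt
      rw [mem_Iset]
      unfold Arc at h1
      omega
    have hcard := Finset.card_le_card_of_injOn f key
      (hinj.mono (fun i hi => by have := mem_Iset.mp (by simpa using hi); simpa using this.2))
    rw [Iset_card _ _ _ (by omega), Iset_card _ _ _ (le_refl _)] at hcard
    omega
end
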